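/- arXiv:1504.00615 — 8 statements merged into one kernel-verified Lean document; each statement's English description precedes it below -/
import Mathlib

section
/- Let p(z) = a_0 + a_1 z + ... + a_n z^n be a self-inversive polynomial of degree n and let l be a natural number with 2l < n. If |a_{n-l}| > (1/2)·(n/(n-2l))·Σ_{k=0, k∉{l, n-l}}^{n} |a_k|, then every root of p lying on the complex unit circle U is a simple root of p. -/
open Polynomial Finset

/-- If a self-inversive polynomial `p(z) = a₀ + a₁ z + ⋯ + aₙ zⁿ` of degree `n`
satisfies `|a_{n-l}| > (1/2)·(n/(n-2l))·∑_{k ≠ l, n-l} |a_k|` with `2l < n`, then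
every root of `p` on the complex unit circle is simple. -/
theorem selfInversive_roots_on_unit_circle_simple
    (n l : ℕ) (a : ℕ → ℂ) (ω : ℂ)
    (hω : ‖ω‖ = 1)
    (han : a n ≠ 0)
    (hsi : ∀ k ≤ n, a (n - k) = ω * (starRingEnd ℂ) (a k))
    (hl : 2 * l < n)
    (hineq : ‖a (n - l)‖ >
      (1 / 2) * ((n : ℝ) / ((n : ℝ) - 2 * l)) *
        ∑ k ∈ (Finset.range (n + 1)).filter (fun k => k ≠ l ∧ k ≠ n - l),
          ‖a k‖) :
    ∀ z : ℂ, ‖z‖ = 1 →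
      (∑ k ∈ Finset.range (n + 1), Polynomial.C (a k) * Polynomial.X ^ k).eval z = 0 →
      Polynomial.rootMultiplicity z
        (∑ k ∈ Finset.range (n + 1), Polynomial.C (a k) * Polynomial.X ^ k) = 1 := by
  intro z hz hpz
  set p : Polynomial ℂ := ∑ k ∈ Finset.range (n + 1), Polynomial.C (a k) * Polynomial.X ^ k
    with hp
  have hln : l ≤ n := by omega
  have hcoeffn : p.coeff n = a n := by
    rw [hp, Polynomial.finset_sum_coeff]
    simp only [Polynomial.coeff_C_mul, Polynomial.coeff_X_pow]
    rw [Finset.sum_eq_single n]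
    · simp
    · intro b hb hbn; simp [Ne.symm hbn]
    · intro h; simp only [Finset.mem_range] at h; omega
  have hp0 : p ≠ 0 := fun h => han (by rw [← hcoeffn, h, Polynomial.coeff_zero])
  have habs : ∀ k ≤ n, ‖a (n - k)‖ = ‖a k‖ := by
    intro k hk; rw [hsi k hk]; simp [hω]
  have hmul1 : 0 < p.rootMultiplicity z := (Polynomial.rootMultiplicity_pos hp0).2 hpz
  by_contra hne
  have h2 : 1 < p.rootMultiplicity z := by omega
  have hd : (Polynomial.derivative p).IsRoot z :=
    ((Polynomial.one_lt_rootMultiplicity_iff_isRoot hp0).1 h2).2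
  have hsum0 : ∑ k ∈ Finset.range (n + 1), a k * z ^ k = 0 := by
    have := hpz
    rw [hp, Polynomial.eval_finset_sum] at this
    simpa using this
  have hsum1 : ∑ k ∈ Finset.range (n + 1), (k : ℂ) * a k * z ^ k = 0 := by
    have hd' : Polynomial.eval z (Polynomial.derivative p) = 0 := hd
    rw [hp, Polynomial.derivative_sum] at hd'
    simp only [Polynomial.derivative_C_mul_X_pow, Polynomial.eval_finset_sum,
      Polynomial.eval_mul, Polynomial.eval_C, Polynomial.eval_pow, Polynomial.eval_X] at hd'
    calc ∑ k ∈ Finset.range (n + 1), (k : ℂ) * a k * z ^ k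
        = z * ∑ k ∈ Finset.range (n + 1), (a k * k) * z ^ (k - 1) := by
          rw [Finset.mul_sum]
          refine Finset.sum_congr rfl fun k _ => ?_
          cases k with
          | zero => simp
          | succ m => push_cast; ring_nf
      _ = 0 := by rw [hd', mul_zero]
  have key : ∑ k ∈ Finset.range (n + 1), ((k : ℂ) - l) * a k * z ^ k = 0 := by
    have he : ∑ k ∈ Finset.range (n + 1), ((k : ℂ) - l) * a k * z ^ k
        = (∑ k ∈ Finset.range (n + 1), (k : ℂ) * a k * z ^ k)
          - (l : ℂ) * ∑ k ∈ Finset.range (n + 1), a k * z ^ k := by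
      rw [Finset.mul_sum, ← Finset.sum_sub_distrib]
      exact Finset.sum_congr rfl fun k _ => by ring
    rw [he, hsum0, hsum1]; ring
  set S := (Finset.range (n + 1)).filter (fun k => k ≠ l ∧ k ≠ n - l) with hS
  set f : ℕ → ℂ := fun k => ((k : ℂ) - l) * a k * z ^ k with hf
  have hnlS : n - l ∉ S := by simp [hS]
  have hlS : l ∉ insert (n - l) S := by
    simp only [Finset.mem_insert, hS, Finset.mem_filter, Finset.mem_range]
    omega
  have hins : Finset.range (n + 1) = insert l (insert (n - l) S) := by
    ext k
    simp only [hS, Finset.mem_insert, Finset.mem_filter, Finset.mem_range]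
    omega
  have hsplit : f l + (f (n - l) + ∑ k ∈ S, f k) = 0 := by
    rw [← Finset.sum_insert hnlS, ← Finset.sum_insert hlS, ← hins]
    exact key
  have hfl : f l = 0 := by simp [hf]
  rw [hfl, zero_add] at hsplit
  have hfnl : f (n - l) = - ∑ k ∈ S, f k := eq_neg_of_add_eq_zero_left hsplit
  -- absolute values
  have hzpow : ∀ k : ℕ, ‖z ^ k‖ = 1 := by
    intro k; rw [norm_pow, hz, one_pow]
  have habsk : ∀ k : ℕ, ‖(k : ℂ) - l‖ = |(k : ℝ) - l| := by
    intro k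
    rw [show ((k : ℂ) - l) = (((k : ℝ) - l : ℝ) : ℂ) by push_cast; ring, Complex.norm_real, Real.norm_eq_abs]
  have habf : ∀ k : ℕ, ‖f k‖ = |(k : ℝ) - l| * ‖a k‖ := by
    intro k
    rw [hf]
    simp only [norm_mul, hzpow, mul_one, habsk]
  have hclean : ‖f (n - l)‖ = ((n : ℝ) - 2 * l) * ‖a (n - l)‖ := by
    rw [habf]
    congr 1
    rw [Nat.cast_sub hln, abs_of_nonneg]
    · ring
    · have : (2 : ℝ) * l ≤ n := by exact_mod_cast hl.le
      linarith
  -- the main estimate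
  have hT : ‖f (n - l)‖ ≤ ∑ k ∈ S, |(k : ℝ) - l| * ‖a k‖ := by
    rw [hfnl, norm_neg]
    refine le_trans (norm_sum_le _ _) ?_
    exact le_of_eq (Finset.sum_congr rfl fun k _ => habf k)
  -- symmetry of the sum
  have hSmem : ∀ k ∈ S, k ≤ n ∧ k ≠ l ∧ k ≠ n - l := by
    intro k hk
    simp only [hS, Finset.mem_filter, Finset.mem_range] at hk
    omega
  have hsym : ∑ k ∈ S, |(k : ℝ) - l| * ‖a k‖
      = ∑ k ∈ S, |(n : ℝ) - k - l| * ‖a k‖ := by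
    refine Finset.sum_nbij' (fun k => n - k) (fun k => n - k) ?_ ?_ ?_ ?_ ?_
    · intro k hk
      obtain ⟨h1, h2, h3⟩ := hSmem k hk
      show n - k ∈ S
      simp only [hS, Finset.mem_filter, Finset.mem_range]
      omega
    · intro k hk
      obtain ⟨h1, h2, h3⟩ := hSmem k hk
      show n - k ∈ S
      simp only [hS, Finset.mem_filter, Finset.mem_range]
      omega
    · intro k hk; obtain ⟨h1, _, _⟩ := hSmem k hk; show n - (n - k) = k; omega
    · intro k hk; obtain ⟨h1, _, _⟩ := hSmem k hk; show n - (n - k) = k; omega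
    · intro k hk
      obtain ⟨h1, _, _⟩ := hSmem k hk
      show _ = |(n : ℝ) - ((n - k : ℕ) : ℝ) - l| * ‖a (n - k)‖
      rw [habs k h1, Nat.cast_sub h1,
        show (n : ℝ) - ((n : ℝ) - k) - l = (k : ℝ) - l by ring]
  have hpair : ∀ k ∈ S, |(k : ℝ) - l| + |(n : ℝ) - k - l| ≤ n := by
    intro k hk
    obtain ⟨h1, _, _⟩ := hSmem k hk
    have hk' : (k : ℝ) ≤ n := by exact_mod_cast h1
    have hk0 : (0 : ℝ) ≤ k := Nat.cast_nonneg k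
    have hl0 : (0 : ℝ) ≤ l := Nat.cast_nonneg l
    have h2l : (2 : ℝ) * l ≤ n := by exact_mod_cast hl.le
    rcases abs_cases ((k : ℝ) - l) with ⟨e1, _⟩ | ⟨e1, _⟩ <;>
      rcases abs_cases ((n : ℝ) - k - l) with ⟨e2, _⟩ | ⟨e2, _⟩ <;> rw [e1, e2] <;> linarith
  have hhalf : 2 * ∑ k ∈ S, |(k : ℝ) - l| * ‖a k‖
      ≤ (n : ℝ) * ∑ k ∈ S, ‖a k‖ := by
    have : 2 * ∑ k ∈ S, |(k : ℝ) - l| * ‖a k‖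
        = ∑ k ∈ S, (|(k : ℝ) - l| + |(n : ℝ) - k - l|) * ‖a k‖ := by
      rw [two_mul]
      nth_rewrite 2 [hsym]
      rw [← Finset.sum_add_distrib]
      exact Finset.sum_congr rfl fun k _ => by ring
    rw [this, Finset.mul_sum]
    refine Finset.sum_le_sum fun k hk => ?_
    exact mul_le_mul_of_nonneg_right (hpair k hk) (norm_nonneg _)
  -- put everything together
  have hc : (0 : ℝ) < (n : ℝ) - 2 * l := by
    have : (2 : ℝ) * l < n := by exact_mod_cast hl
    linarith
  have hfinal : ((n : ℝ) - 2 * l) * ‖a (n - l)‖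
      ≤ ((n : ℝ) / 2) * ∑ k ∈ S, ‖a k‖ := by
    rw [← hclean]
    linarith [hT, hhalf]
  have hgt : ((n : ℝ) - 2 * l) * ‖a (n - l)‖
      > ((n : ℝ) / 2) * ∑ k ∈ S, ‖a k‖ := by
    have := (mul_lt_mul_iff_right₀ hc).2 hineq
    calc ((n : ℝ) / 2) * ∑ k ∈ S, ‖a k‖
        = ((n : ℝ) - 2 * l) * ((1 / 2) * ((n : ℝ) / ((n : ℝ) - 2 * l)) *
            ∑ k ∈ S, ‖a k‖) := by
          field_simp
      _ < ((n : ℝ) - 2 * l) * ‖a (n - l)‖ := this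
  linarith
end

section
/- Let p(z) = a_0 + a_1 z + ... + a_n z^n be a self-inversive polynomial of degree n and let l be a natural number with 2l < n. If |a_{n-l}| > (1/2)·(n/(n-2l))·Σ_{k=0, k∉{l, n-l}}^{n} |a_k|, then p has exactly l roots, counted with multiplicity, in the open unit disk {z ∈ ℂ : |z| < 1}, and exactly l roots, counted with multiplicity, in the region {z ∈ ℂ : |z| > 1}. -/
open Polynomial Finset

namespace SIAux

open Real Set

/-! ### Generic real-analysis helper lemmas -/

lemma exists_zero_between {f : ℝ → ℝ} (hf : Continuous f) {x y : ℝ} (hxy : x < y)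
    (hsign : f x * f y < 0) : ∃ c ∈ Set.Ioo x y, f c = 0 := by
  rcases mul_neg_iff.1 hsign with ⟨hx, hy⟩ | ⟨hx, hy⟩
  · have h := intermediate_value_Ioo' hxy.le hf.continuousOn
    have h0 : (0:ℝ) ∈ Set.Ioo (f y) (f x) := ⟨hy, hx⟩
    obtain ⟨c, hc, hc0⟩ := h h0
    exact ⟨c, hc, hc0⟩
  · have h := intermediate_value_Ioo hxy.le hf.continuousOn
    have h0 : (0:ℝ) ∈ Set.Ioo (f x) (f y) := ⟨hx, hy⟩
    obtain ⟨c, hc, hc0⟩ := h h0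
    exact ⟨c, hc, hc0⟩

lemma const_sign {f : ℝ → ℝ} (hf : Continuous f) {x y : ℝ}
    (hne : ∀ u ∈ Set.Ioo x y, f u ≠ 0) :
    (∀ u ∈ Set.Ioo x y, 0 < f u) ∨ (∀ u ∈ Set.Ioo x y, f u < 0) := by
  by_cases hxy : x < y
  · have hmid : (x + y) / 2 ∈ Set.Ioo x y := ⟨by linarith, by linarith⟩
    rcases lt_or_gt_of_ne (hne _ hmid) with hneg | hpos
    · right
      intro u hu
      rcases lt_or_gt_of_ne (hne u hu) with h | h
      · exact h
      · exfalso
        rcases lt_trichotomy u ((x+y)/2) with hlt | heq | hgt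
        · obtain ⟨c, hc, hc0⟩ := exists_zero_between hf hlt (by nlinarith)
          exact hne c ⟨hu.1.trans hc.1, hc.2.trans hmid.2⟩ hc0
        · rw [heq] at h; linarith
        · obtain ⟨c, hc, hc0⟩ := exists_zero_between hf hgt (by nlinarith)
          exact hne c ⟨hmid.1.trans hc.1, hc.2.trans hu.2⟩ hc0
    · left
      intro u hu
      rcases lt_or_gt_of_ne (hne u hu) with h | h
      · exfalso
        rcases lt_trichotomy u ((x+y)/2) with hlt | heq | hgt
        · obtain ⟨c, hc, hc0⟩ := exists_zero_between hf hlt (by nlinarith)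
          exact hne c ⟨hu.1.trans hc.1, hc.2.trans hmid.2⟩ hc0
        · rw [heq] at h; linarith
        · obtain ⟨c, hc, hc0⟩ := exists_zero_between hf hgt (by nlinarith)
          exact hne c ⟨hmid.1.trans hc.1, hc.2.trans hu.2⟩ hc0
      · exact h
  · left; intro u hu; exact absurd (hu.1.trans hu.2) hxy

lemma deriv_sign_right {f : ℝ → ℝ} {x y f' : ℝ} (hf : HasDerivAt f f' x) (hx : f x = 0)
    (hxy : x < y) (hpos : ∀ u ∈ Set.Ioo x y, 0 < f u) : 0 ≤ f' := by
  by_contra h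
  push_neg at h
  have hs := hasDerivAt_iff_tendsto_slope.1 hf
  have hs' : Filter.Tendsto (slope f x) (nhdsWithin x (Set.Ioi x)) (nhds f') :=
    hs.mono_left (nhdsWithin_mono x (by intro u hu; exact ne_of_gt hu))
  have hev : ∀ᶠ u in nhdsWithin x (Set.Ioi x), slope f x u < 0 :=
    hs'.eventually (Filter.Tendsto.eventually_lt_const h Filter.tendsto_id)
  have hio : Set.Ioo x y ∈ nhdsWithin x (Set.Ioi x) :=
    Ioo_mem_nhdsGT_of_mem ⟨le_refl x, hxy⟩
  obtain ⟨u, hu1, hu2⟩ := (hev.and (Filter.eventually_of_mem hio (fun u hu => hu))).exists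
  have h1 : 0 < f u := hpos u hu2
  have h2 : 0 < u - x := by have := hu2.1; linarith
  have : slope f x u = f u / (u - x) := by rw [slope_def_field]; rw [hx]; ring_nf
  rw [this] at hu1
  have := div_pos h1 h2
  linarith

lemma deriv_sign_left {f : ℝ → ℝ} {x y f' : ℝ} (hf : HasDerivAt f f' y) (hy : f y = 0)
    (hxy : x < y) (hpos : ∀ u ∈ Set.Ioo x y, 0 < f u) : f' ≤ 0 := by
  by_contra h
  push_neg at h
  have hs := hasDerivAt_iff_tendsto_slope.1 hf
  have hs' : Filter.Tendsto (slope f y) (nhdsWithin y (Set.Iio y)) (nhds f') :=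
    hs.mono_left (nhdsWithin_mono y (by intro u hu; exact ne_of_lt hu))
  have hev : ∀ᶠ u in nhdsWithin y (Set.Iio y), 0 < slope f y u :=
    hs'.eventually (Filter.Tendsto.eventually_const_lt h Filter.tendsto_id)
  have hio : Set.Ioo x y ∈ nhdsWithin y (Set.Iio y) :=
    Ioo_mem_nhdsLT_of_mem ⟨hxy, le_refl y⟩
  obtain ⟨u, hu1, hu2⟩ := (hev.and (Filter.eventually_of_mem hio (fun u hu => hu))).exists
  have h1 : 0 < f u := hpos u hu2
  have h2 : u - y < 0 := by have := hu2.2; linarith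
  have : slope f y u = f u / (u - y) := by rw [slope_def_field]; rw [hy]; ring_nf
  rw [this] at hu1
  have := div_neg_of_pos_of_neg h1 h2
  linarith

lemma cos_nat_pi (j : ℕ) : Real.cos (j * π) = (-1 : ℝ)^j := by
  induction j with
  | zero => simp
  | succ k ih =>
    have : ((k+1 : ℕ) : ℝ) * π = (k : ℝ) * π + π := by push_cast; ring
    rw [this, Real.cos_add_pi, ih, pow_succ]
    ring

/-! ### Polynomial side -/

noncomputable def Pp (n : ℕ) (a : ℕ → ℂ) : Polynomial ℂ :=
  ∑ k ∈ Finset.range (n+1), Polynomial.C (a k) * Polynomial.X^k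

lemma Pp_coeff (n : ℕ) (a : ℕ → ℂ) (j : ℕ) :
    (Pp n a).coeff j = if j ≤ n then a j else 0 := by
  unfold Pp
  rw [Polynomial.finset_sum_coeff]
  simp only [Polynomial.coeff_C_mul, Polynomial.coeff_X_pow, mul_ite, mul_one, mul_zero]
  rw [Finset.sum_ite_eq (Finset.range (n+1)) j (fun k => a k)]
  simp [Finset.mem_range, Nat.lt_succ_iff]

lemma Pp_natDegree (n : ℕ) (a : ℕ → ℂ) (han : a n ≠ 0) : (Pp n a).natDegree = n := by
  have h1 : (Pp n a).natDegree ≤ n := Polynomial.natDegree_le_iff_coeff_eq_zero.2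
    (fun N hN => by rw [Pp_coeff, if_neg (by omega)])
  have h2 : n ≤ (Pp n a).natDegree := Polynomial.le_natDegree_of_ne_zero
    (by rw [Pp_coeff, if_pos le_rfl]; exact han)
  exact le_antisymm h1 h2

lemma Pp_ne (n : ℕ) (a : ℕ → ℂ) (han : a n ≠ 0) : Pp n a ≠ 0 := by
  intro h
  apply han
  have := Pp_coeff n a n
  rw [if_pos le_rfl, h] at this
  simpa using this.symm

lemma Pp_eval (n : ℕ) (a : ℕ → ℂ) (z : ℂ) :
    (Pp n a).eval z = ∑ k ∈ Finset.range (n+1), a k * z^k := by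
  unfold Pp
  rw [Polynomial.eval_finset_sum]
  simp

lemma Pp_card_roots (n : ℕ) (a : ℕ → ℂ) (han : a n ≠ 0) :
    Multiset.card (Pp n a).roots = n := by
  rw [Polynomial.splits_iff_card_roots.1 (IsAlgClosed.splits _), Pp_natDegree n a han]

lemma Pp_leading (n : ℕ) (a : ℕ → ℂ) (han : a n ≠ 0) : (Pp n a).leadingCoeff = a n := by
  rw [Polynomial.leadingCoeff, Pp_natDegree n a han, Pp_coeff, if_pos le_rfl]


/-! ### Setup -/

def Kf (n l : ℕ) : Finset ℕ := (Finset.range (n+1)).filter (fun k => k ≠ l ∧ k ≠ n - l)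

noncomputable def Sv (n l : ℕ) (a : ℕ → ℂ) : ℝ := ∑ k ∈ Kf n l, ‖a k‖

noncomputable def Mv (n l : ℕ) : ℝ := (n : ℝ) - 2 * l

noncomputable def wv (n : ℕ) (a : ℕ → ℂ) (μ : ℂ) (k : ℕ) (t : ℝ) : ℂ :=
  μ * a k * Complex.exp ((((2*(k:ℝ) - (n:ℝ)) * t : ℝ) : ℂ) * Complex.I)

noncomputable def Rf (n l : ℕ) (a : ℕ → ℂ) (μ : ℂ) (t : ℝ) : ℝ :=
  ∑ k ∈ Kf n l, (wv n a μ k t).re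

noncomputable def Rd (n l : ℕ) (a : ℕ → ℂ) (μ : ℂ) (t : ℝ) : ℝ :=
  ∑ k ∈ Kf n l, (2*(k:ℝ) - (n:ℝ)) * (Complex.I * wv n a μ k t).re

noncomputable def gf (n l : ℕ) (a : ℕ → ℂ) (μ : ℂ) (A β : ℝ) (t : ℝ) : ℝ :=
  2*A*Real.cos (Mv n l * t + β) + Rf n l a μ t

noncomputable def gd (n l : ℕ) (a : ℕ → ℂ) (μ : ℂ) (A β : ℝ) (t : ℝ) : ℝ :=
  -(2*A*(Mv n l)*Real.sin (Mv n l * t + β)) + Rd n l a μ t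

structure Setup (n l : ℕ) (a : ℕ → ℂ) (μ : ℂ) (A β : ℝ) : Prop where
  hln : 2 * l < n
  hμ : ‖μ‖ = 1
  hconj : ∀ k ≤ n, (starRingEnd ℂ) (μ * a k) = μ * a (n - k)
  hAβ : (A : ℂ) * Complex.exp ((β : ℂ) * Complex.I) = μ * a (n - l)
  hApos : 0 < A
  hkey : (n : ℝ) * Sv n l a < 2 * A * Mv n l

namespace Setup

variable {n l : ℕ} {a : ℕ → ℂ} {μ : ℂ} {A β : ℝ} (st : Setup n l a μ A β)
include st

lemma hl_le : l ≤ n := by have := st.hln; omega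
lemma hl_lt : l < n - l := by have := st.hln; omega
lemma Mpos : 0 < Mv n l := by
  have := st.hln; unfold Mv
  have : (2*l : ℝ) < n := by exact_mod_cast this
  linarith
lemma Mnat : Mv n l = ((n - 2*l : ℕ) : ℝ) := by
  have := st.hln; unfold Mv; push_cast [Nat.cast_sub (by omega : 2*l ≤ n)]; ring
lemma Snonneg : 0 ≤ Sv n l a :=
  Finset.sum_nonneg fun k _ => norm_nonneg _
lemma Mle : Mv n l ≤ (n : ℝ) := by
  unfold Mv; have : (0:ℝ) ≤ 2*l := by positivity
  linarith
lemma S_lt : Sv n l a < 2*A := by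
  have h1 := st.hkey
  have h2 : Mv n l * Sv n l a ≤ (n:ℝ) * Sv n l a :=
    mul_le_mul_of_nonneg_right st.Mle st.Snonneg
  have := st.Mpos
  nlinarith

lemma nu_cast {k : ℕ} (hk : k ≤ n) : 2*((n - k : ℕ):ℝ) - (n:ℝ) = -(2*(k:ℝ) - n) := by
  push_cast [Nat.cast_sub hk]; ring

lemma w_conj {k : ℕ} (hk : k ≤ n) (t : ℝ) :
    (starRingEnd ℂ) (wv n a μ k t) = wv n a μ (n-k) t := by
  unfold wv
  rw [map_mul, st.hconj k hk, ← Complex.exp_conj]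
  congr 1
  rw [map_mul, Complex.conj_I, Complex.conj_ofReal]
  rw [show ((2*((n-k:ℕ):ℝ) - n) * t : ℝ) = (-((2*(k:ℝ) - n) * t) : ℝ) by
    rw [st.nu_cast hk]; ring]
  push_cast
  ring

lemma abs_w (k : ℕ) (t : ℝ) : ‖wv n a μ k t‖ = ‖a k‖ := by
  unfold wv
  rw [norm_mul, norm_mul, st.hμ, Complex.norm_exp_ofReal_mul_I]
  ring

lemma w_deriv (k : ℕ) (t : ℝ) :
    HasDerivAt (fun t => wv n a μ k t)
      ((((2*(k:ℝ) - (n:ℝ)) : ℝ) : ℂ) * Complex.I * wv n a μ k t) t := by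
  unfold wv
  set ν : ℝ := 2*(k:ℝ) - (n:ℝ)
  have h1 : HasDerivAt (fun t : ℝ => ν * t) ν t := by
    simpa using (hasDerivAt_id t).const_mul ν
  have h2 : HasDerivAt (fun t : ℝ => ((ν * t : ℝ) : ℂ)) ((ν : ℂ)) t := h1.ofReal_comp
  have h3 : HasDerivAt (fun t : ℝ => ((ν * t : ℝ) : ℂ) * Complex.I) ((ν : ℂ) * Complex.I) t :=
    h2.mul_const Complex.I
  have h4 := h3.cexp
  have h5 := h4.const_mul (μ * a k)
  refine h5.congr_deriv (Eq.symm ?_)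
  ring

lemma Rf_bound (t : ℝ) : |Rf n l a μ t| ≤ Sv n l a := by
  refine (Finset.abs_sum_le_sum_abs _ _).trans ?_
  apply Finset.sum_le_sum
  intro k _
  calc |(wv n a μ k t).re| ≤ ‖wv n a μ k t‖ := Complex.abs_re_le_norm _
    _ = ‖a k‖ := st.abs_w k t

lemma re_hasDeriv {f : ℝ → ℂ} {f' : ℂ} {t : ℝ} (hf : HasDerivAt f f' t) :
    HasDerivAt (fun t => (f t).re) f'.re t :=
  Complex.reCLM.hasFDerivAt.comp_hasDerivAt t hf

lemma Rf_deriv (t : ℝ) : HasDerivAt (Rf n l a μ) (Rd n l a μ t) t := by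
  unfold Rf Rd
  apply HasDerivAt.fun_sum
  intro k _
  have := re_hasDeriv st (st.w_deriv k t)
  refine this.congr_deriv (Eq.symm ?_)
  rw [show (((2*(k:ℝ) - (n:ℝ)) : ℝ) : ℂ) * Complex.I * wv n a μ k t
      = (((2*(k:ℝ) - (n:ℝ)) : ℝ) : ℂ) * (Complex.I * wv n a μ k t) by ring]
  simp [Complex.re_ofNat, Complex.ofReal_mul, Complex.mul_re, Complex.ofReal_re, Complex.ofReal_im]

lemma g_deriv (t : ℝ) : HasDerivAt (gf n l a μ A β) (gd n l a μ A β t) t := by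
  unfold gf gd
  apply HasDerivAt.add ?_ (st.Rf_deriv t)
  have h1 : HasDerivAt (fun t : ℝ => Mv n l * t + β) (Mv n l) t := by
    simpa using ((hasDerivAt_id t).const_mul (Mv n l)).add_const β
  have h2 := (h1.cos).const_mul (2*A)
  refine h2.congr_deriv (Eq.symm ?_)
  ring

lemma g_cont : Continuous (gf n l a μ A β) :=
  continuous_iff_continuousAt.2 fun t => (st.g_deriv t).continuousAt

omit st in
lemma kf_mem {k : ℕ} : k ∈ Kf n l ↔ k ≤ n ∧ k ≠ l ∧ k ≠ n - l := by
  unfold Kf; simp only [Finset.mem_filter, Finset.mem_range]; omega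

lemma kf_reflect {k : ℕ} (hk : k ∈ Kf n l) : n - k ∈ Kf n l := by
  have h := kf_mem.1 hk
  have hle := st.hl_le
  have hlt := st.hln
  rw [kf_mem]
  omega

omit st in
lemma sum_split {G : Type*} [AddCommMonoid G] (f : ℕ → G) (hln : 2*l < n) :
    ∑ k ∈ Finset.range (n+1), f k = f l + f (n-l) + ∑ k ∈ Kf n l, f k := by
  have hfil : (Finset.range (n+1)).filter (fun k => ¬(k ≠ l ∧ k ≠ n - l)) = {l, n-l} := by
    ext k
    simp only [Finset.mem_filter, Finset.mem_range, Finset.mem_insert, Finset.mem_singleton]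
    constructor
    · rintro ⟨_, h⟩; tauto
    · rintro (rfl | rfl) <;> exact ⟨by omega, by tauto⟩
  have hne : l ≠ n - l := by omega
  rw [← Finset.sum_filter_add_sum_filter_not (Finset.range (n+1)) (fun k => k ≠ l ∧ k ≠ n - l) f,
    hfil, Finset.sum_pair hne]
  show _ + _ = _
  unfold Kf
  rw [add_comm]

lemma w_nl (t : ℝ) : wv n a μ (n-l) t
    = (A : ℂ) * Complex.exp (((Mv n l * t + β : ℝ) : ℂ) * Complex.I) := by
  unfold wv
  rw [← st.hAβ]
  have h1 : (2*((n-l:ℕ):ℝ) - (n:ℝ)) = Mv n l := by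
    unfold Mv; push_cast [Nat.cast_sub st.hl_le]; ring
  rw [h1, mul_assoc, ← Complex.exp_add]
  congr 2
  push_cast
  ring

lemma w_l (t : ℝ) : wv n a μ l t = (starRingEnd ℂ) (wv n a μ (n-l) t) := by
  have := st.w_conj (Nat.sub_le n l) t
  rw [Nat.sub_sub_self st.hl_le] at this
  rw [← this]

lemma re_w_nl (t : ℝ) : (wv n a μ (n-l) t).re = A * Real.cos (Mv n l * t + β) := by
  rw [st.w_nl t, Complex.re_ofReal_mul, Complex.exp_ofReal_mul_I_re]

lemma im_w_nl (t : ℝ) : (wv n a μ (n-l) t).im = A * Real.sin (Mv n l * t + β) := by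
  rw [st.w_nl t, Complex.im_ofReal_mul, Complex.exp_ofReal_mul_I_im]

lemma kf_sum_real (t : ℝ) :
    ∑ k ∈ Kf n l, wv n a μ k t = ((Rf n l a μ t : ℝ) : ℂ) := by
  have hconj : (starRingEnd ℂ) (∑ k ∈ Kf n l, wv n a μ k t) = ∑ k ∈ Kf n l, wv n a μ k t := by
    rw [map_sum]
    refine Finset.sum_nbij' (fun k => n - k) (fun k => n - k) ?_ ?_ ?_ ?_ ?_
    · intro k hk; exact st.kf_reflect hk
    · intro k hk; exact st.kf_reflect hk
    · intro k hk; have := (kf_mem.1 hk).1; show n - (n - k) = k; omega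
    · intro k hk; have := (kf_mem.1 hk).1; show n - (n - k) = k; omega
    · intro k hk
      have hk' := (kf_mem.1 hk).1
      rw [st.w_conj hk' t]
  have hre := (Complex.conj_eq_iff_re.1 hconj)
  rw [← hre]
  unfold Rf
  rw [Complex.re_sum]

lemma sum_w (t : ℝ) :
    ∑ k ∈ Finset.range (n+1), wv n a μ k t = ((gf n l a μ A β t : ℝ) : ℂ) := by
  have h1 : wv n a μ l t + wv n a μ (n-l) t
      = ((2 * A * Real.cos (Mv n l * t + β) : ℝ) : ℂ) := by
    rw [st.w_l t, add_comm, Complex.add_conj, st.re_w_nl t]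
    push_cast; ring
  rw [sum_split (fun k => wv n a μ k t) st.hln]
  show wv n a μ l t + wv n a μ (n-l) t + _ = _
  rw [h1, st.kf_sum_real t]
  unfold gf
  push_cast
  ring

lemma sum_wd (t : ℝ) :
    (∑ k ∈ Finset.range (n+1),
      ((((2*(k:ℝ) - (n:ℝ)) : ℝ) : ℂ) * Complex.I * wv n a μ k t)).re
    = gd n l a μ A β t := by
  have hsplit := sum_split (G := ℂ)
    (fun k => (((2*(k:ℝ) - (n:ℝ)) : ℝ) : ℂ) * Complex.I * wv n a μ k t) st.hln
  beta_reduce at hsplit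
  have hMl : ((2*(l:ℝ) - (n:ℝ) : ℝ) : ℂ) = -((Mv n l : ℝ) : ℂ) := by
    unfold Mv; push_cast; ring
  have hMnl : ((2*(((n-l) : ℕ):ℝ) - (n:ℝ) : ℝ) : ℂ) = ((Mv n l : ℝ) : ℂ) := by
    unfold Mv; push_cast [Nat.cast_sub st.hl_le]; ring
  set z := wv n a μ (n-l) t with hzdef
  have hpair : (((2*(l:ℝ) - (n:ℝ) : ℝ) : ℂ) * Complex.I * wv n a μ l t
      + ((2*(((n-l) : ℕ):ℝ) - (n:ℝ) : ℝ) : ℂ) * Complex.I * z)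
      = ((-(2 * Mv n l * z.im) : ℝ) : ℂ) := by
    rw [hMl, hMnl, st.w_l t, ← hzdef]
    rw [show -((Mv n l : ℝ) : ℂ) * Complex.I * (starRingEnd ℂ) z
        + ((Mv n l : ℝ) : ℂ) * Complex.I * z
        = ((Mv n l : ℝ) : ℂ) * Complex.I * (z - (starRingEnd ℂ) z) by ring]
    rw [Complex.sub_conj]
    rw [show ((Mv n l : ℝ) : ℂ) * Complex.I * (((2 * z.im : ℝ) : ℂ) * Complex.I)
        = ((Mv n l : ℝ) : ℂ) * ((2 * z.im : ℝ) : ℂ) * (Complex.I * Complex.I) by ring]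
    rw [Complex.I_mul_I]
    push_cast
    ring
  have hKf : (∑ k ∈ Kf n l, (((2*(k:ℝ) - (n:ℝ)) : ℝ) : ℂ) * Complex.I * wv n a μ k t).re
      = Rd n l a μ t := by
    rw [Complex.re_sum]
    unfold Rd
    refine Finset.sum_congr rfl fun k _ => ?_
    rw [mul_assoc, Complex.re_ofReal_mul]
  rw [hsplit, Complex.add_re, hpair, hKf, Complex.ofReal_re, st.im_w_nl t]
  unfold gd
  ring

lemma nu_abs_le {k : ℕ} (hk : k ∈ Kf n l) : |2*(k:ℝ) - (n:ℝ)| ≤ (n:ℝ) := by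
  have h := (kf_mem.1 hk).1
  have h1 : (k:ℝ) ≤ (n:ℝ) := by exact_mod_cast h
  have h2 : (0:ℝ) ≤ (k:ℝ) := by positivity
  rw [abs_le]
  constructor <;> linarith

set_option maxHeartbeats 1000000 in
lemma zero_sign {t : ℝ} (hg : gf n l a μ A β t = 0) :
    Real.sin (Mv n l * t + β) * gd n l a μ A β t < 0 := by
  set c := Real.cos (Mv n l * t + β) with hc
  set s := Real.sin (Mv n l * t + β) with hs
  have hsc : s^2 + c^2 = 1 := Real.sin_sq_add_cos_sq _
  have hMpos := st.Mpos
  have hMle := st.Mle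
  have hkey := st.hkey
  -- the error term E
  set E := Mv n l * Rf n l a μ t * c - s * Rd n l a μ t with hE
  have hEsum : E = ∑ k ∈ Kf n l,
      ((Mv n l * c) * (wv n a μ k t).re - ((2*(k:ℝ) - (n:ℝ)) * s) * (Complex.I * wv n a μ k t).re) := by
    rw [hE]
    unfold Rf Rd
    rw [Finset.mul_sum, Finset.sum_mul, Finset.mul_sum, ← Finset.sum_sub_distrib]
    refine Finset.sum_congr rfl fun k _ => ?_
    ring
  have hterm : ∀ k ∈ Kf n l,
      |(Mv n l * c) * (wv n a μ k t).re - ((2*(k:ℝ) - (n:ℝ)) * s) * (Complex.I * wv n a μ k t).re|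
        ≤ (n:ℝ) * ‖a k‖ := by
    intro k hk
    have h1 : (Mv n l * c) * (wv n a μ k t).re
        - ((2*(k:ℝ) - (n:ℝ)) * s) * (Complex.I * wv n a μ k t).re
        = (wv n a μ k t * (((Mv n l * c : ℝ) : ℂ) - (((2*(k:ℝ) - (n:ℝ))*s : ℝ) : ℂ) * Complex.I)).re := by
      simp only [Complex.mul_re, Complex.sub_re, Complex.sub_im, Complex.ofReal_re,
        Complex.ofReal_im, Complex.mul_im, Complex.I_re, Complex.I_im]
      ring
    rw [h1]
    refine (Complex.abs_re_le_norm _).trans ?_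
    rw [norm_mul, st.abs_w]
    have hν := st.nu_abs_le hk
    have hM' : |Mv n l| ≤ (n:ℝ) := by
      rw [abs_le]; constructor <;> [linarith; linarith]
    set u := ((Mv n l * c : ℝ) : ℂ) - (((2*(k:ℝ) - (n:ℝ))*s : ℝ) : ℂ) * Complex.I with hu
    have hsq : (‖u‖)^2 = (Mv n l * c)^2 + ((2*(k:ℝ) - (n:ℝ))*s)^2 := by
      rw [Complex.sq_norm, hu, Complex.normSq_apply]
      simp only [Complex.sub_re, Complex.sub_im, Complex.ofReal_re, Complex.ofReal_im,
        Complex.mul_re, Complex.mul_im, Complex.I_re, Complex.I_im]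
      ring
    have hM2 : (Mv n l)^2 ≤ (n:ℝ)^2 := by nlinarith [abs_nonneg (Mv n l), neg_abs_le (Mv n l), le_abs_self (Mv n l)]
    have hν2 : (2*(k:ℝ) - (n:ℝ))^2 ≤ (n:ℝ)^2 := by
      nlinarith [neg_abs_le (2*(k:ℝ) - (n:ℝ)), le_abs_self (2*(k:ℝ) - (n:ℝ))]
    have hub : (‖u‖)^2 ≤ (n:ℝ)^2 := by
      rw [hsq]
      have e1 : (Mv n l * c)^2 = (Mv n l)^2 * c^2 := by ring
      have e2 : ((2*(k:ℝ) - (n:ℝ))*s)^2 = (2*(k:ℝ) - (n:ℝ))^2 * s^2 := by ring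
      rw [e1, e2]
      nlinarith [sq_nonneg c, sq_nonneg s]
    have habsu : ‖u‖ ≤ (n:ℝ) := by
      nlinarith [norm_nonneg u, Nat.cast_nonneg (α := ℝ) n]
    calc ‖a k‖ * ‖u‖ ≤ ‖a k‖ * (n:ℝ) :=
          mul_le_mul_of_nonneg_left habsu (norm_nonneg _)
      _ = (n:ℝ) * ‖a k‖ := by ring
  have hEbound : |E| ≤ (n:ℝ) * Sv n l a := by
    rw [hEsum]
    refine (Finset.abs_sum_le_sum_abs _ _).trans ?_
    rw [show (n:ℝ) * Sv n l a = ∑ k ∈ Kf n l, (n:ℝ) * ‖a k‖ by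
      unfold Sv; rw [Finset.mul_sum]]
    exact Finset.sum_le_sum hterm
  have hRf : Rf n l a μ t = -(2*A*c) := by
    have : 2*A*c + Rf n l a μ t = 0 := hg
    linarith
  have hsd : s * Rd n l a μ t = -(2*A*Mv n l*c^2) - E := by
    rw [hE, hRf]; ring
  have hfinal : s * gd n l a μ A β t = -(2*A*Mv n l) - E := by
    unfold gd
    rw [mul_add, hsd, ← hs]
    linear_combination (-(2*A*Mv n l)) * hsc
  rw [hfinal]
  have hElow : -((n:ℝ) * Sv n l a) ≤ E := neg_le_of_abs_le hEbound
  linarith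

lemma peak (j : ℕ) : 0 < (-1:ℝ)^j * gf n l a μ A β (((j:ℝ)*π - β)/Mv n l) := by
  have hM := st.Mpos
  have hcos : Real.cos (Mv n l * (((j:ℝ)*π - β)/Mv n l) + β) = (-1:ℝ)^j := by
    rw [show Mv n l * (((j:ℝ)*π - β)/Mv n l) + β = (j:ℝ)*π by field_simp; ring]
    exact cos_nat_pi j
  have hRb := st.Rf_bound (((j:ℝ)*π - β)/Mv n l)
  have hS := st.S_lt
  unfold gf
  rw [hcos]
  have h1 : ((-1:ℝ)^j)^2 = 1 := by
    rw [← pow_mul, mul_comm, pow_mul]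
    norm_num
  have habs : |(-1:ℝ)^j * Rf n l a μ (((j:ℝ)*π - β)/Mv n l)|
      = |Rf n l a μ (((j:ℝ)*π - β)/Mv n l)| := by
    rw [abs_mul, abs_pow, abs_neg, abs_one, one_pow, one_mul]
  have h2 : -(Sv n l a) ≤ (-1:ℝ)^j * Rf n l a μ (((j:ℝ)*π - β)/Mv n l) :=
    neg_le_of_abs_le (habs.le.trans hRb)
  have hexp : (-1:ℝ)^j * (2*A*(-1:ℝ)^j + Rf n l a μ (((j:ℝ)*π - β)/Mv n l))
      = 2*A*((-1:ℝ)^j)^2 + (-1:ℝ)^j * Rf n l a μ (((j:ℝ)*π - β)/Mv n l) := by ring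
  rw [hexp, h1]
  linarith

omit st in
lemma cos_add_nat_pi (x : ℝ) (m : ℕ) : Real.cos (x + (m:ℝ)*π) = (-1:ℝ)^m * Real.cos x := by
  induction m with
  | zero => simp
  | succ p ih =>
    rw [show x + ((p+1 : ℕ):ℝ)*π = (x + (p:ℝ)*π) + π by push_cast; ring,
      Real.cos_add_pi, ih, pow_succ]
    ring

omit st in
lemma w_period (k : ℕ) (t : ℝ) :
    wv n a μ k (t + π) = (((-1:ℝ)^n : ℝ) : ℂ) * wv n a μ k t := by
  unfold wv
  have hsplitexp : ((((2*(k:ℝ) - (n:ℝ)) * (t + π) : ℝ)) : ℂ) * Complex.I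
      = (((2*(k:ℝ) - (n:ℝ)) * t : ℝ) : ℂ) * Complex.I
        + ((k:ℂ) * (2*(π:ℂ)*Complex.I) + (n:ℂ) * (-((π:ℂ)*Complex.I))) := by
    push_cast; ring
  rw [hsplitexp, Complex.exp_add, Complex.exp_add, Complex.exp_nat_mul, Complex.exp_nat_mul,
    Complex.exp_two_pi_mul_I, one_pow, one_mul, Complex.exp_neg, Complex.exp_pi_mul_I]
  have : ((-1:ℂ))⁻¹ = -1 := by norm_num
  rw [this]
  push_cast
  ring

lemma g_period (t : ℝ) : gf n l a μ A β (t + π) = (-1:ℝ)^n * gf n l a μ A β t := by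
  have h2l : 2*l ≤ n := le_of_lt st.hln
  have hpar : (-1:ℝ)^(n-2*l) = (-1:ℝ)^n := by
    conv_rhs => rw [show n = (n - 2*l) + 2*l by omega]
    rw [pow_add, pow_mul]
    norm_num
  have hcos : Real.cos (Mv n l * (t+π) + β) = (-1:ℝ)^n * Real.cos (Mv n l * t + β) := by
    rw [show Mv n l * (t+π) + β = (Mv n l * t + β) + ((n - 2*l : ℕ) : ℝ)*π by
      rw [← st.Mnat]; ring]
    rw [cos_add_nat_pi, hpar]
  have hRf : Rf n l a μ (t + π) = (-1:ℝ)^n * Rf n l a μ t := by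
    unfold Rf
    rw [Finset.mul_sum]
    refine Finset.sum_congr rfl fun k _ => ?_
    rw [w_period, Complex.re_ofReal_mul]
  unfold gf
  rw [hcos, hRf]
  ring

lemma gd_ne {t : ℝ} (hg : gf n l a μ A β t = 0) : gd n l a μ A β t ≠ 0 := by
  intro h0
  have := st.zero_sign hg
  rw [h0, mul_zero] at this
  exact lt_irrefl 0 this

lemma cross {x y : ℝ} (hx : gf n l a μ A β x = 0) (hy : gf n l a μ A β y = 0) (hxy : x < y)
    (hne : ∀ u ∈ Set.Ioo x y, gf n l a μ A β u ≠ 0) :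
    ∃ k : ℤ, Mv n l * x + β < (k:ℝ)*π ∧ (k:ℝ)*π < Mv n l * y + β := by
  have hzx := st.zero_sign hx
  have hzy := st.zero_sign hy
  have hcont := st.g_cont
  have hsincont : Continuous (fun u : ℝ => Real.sin (Mv n l * u + β)) := by
    exact Real.continuous_sin.comp (by continuity)
  have hsin : (Real.sin (Mv n l * x + β) < 0 ∧ 0 < Real.sin (Mv n l * y + β))
      ∨ (0 < Real.sin (Mv n l * x + β) ∧ Real.sin (Mv n l * y + β) < 0) := by
    rcases const_sign hcont hne with hpos | hneg
    · have h1 : 0 ≤ gd n l a μ A β x := deriv_sign_right (st.g_deriv x) hx hxy hpos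
      have h2 : gd n l a μ A β y ≤ 0 := deriv_sign_left (st.g_deriv y) hy hxy hpos
      left
      constructor
      · nlinarith
      · nlinarith
    · have hpos : ∀ u ∈ Set.Ioo x y, 0 < (fun u => -(gf n l a μ A β u)) u := by
        intro u hu
        simpa using hneg u hu
      have h1 : 0 ≤ -(gd n l a μ A β x) :=
        deriv_sign_right ((st.g_deriv x).neg) (by simp [hx]) hxy hpos
      have h2 : -(gd n l a μ A β y) ≤ 0 :=
        deriv_sign_left ((st.g_deriv y).neg) (by simp [hy]) hxy hpos
      right
      constructor
      · nlinarith
      · nlinarith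
  have hzero : ∃ c ∈ Set.Ioo x y, Real.sin (Mv n l * c + β) = 0 := by
    rcases hsin with ⟨h1, h2⟩ | ⟨h1, h2⟩
    · have := intermediate_value_Ioo hxy.le hsincont.continuousOn
      exact (fun h => ⟨h.choose, h.choose_spec.1, h.choose_spec.2⟩) (this ⟨h1, h2⟩)
    · have := intermediate_value_Ioo' hxy.le hsincont.continuousOn
      exact (fun h => ⟨h.choose, h.choose_spec.1, h.choose_spec.2⟩) (this ⟨h2, h1⟩)
  obtain ⟨c, hc, hc0⟩ := hzero
  obtain ⟨k, hk⟩ := Real.sin_eq_zero_iff.1 hc0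
  refine ⟨k, ?_, ?_⟩
  · rw [hk]
    have := st.Mpos
    nlinarith [hc.1]
  · rw [hk]
    have := st.Mpos
    nlinarith [hc.2]

lemma g_t0_pos : 0 < gf n l a μ A β (-β / Mv n l) := by
  have := st.peak 0
  simpa using this

omit st in
lemma tj_eq (j : ℕ) : ((j:ℝ)*π - β)/Mv n l = -β / Mv n l + (j:ℝ)*π/Mv n l := by
  field_simp
  ring

lemma count_ge (T : Finset ℝ)
    (hT : ∀ t : ℝ, t ∈ T ↔
      (t ∈ Set.Ioo (-β / Mv n l) (-β / Mv n l + π) ∧ gf n l a μ A β t = 0)) :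
    n - 2*l ≤ T.card := by
  set m' := n - 2*l with hm'
  set t0 := -β / Mv n l with ht0
  have hMm : Mv n l = (m' : ℝ) := st.Mnat
  have hMpos := st.Mpos
  have hm'pos : 0 < m' := by have := st.hln; omega
  set tj : ℕ → ℝ := fun j => ((j:ℝ)*π - β)/Mv n l with htj
  have htj0 : ∀ j : ℕ, tj j = t0 + (j:ℝ)*π/Mv n l := fun j => tj_eq j
  have hflip : ∀ j : ℕ, gf n l a μ A β (tj j) * gf n l a μ A β (tj (j+1)) < 0 := by
    intro j
    have p1 := st.peak j
    have p2 := st.peak (j+1)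
    have hmul := mul_pos p1 p2
    have hpow : (-1:ℝ)^j * (-1:ℝ)^(j+1) = -1 := by
      rw [← pow_add]
      exact Odd.neg_one_pow ⟨j, by omega⟩
    nlinarith
  have hex : ∀ j : ℕ, j < m' → ∃ u, u ∈ Set.Ioo (tj j) (tj (j+1)) ∧ gf n l a μ A β u = 0 := by
    intro j _
    have hlt : tj j < tj (j+1) := by
      rw [htj0, htj0]
      have hstep : (j:ℝ)*π/Mv n l < ((j+1:ℕ):ℝ)*π/Mv n l := by
        rw [div_lt_div_iff₀ hMpos hMpos]
        push_cast
        nlinarith [Real.pi_pos, hMpos]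
      linarith
    obtain ⟨c, hc, hc0⟩ := exists_zero_between st.g_cont hlt (hflip j)
    exact ⟨c, hc, hc0⟩
  classical
  set sfun : ℕ → ℝ := fun j => if hj : j < m' then Classical.choose (hex j hj) else 0 with hsfun
  have hspec : ∀ j : ℕ, j < m' →
      sfun j ∈ Set.Ioo (tj j) (tj (j+1)) ∧ gf n l a μ A β (sfun j) = 0 := by
    intro j hj
    rw [hsfun]
    simp only [hj, dif_pos]
    exact Classical.choose_spec (hex j hj)
  have hmemT : ∀ j ∈ Finset.range m', sfun j ∈ T := by
    intro j hjr
    have hj := Finset.mem_range.1 hjr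
    obtain ⟨⟨hj1, hj2⟩, hj0⟩ := hspec j hj
    rw [hT]
    refine ⟨⟨?_, ?_⟩, hj0⟩
    · calc t0 ≤ tj j := by
            rw [htj0]
            have : 0 ≤ (j:ℝ)*π/Mv n l := by positivity
            linarith
        _ < sfun j := hj1
    · calc sfun j < tj (j+1) := hj2
        _ ≤ t0 + π := by
            rw [htj0]
            have h1 : ((j+1:ℕ):ℝ) ≤ (m' : ℝ) := by exact_mod_cast hj
            have hπ := Real.pi_pos
            have : ((j+1:ℕ):ℝ)*π/Mv n l ≤ π := by
              rw [hMm, div_le_iff₀ (by rw [← hMm]; exact hMpos)]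
              nlinarith
            linarith
  have hinj : Set.InjOn sfun (Finset.range m') := by
    have hmono : ∀ i j : ℕ, i < m' → j < m' → i < j → sfun i < sfun j := by
      intro i j hi hj hij
      have h1 := (hspec i hi).1.2
      have h2 := (hspec j hj).1.1
      have h3 : tj (i+1) ≤ tj j := by
        rw [htj0, htj0]
        have : ((i+1:ℕ):ℝ) ≤ (j:ℝ) := by exact_mod_cast hij
        have hπ := Real.pi_pos
        have := hMpos
        gcongr
      linarith
    intro i hi j hj hij
    simp only [Finset.coe_range, Set.mem_Iio] at hi hj
    rcases lt_trichotomy i j with h | h | h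
    · exact absurd hij (ne_of_lt (hmono i j hi hj h))
    · exact h
    · exact absurd hij.symm (ne_of_lt (hmono j i hj hi h))
  calc m' = (Finset.range m').card := (Finset.card_range m').symm
    _ ≤ T.card := Finset.card_le_card_of_injOn sfun hmemT hinj

set_option maxHeartbeats 1000000 in
lemma count_le (T : Finset ℝ)
    (hT : ∀ t : ℝ, t ∈ T ↔
      (t ∈ Set.Ioo (-β / Mv n l) (-β / Mv n l + π) ∧ gf n l a μ A β t = 0)) :
    T.card ≤ n - 2*l := by
  classical
  set m' := n - 2*l with hm'
  set t0 := -β / Mv n l with ht0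
  have hMm : Mv n l = (m' : ℝ) := st.Mnat
  have hg0 : 0 < gf n l a μ A β t0 := st.g_t0_pos
  have hTm : ∀ t ∈ T, t ∈ Set.Ioo t0 (t0+π) ∧ gf n l a μ A β t = 0 := fun t ht => (hT t).1 ht
  by_cases hN0 : T.card = 0
  · rw [hN0]; exact Nat.zero_le _
  set N := T.card with hN
  have hNpos : 0 < N := Nat.pos_of_ne_zero hN0
  have e := T.orderIsoOfFin (rfl : T.card = N)
  set F : Fin N → ℝ := fun i => (e i : ℝ) with hF
  have hFmono : StrictMono F := by
    intro i j hij
    have := e.strictMono hij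
    exact_mod_cast this
  have hFT : ∀ i, F i ∈ T := fun i => (e i).2
  have hFsur : ∀ t ∈ T, ∃ i, F i = t := by
    intro t ht
    refine ⟨e.symm ⟨t, ht⟩, ?_⟩
    rw [hF]
    simp
  have hFIoo : ∀ i, F i ∈ Set.Ioo t0 (t0+π) := fun i => (hTm _ (hFT i)).1
  have hFz : ∀ i, gf n l a μ A β (F i) = 0 := fun i => (hTm _ (hFT i)).2
  have hwin : ∀ u, u ∈ Set.Ioo t0 (t0+π) → gf n l a μ A β u = 0 → ∃ i, F i = u :=
    fun u hu h0 => hFsur u ((hT u).2 ⟨hu, h0⟩)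
  set zero0 : Fin N := ⟨0, hNpos⟩ with hzero0
  set last : Fin N := ⟨N-1, by omega⟩ with hlastdef
  set Y : Fin N → ℝ :=
    fun i => if h : (i:ℕ)+1 < N then F ⟨(i:ℕ)+1, h⟩ else F zero0 + π with hY
  have hYval1 : ∀ (i : Fin N) (h : (i:ℕ)+1 < N), Y i = F ⟨(i:ℕ)+1, h⟩ := by
    intro i h; rw [hY]; exact dif_pos h
  have hYval2 : ∀ (i : Fin N), ¬((i:ℕ)+1 < N) → Y i = F zero0 + π := by
    intro i h; rw [hY]; exact dif_neg h
  have hYz : ∀ i, gf n l a μ A β (Y i) = 0 := by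
    intro i
    by_cases h : (i:ℕ)+1 < N
    · rw [hYval1 i h]; exact hFz _
    · rw [hYval2 i h, st.g_period, hFz zero0]; ring
  have hYgt : ∀ i, F i < Y i := by
    intro i
    by_cases h : (i:ℕ)+1 < N
    · rw [hYval1 i h]
      apply hFmono
      rw [Fin.lt_def]
      simp
    · rw [hYval2 i h]
      have h1 := (hFIoo i).2
      have h2 := (hFIoo zero0).1
      linarith
  have hYne : ∀ i, ∀ u ∈ Set.Ioo (F i) (Y i), gf n l a μ A β u ≠ 0 := by
    intro i u hu h0
    by_cases h : (i:ℕ)+1 < N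
    · rw [hYval1 i h] at hu
      have huIoo : u ∈ Set.Ioo t0 (t0+π) :=
        ⟨lt_trans (hFIoo i).1 hu.1, lt_trans hu.2 (hFIoo ⟨(i:ℕ)+1,h⟩).2⟩
      obtain ⟨jj, hjj⟩ := hwin u huIoo h0
      have l1 : i < jj := hFmono.lt_iff_lt.1 (by rw [hjj]; exact hu.1)
      have l2 : jj < (⟨(i:ℕ)+1, h⟩ : Fin N) := hFmono.lt_iff_lt.1 (by rw [hjj]; exact hu.2)
      rw [Fin.lt_def] at l1 l2
      simp at l2
      omega
    · rw [hYval2 i h] at hu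
      rcases lt_trichotomy u (t0 + π) with hu1 | hu1 | hu1
      · have huIoo : u ∈ Set.Ioo t0 (t0+π) := ⟨lt_trans (hFIoo i).1 hu.1, hu1⟩
        obtain ⟨jj, hjj⟩ := hwin u huIoo h0
        have l1 : i < jj := hFmono.lt_iff_lt.1 (by rw [hjj]; exact hu.1)
        rw [Fin.lt_def] at l1
        have := jj.2
        omega
      · rw [hu1, st.g_period] at h0
        have hne : ((-1:ℝ))^n ≠ 0 := pow_ne_zero _ (by norm_num)
        rcases mul_eq_zero.1 h0 with h' | h'
        · exact hne h'
        · linarith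
      · have hup : gf n l a μ A β (u - π) = 0 := by
          have hper := st.g_period (u - π)
          rw [sub_add_cancel] at hper
          rw [h0] at hper
          have hne : ((-1:ℝ))^n ≠ 0 := pow_ne_zero _ (by norm_num)
          rcases mul_eq_zero.1 hper.symm with h' | h'
          · exact absurd h' hne
          · exact h'
        have huIoo : u - π ∈ Set.Ioo t0 (t0 + π) := by
          constructor
          · linarith
          · have h2 := (hFIoo zero0).2
            have := hu.2
            linarith
        obtain ⟨jj, hjj⟩ := hwin (u - π) huIoo hup
        have l2 : jj < zero0 := hFmono.lt_iff_lt.1 (by rw [hjj]; have := hu.2; linarith)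
        rw [Fin.lt_def] at l2
        simp [hzero0] at l2
  have hcrossall : ∀ i : Fin N,
      ∃ k : ℤ, Mv n l * F i + β < (k:ℝ)*π ∧ (k:ℝ)*π < Mv n l * Y i + β :=
    fun i => st.cross (hFz i) (hYz i) (hYgt i) (hYne i)
  choose K hK1 hK2 using hcrossall
  have hπ := Real.pi_pos
  have hadj : ∀ (i : Fin N) (h : (i:ℕ)+1 < N), K i < K ⟨(i:ℕ)+1, h⟩ := by
    intro i h
    have u1 := hK2 i
    rw [hYval1 i h] at u1
    have u2 := hK1 ⟨(i:ℕ)+1, h⟩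
    have hlt : (K i : ℝ) * π < (K ⟨(i:ℕ)+1, h⟩ : ℝ) * π := lt_trans u1 u2
    have := lt_of_mul_lt_mul_right hlt hπ.le
    exact_mod_cast this
  have hchain : ∀ d : ℕ, ∀ h : d < N, K zero0 + (d:ℤ) ≤ K ⟨d, h⟩ := by
    intro d
    induction d with
    | zero => intro h; simp [hzero0]
    | succ p ih =>
      intro h
      have hp : p < N := by omega
      have h1 := hadj ⟨p, hp⟩ (by simpa using h)
      have h2 := ih hp
      simp only [Fin.val_mk] at h1
      push_cast
      omega
  have hlast : K zero0 + ((N-1 : ℕ):ℤ) ≤ K last := hchain (N-1) (by omega)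
  have u0 := hK1 zero0
  have ul := hK2 last
  rw [hYval2 last (by simp [hlastdef]; omega)] at ul
  have hrw : Mv n l * (F zero0 + π) + β = (Mv n l * F zero0 + β) + (m':ℝ)*π := by
    rw [hMm]; ring
  rw [hrw] at ul
  have h1'' : (K last : ℝ)*π < ((K zero0 : ℝ) + (m':ℝ))*π := by nlinarith
  have h2 : (K last : ℤ) < K zero0 + (m' : ℤ) := by
    have := lt_of_mul_lt_mul_right h1'' hπ.le
    exact_mod_cast this
  omega

omit st in
lemma w_split (k : ℕ) (t : ℝ) : wv n a μ k t
    = μ * Complex.exp (((-(n:ℝ)*t : ℝ):ℂ) * Complex.I)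
      * (a k * (Complex.exp (((2*t:ℝ):ℂ) * Complex.I))^k) := by
  unfold wv
  rw [show ((((2*(k:ℝ) - (n:ℝ)) * t :ℝ)):ℂ) * Complex.I
      = ((-(n:ℝ)*t :ℝ):ℂ) * Complex.I + (k:ℂ) * ((((2*t:ℝ)):ℂ) * Complex.I) by
    push_cast; ring]
  rw [Complex.exp_add, Complex.exp_nat_mul]
  ring

lemma sum_w_eval (t : ℝ) :
    μ * Complex.exp (((-(n:ℝ)*t : ℝ):ℂ) * Complex.I)
      * (Pp n a).eval (Complex.exp (((2*t:ℝ):ℂ) * Complex.I))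
    = ((gf n l a μ A β t : ℝ) : ℂ) := by
  have h1 : μ * Complex.exp (((-(n:ℝ)*t : ℝ):ℂ) * Complex.I)
      * (Pp n a).eval (Complex.exp (((2*t:ℝ):ℂ) * Complex.I))
      = ∑ k ∈ Finset.range (n+1), wv n a μ k t := by
    rw [Pp_eval, Finset.mul_sum]
    exact Finset.sum_congr rfl fun k _ => (w_split k t).symm
  rw [h1, st.sum_w t]

lemma root_iff (hμ0 : μ ≠ 0) (t : ℝ) :
    (Pp n a).eval (Complex.exp (((2*t:ℝ):ℂ) * Complex.I)) = 0 ↔ gf n l a μ A β t = 0 := by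
  have h := st.sum_w_eval t
  constructor
  · intro h0
    rw [h0, mul_zero] at h
    exact_mod_cast h.symm
  · intro h0
    rw [h0, Complex.ofReal_zero] at h
    have hne : μ * Complex.exp (((-(n:ℝ)*t : ℝ):ℂ) * Complex.I) ≠ 0 :=
      mul_ne_zero hμ0 (Complex.exp_ne_zero _)
    rcases mul_eq_zero.1 h with h' | h'
    · exact absurd h' hne
    · exact h'

lemma deriv_eval (t : ℝ) :
    ∑ k ∈ Finset.range (n+1), ((((2*(k:ℝ) - (n:ℝ)) : ℝ) : ℂ) * Complex.I * wv n a μ k t)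
    = Complex.I * μ * Complex.exp (((-(n:ℝ)*t : ℝ):ℂ) * Complex.I)
      * (2 * Complex.exp (((2*t:ℝ):ℂ) * Complex.I)
          * (Pp n a).derivative.eval (Complex.exp (((2*t:ℝ):ℂ) * Complex.I))
        - (n:ℂ) * (Pp n a).eval (Complex.exp (((2*t:ℝ):ℂ) * Complex.I))) := by
  set z := Complex.exp (((2*t:ℝ):ℂ) * Complex.I) with hz
  set E := Complex.exp (((-(n:ℝ)*t : ℝ):ℂ) * Complex.I) with hE
  have hP' : (Pp n a).derivative.eval z
      = ∑ k ∈ Finset.range (n+1), a k * ((k:ℂ) * z^(k-1)) := by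
    unfold Pp
    rw [Polynomial.derivative_sum]
    rw [Polynomial.eval_finset_sum]
    refine Finset.sum_congr rfl fun k _ => ?_
    rw [Polynomial.derivative_C_mul_X_pow]
    simp
    ring
  have hR : Complex.I * μ * E * (2 * z * (∑ k ∈ Finset.range (n+1), a k * ((k:ℂ) * z^(k-1)))
      - (n:ℂ) * ∑ k ∈ Finset.range (n+1), a k * z^k)
      = ∑ k ∈ Finset.range (n+1),
          Complex.I * μ * E * (2*z*(a k * ((k:ℂ) * z^(k-1))) - (n:ℂ)*(a k * z^k)) := by
    rw [Finset.mul_sum, Finset.mul_sum, ← Finset.sum_sub_distrib, Finset.mul_sum]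
  rw [hP', Pp_eval, hR]
  refine Finset.sum_congr rfl fun k _ => ?_
  rw [w_split k t, ← hz, ← hE]
  rcases Nat.eq_zero_or_pos k with hk0 | hkpos
  · subst hk0
    push_cast
    ring
  · have hzz : z * z^(k-1) = z^k := by
      rw [← pow_succ']
      congr 1
      omega
    rw [show 2 * z * (a k * ((k:ℂ) * z^(k-1))) = 2 * (k:ℂ) * a k * (z * z^(k-1)) by ring, hzz]
    push_cast
    ring

lemma gd_eq_zero_of_double (hμ0 : μ ≠ 0) (t : ℝ)
    (h1 : (Pp n a).eval (Complex.exp (((2*t:ℝ):ℂ) * Complex.I)) = 0)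
    (h2 : (Pp n a).derivative.eval (Complex.exp (((2*t:ℝ):ℂ) * Complex.I)) = 0) :
    gd n l a μ A β t = 0 := by
  rw [← st.sum_wd t, st.deriv_eval t, h1, h2]
  simp

end Setup

lemma prod_map_congr {s : Multiset ℂ} {f g : ℂ → ℂ} (h : ∀ r ∈ s, f r = g r) :
    (s.map f).prod = (s.map g).prod := by rw [Multiset.map_congr rfl h]

lemma roots_symm (n : ℕ) (a : ℕ → ℂ) (ω : ℂ) (hω : ω ≠ 0) (han : a n ≠ 0) (ha0 : a 0 ≠ 0)
    (hsi : ∀ k ≤ n, a (n - k) = ω * (starRingEnd ℂ) (a k)) :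
    (Pp n a).roots.map (fun z => ((starRingEnd ℂ) z)⁻¹) = (Pp n a).roots := by
  classical
  have hP0 : Pp n a ≠ 0 := Pp_ne n a han
  have hcard : Multiset.card (Pp n a).roots = n := Pp_card_roots n a han
  have hfact : Polynomial.C (a n) * ((Pp n a).roots.map fun w => Polynomial.X - Polynomial.C w).prod
      = Pp n a := by
    have := Polynomial.C_leadingCoeff_mul_prod_multiset_X_sub_C
      (p := Pp n a) (by rw [hcard, Pp_natDegree n a han])
    rwa [Pp_leading n a han] at this
  have hroots0 : ∀ r ∈ (Pp n a).roots, r ≠ 0 := by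
    intro r hr hr0
    have h := (Polynomial.mem_roots hP0).1 hr
    rw [hr0] at h
    have h2 := h
    rw [Polynomial.IsRoot, Pp_eval] at h2
    simp only [zero_pow_eq, mul_ite, mul_one, mul_zero] at h2
    rw [Finset.sum_ite_eq' (Finset.range (n+1)) 0 (fun k => a k)] at h2
    simp at h2
    exact ha0 h2
  set ι : ℂ → ℂ := fun z => ((starRingEnd ℂ) z)⁻¹ with hι
  set c : ℂ := ω * (starRingEnd ℂ) (a n)
    * ((Pp n a).roots.map (fun r => -((starRingEnd ℂ) r))).prod with hc
  have hcne : c ≠ 0 := by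
    refine mul_ne_zero (mul_ne_zero hω (by simpa using han)) ?_
    apply Multiset.prod_ne_zero
    intro h0
    obtain ⟨r, hr, hr0⟩ := Multiset.mem_map.1 h0
    have hr' : r = 0 := by
      have : (starRingEnd ℂ) r = 0 := by linear_combination -hr0
      simpa using this
    exact hroots0 r hr hr'
  set Q : Polynomial ℂ := Polynomial.C c
    * (((Pp n a).roots.map ι).map fun w => Polynomial.X - Polynomial.C w).prod with hQ
  have hPQ : Pp n a = Q := by
    apply Polynomial.eq_of_infinite_eval_eq
    apply Set.Infinite.mono (s := {(0:ℂ)}ᶜ) ?_ ((Set.finite_singleton 0).infinite_compl)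
    intro z hz
    simp only [Set.mem_compl_iff, Set.mem_singleton_iff] at hz
    show (Pp n a).eval z = Q.eval z
    have e1 : (Pp n a).eval z
        = ∑ k ∈ Finset.range (n+1), (ω * (starRingEnd ℂ) (a (n-k))) * z^k := by
      rw [Pp_eval]
      refine Finset.sum_congr rfl fun k hk => ?_
      have hk' : k ≤ n := by have := Finset.mem_range.1 hk; omega
      have h := hsi (n - k) (Nat.sub_le n k)
      rw [Nat.sub_sub_self hk'] at h
      rw [h]
    have e2 : ∑ k ∈ Finset.range (n+1), (ω * (starRingEnd ℂ) (a (n-k))) * z^k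
        = ∑ k ∈ Finset.range (n+1), (ω * (starRingEnd ℂ) (a k)) * z^(n-k) := by
      rw [← Finset.sum_range_reflect (fun k => (ω * (starRingEnd ℂ) (a k)) * z^(n-k)) (n+1)]
      refine Finset.sum_congr rfl fun k hk => ?_
      have hk' : k ≤ n := by have := Finset.mem_range.1 hk; omega
      show (ω * (starRingEnd ℂ) (a (n-k))) * z^k
        = (ω * (starRingEnd ℂ) (a (n + 1 - 1 - k))) * z^(n-(n + 1 - 1 - k))
      have : n + 1 - 1 - k = n - k := by omega
      rw [this, Nat.sub_sub_self hk']
    have e4 : ∑ k ∈ Finset.range (n+1), (ω * (starRingEnd ℂ) (a k)) * z^(n-k)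
        = ω * z^n * (starRingEnd ℂ) ((Pp n a).eval (ι z)) := by
      rw [Pp_eval, map_sum, Finset.mul_sum]
      refine Finset.sum_congr rfl fun k hk => ?_
      have hk' : k ≤ n := by have := Finset.mem_range.1 hk; omega
      rw [pow_sub₀ z hz hk', map_mul, map_pow]
      have hconv : (starRingEnd ℂ) (ι z) = z⁻¹ := by rw [hι]; simp
      rw [hconv, inv_pow]
      ring
    have e6 : (Pp n a).eval (ι z)
        = a n * ((Pp n a).roots.map (fun r => ι z - r)).prod := by
      conv_lhs => rw [← hfact]
      rw [Polynomial.eval_mul, Polynomial.eval_C, Polynomial.eval_multiset_prod,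
        Multiset.map_map]
      congr 1
      exact prod_map_congr (fun r _ => by simp)
    have e7 : (starRingEnd ℂ) ((Pp n a).eval (ι z))
        = (starRingEnd ℂ) (a n)
          * ((Pp n a).roots.map (fun r => z⁻¹ - (starRingEnd ℂ) r)).prod := by
      rw [e6, map_mul, map_multiset_prod, Multiset.map_map]
      congr 1
      refine prod_map_congr (fun r _ => ?_)
      show (starRingEnd ℂ) (ι z - r) = z⁻¹ - (starRingEnd ℂ) r
      rw [map_sub]
      congr 1
      rw [hι]
      simp
    have e8 : z^n = ((Pp n a).roots.map (fun _ => z)).prod := by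
      rw [Multiset.map_const', Multiset.prod_replicate, hcard]
    have e9 : Q.eval z = c * ((Pp n a).roots.map (fun r => z - ι r)).prod := by
      rw [hQ, Polynomial.eval_mul, Polynomial.eval_C, Polynomial.eval_multiset_prod,
        Multiset.map_map, Multiset.map_map]
      congr 1
      exact prod_map_congr (fun r _ => by simp)
    rw [e1, e2, e4, e7, e9]
    have e10 : ((Pp n a).roots.map (fun _ => z)).prod
        * ((Pp n a).roots.map (fun r => z⁻¹ - (starRingEnd ℂ) r)).prod
        = ((Pp n a).roots.map (fun r => -((starRingEnd ℂ) r))).prod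
          * ((Pp n a).roots.map (fun r => z - ι r)).prod := by
      rw [← Multiset.prod_map_mul, ← Multiset.prod_map_mul]
      refine prod_map_congr (fun r hr => ?_)
      have hrne : r ≠ 0 := hroots0 r hr
      have hrc : (starRingEnd ℂ) r ≠ 0 := by simpa using hrne
      show z * (z⁻¹ - (starRingEnd ℂ) r) = -((starRingEnd ℂ) r) * (z - ι r)
      rw [hι]
      field_simp
      ring
    calc ω * z^n * ((starRingEnd ℂ) (a n)
          * ((Pp n a).roots.map (fun r => z⁻¹ - (starRingEnd ℂ) r)).prod)
        = ω * (starRingEnd ℂ) (a n)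
          * (z^n * ((Pp n a).roots.map (fun r => z⁻¹ - (starRingEnd ℂ) r)).prod) := by ring
      _ = ω * (starRingEnd ℂ) (a n)
          * (((Pp n a).roots.map (fun r => -((starRingEnd ℂ) r))).prod
            * ((Pp n a).roots.map (fun r => z - ι r)).prod) := by rw [e8, e10]
      _ = c * ((Pp n a).roots.map (fun r => z - ι r)).prod := by rw [hc]; ring
  conv_rhs => rw [hPQ]
  rw [hQ, Polynomial.roots_C_mul _ hcne, Polynomial.roots_multiset_prod_X_sub_C]

lemma deriv2 {p : Polynomial ℂ} {r : ℂ}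
    (h : (Polynomial.X - Polynomial.C r)^2 ∣ p) : p.derivative.eval r = 0 := by
  obtain ⟨q, hq⟩ := h
  rw [hq]
  simp [Polynomial.derivative_mul, Polynomial.derivative_pow]

lemma one_lt_inv_iff' {x : ℝ} (hx : 0 < x) : 1 < x⁻¹ ↔ x < 1 := by
  constructor
  · intro h
    have h2 := mul_lt_mul_of_pos_left h hx
    rw [mul_inv_cancel₀ (ne_of_gt hx), mul_one] at h2
    exact h2
  · intro h
    have hinv : 0 < x⁻¹ := inv_pos.2 hx
    have h2 := mul_lt_mul_of_pos_left h hinv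
    rw [inv_mul_cancel₀ (ne_of_gt hx), mul_one] at h2
    exact h2

end SIAux

open SIAux Real

/-- If a self-inversive polynomial `p(z) = a₀ + a₁ z + ⋯ + aₙ zⁿ` of degree `n`
satisfies `|a_{n-l}| > (1/2)·(n/(n-2l))·∑_{k ≠ l, n-l} |a_k|` with `2l < n`, then `p`
has exactly `l` roots (with multiplicity) inside the open unit disk and exactly `l`
roots (with multiplicity) outside the closed unit disk. -/
theorem selfInversive_roots_inside_outside
    (n l : ℕ) (a : ℕ → ℂ) (ω : ℂ)
    (hω : ‖ω‖ = 1)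
    (han : a n ≠ 0)
    (hsi : ∀ k ≤ n, a (n - k) = ω * (starRingEnd ℂ) (a k))
    (hl : 2 * l < n)
    (hineq : ‖a (n - l)‖ >
      (1 / 2) * ((n : ℝ) / ((n : ℝ) - 2 * l)) *
        ∑ k ∈ (Finset.range (n + 1)).filter (fun k => k ≠ l ∧ k ≠ n - l),
          ‖a k‖) :
    (Multiset.card
        ((∑ k ∈ Finset.range (n + 1), Polynomial.C (a k) * Polynomial.X ^ k).roots.filter
          (fun z => ‖z‖ < 1)) = l)
      ∧
    (Multiset.card
        ((∑ k ∈ Finset.range (n + 1), Polynomial.C (a k) * Polynomial.X ^ k).roots.filter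
          (fun z => 1 < ‖z‖)) = l) := by
  classical
  have hω0 : ω ≠ 0 := fun h => by simp [h] at hω
  have hanc : (starRingEnd ℂ) (a n) ≠ 0 := by simpa using han
  have ha0 : a 0 ≠ 0 := by
    have h := hsi n le_rfl
    rw [Nat.sub_self] at h
    rw [h]
    exact mul_ne_zero hω0 hanc
  obtain ⟨μ, hμ2⟩ : ∃ z : ℂ, z ^ 2 = ω⁻¹ := IsAlgClosed.exists_pow_nat_eq ω⁻¹ (by norm_num)
  have hμabs : ‖μ‖ = 1 := by
    have h1 : (‖μ‖)^2 = 1 := by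
      rw [← norm_pow, hμ2, norm_inv, hω]; norm_num
    nlinarith [norm_nonneg μ]
  have hμ0 : μ ≠ 0 := fun h => by simp [h] at hμabs
  have hconjμ : (starRingEnd ℂ) μ = μ * ω := by
    have h1 : μ * (starRingEnd ℂ) μ = 1 := by
      rw [Complex.mul_conj]
      rw [Complex.normSq_eq_norm_sq, hμabs]
      norm_num
    have h2 : μ * (μ * ω) = 1 := by
      rw [← mul_assoc, ← pow_two, hμ2, inv_mul_cancel₀ hω0]
    exact mul_left_cancel₀ hμ0 (h1.trans h2.symm)
  have hconj : ∀ k ≤ n, (starRingEnd ℂ) (μ * a k) = μ * a (n - k) := by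
    intro k hk
    rw [map_mul, hconjμ, hsi k hk]
    ring
  set A := ‖a (n-l)‖ with hA
  set β := Complex.arg (μ * a (n-l)) with hβ
  have hAβ : (A:ℂ) * Complex.exp ((β:ℂ) * Complex.I) = μ * a (n-l) := by
    have h := Complex.norm_mul_exp_arg_mul_I (μ * a (n-l))
    rw [norm_mul, hμabs, one_mul] at h
    exact_mod_cast h
  have hM0 : (0:ℝ) < (n:ℝ) - 2*l := by
    have : (2*l:ℝ) < (n:ℝ) := by exact_mod_cast hl
    linarith
  have hSnn : 0 ≤ Sv n l a := Finset.sum_nonneg fun k _ => norm_nonneg _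
  have hsum_eq : (∑ k ∈ (Finset.range (n + 1)).filter (fun k => k ≠ l ∧ k ≠ n - l),
      ‖a k‖) = Sv n l a := rfl
  have hApos : 0 < A := by
    refine lt_of_le_of_lt ?_ hineq
    rw [hsum_eq]
    have h1 : (0:ℝ) ≤ (n:ℝ)/((n:ℝ)-2*l) := div_nonneg (by positivity) hM0.le
    have h2 : (0:ℝ) ≤ (1/2 : ℝ) := by norm_num
    exact mul_nonneg (mul_nonneg h2 h1) hSnn
  have hkey : (n:ℝ) * Sv n l a < 2 * A * Mv n l := by
    have h := hineq
    rw [hsum_eq] at h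
    have h2 : (1/2 : ℝ) * ((n:ℝ)/((n:ℝ)-2*l)) * Sv n l a
        = (n:ℝ) * Sv n l a / (2*((n:ℝ)-2*l)) := by
      have hM0' : (n:ℝ) - 2*l ≠ 0 := ne_of_gt hM0
      field_simp
    rw [h2] at h
    have h3 := (div_lt_iff₀ (by linarith : (0:ℝ) < 2*((n:ℝ)-2*l))).1 h
    show (n:ℝ) * Sv n l a < 2 * A * ((n:ℝ) - 2*l)
    linarith
  have st : Setup n l a μ A β := ⟨hl, hμabs, hconj, hAβ, hApos, hkey⟩
  have hPp : (∑ k ∈ Finset.range (n + 1), Polynomial.C (a k) * Polynomial.X ^ k) = Pp n a := rfl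
  rw [hPp]
  set R := (Pp n a).roots with hR
  have hcard : Multiset.card R = n := Pp_card_roots n a han
  have hPne : Pp n a ≠ 0 := Pp_ne n a han
  have hroots0 : ∀ r ∈ R, r ≠ 0 := by
    intro r hr hr0
    have h := (Polynomial.mem_roots hPne).1 hr
    rw [hr0] at h
    rw [Polynomial.IsRoot, Pp_eval] at h
    simp only [zero_pow_eq, mul_ite, mul_one, mul_zero] at h
    rw [Finset.sum_ite_eq' (Finset.range (n+1)) 0 (fun k => a k)] at h
    simp at h
    exact ha0 h
  have hsymm : R.map (fun z => ((starRingEnd ℂ) z)⁻¹) = R := roots_symm n a ω hω0 han ha0 hsi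
  set c1 := Multiset.card (R.filter (fun z => ‖z‖ < 1)) with hc1
  set c2 := Multiset.card (R.filter (fun z => ‖z‖ = 1)) with hc2
  set c3 := Multiset.card (R.filter (fun z => 1 < ‖z‖)) with hc3
  have hpart : c1 + c2 + c3 = n := by
    have h1 := Multiset.filter_add_not (fun z => ‖z‖ < 1) R
    have hcard1 : c1 + Multiset.card (R.filter (fun z => ¬ ‖z‖ < 1)) = n := by
      rw [hc1, ← Multiset.card_add, h1, hcard]
    have h2 := Multiset.filter_add_not (fun z => ‖z‖ = 1)
      (R.filter (fun z => ¬ ‖z‖ < 1))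
    have e21 : (R.filter (fun z => ¬ ‖z‖ < 1)).filter (fun z => ‖z‖ = 1)
        = R.filter (fun z => ‖z‖ = 1) := by
      rw [Multiset.filter_filter]
      apply Multiset.filter_congr
      intro z _
      constructor
      · rintro ⟨h', _⟩; exact h'
      · intro h'; exact ⟨h', by rw [h']; exact lt_irrefl 1⟩
    have e22 : (R.filter (fun z => ¬ ‖z‖ < 1)).filter (fun z => ¬ ‖z‖ = 1)
        = R.filter (fun z => 1 < ‖z‖) := by
      rw [Multiset.filter_filter]
      apply Multiset.filter_congr
      intro z _
      constructor
      · rintro ⟨h1', h2'⟩; exact lt_of_le_of_ne (not_lt.1 h2') (Ne.symm h1')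
      · intro h'; exact ⟨ne_of_gt h', not_lt.2 h'.le⟩
    have hcard2 : c2 + c3 = Multiset.card (R.filter (fun z => ¬ ‖z‖ < 1)) := by
      rw [hc2, hc3, ← e21, ← e22, ← Multiset.card_add, h2]
    omega
  have hsym13 : c3 = c1 := by
    have hmap := congrArg
      (fun s => Multiset.card (Multiset.filter (fun z => 1 < ‖z‖) s)) hsymm
    rw [Multiset.filter_map, Multiset.card_map] at hmap
    have hfc : R.filter ((fun z => 1 < ‖z‖) ∘ (fun z => ((starRingEnd ℂ) z)⁻¹))
        = R.filter (fun z => ‖z‖ < 1) := by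
      apply Multiset.filter_congr
      intro z hz
      have hz0 : z ≠ 0 := hroots0 z hz
      have habs0 : 0 < ‖z‖ := by
        simp [norm_pos_iff, hz0]
      show 1 < ‖((starRingEnd ℂ) z)⁻¹‖ ↔ ‖z‖ < 1
      rw [norm_inv, Complex.norm_conj]
      exact one_lt_inv_iff' habs0
    rw [hfc] at hmap
    rw [hc3, hc1, ← hmap]
  -- circle roots are simple
  have hsimple : ∀ z ∈ R, ‖z‖ = 1 → Multiset.count z R = 1 := by
    intro z hz habs1
    have hroot := (Polynomial.mem_roots hPne).1 hz
    set t := Complex.arg z / 2 with ht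
    have hzt : Complex.exp (((2*t:ℝ):ℂ) * Complex.I) = z := by
      have h := Complex.norm_mul_exp_arg_mul_I z
      rw [habs1] at h
      push_cast at h
      rw [show (((2*t:ℝ)):ℂ) = (Complex.arg z : ℂ) by rw [ht]; push_cast; ring]
      simpa using h
    have hgf : gf n l a μ A β t = 0 :=
      (st.root_iff hμ0 t).1 (by rw [hzt]; exact hroot)
    rw [hR, Polynomial.count_roots]
    have hge : 1 ≤ (Pp n a).rootMultiplicity z :=
      (Polynomial.rootMultiplicity_pos hPne).2 hroot
    by_contra hne2
    have h2 : 2 ≤ (Pp n a).rootMultiplicity z := by omega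
    have hdvd : (Polynomial.X - Polynomial.C z)^2 ∣ Pp n a :=
      dvd_trans (pow_dvd_pow _ h2) (Polynomial.pow_rootMultiplicity_dvd (Pp n a) z)
    have hder : (Pp n a).derivative.eval z = 0 := deriv2 hdvd
    have hgd := st.gd_eq_zero_of_double hμ0 t (by rw [hzt]; exact hroot) (by rw [hzt]; exact hder)
    exact st.gd_ne hgf hgd
  set Fc := R.filter (fun z => ‖z‖ = 1) with hFc
  have hnodup : Fc.Nodup := by
    rw [Multiset.nodup_iff_count_le_one]
    intro z
    by_cases hzf : z ∈ Fc
    · have hz1 : ‖z‖ = 1 := (Multiset.mem_filter.1 hzf).2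
      have hzR : z ∈ R := (Multiset.mem_filter.1 hzf).1
      calc Multiset.count z Fc ≤ Multiset.count z R :=
            Multiset.count_le_of_le z (Multiset.filter_le _ R)
        _ = 1 := hsimple z hzR hz1
    · rw [Multiset.count_eq_zero_of_notMem hzf]
      omega
  have hc2' : c2 = Fc.toFinset.card := by
    rw [hc2]
    exact (Multiset.toFinset_card_of_nodup hnodup).symm
  -- window representatives
  set t0 := -β / Mv n l with ht0
  set rep : ℂ → ℝ := fun z => Complex.arg z / 2 + π * ⌈(t0 - Complex.arg z / 2)/π⌉ with hrep
  have hrep_exp : ∀ z : ℂ, ‖z‖ = 1 →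
      Complex.exp (((2 * rep z:ℝ):ℂ) * Complex.I) = z := by
    intro z hz1
    have h := Complex.norm_mul_exp_arg_mul_I z
    rw [hz1] at h
    push_cast at h
    rw [show (((2 * rep z:ℝ)):ℂ) * Complex.I
        = (Complex.arg z : ℂ) * Complex.I
          + ((⌈(t0 - Complex.arg z / 2)/π⌉ : ℤ) : ℂ) * (2 * (π:ℂ) * Complex.I) by
      rw [hrep]; push_cast; ring]
    rw [Complex.exp_add, Complex.exp_int_mul_two_pi_mul_I, mul_one]
    simpa using h
  have hrep_mem : ∀ z : ℂ, rep z ∈ Set.Ico t0 (t0 + π) := by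
    intro z
    rw [hrep]
    set x := Complex.arg z / 2 with hx
    have hπ := Real.pi_pos
    constructor
    · have h1 := Int.le_ceil ((t0 - x)/π)
      have h2 : t0 - x ≤ π * ⌈(t0 - x)/π⌉ := by
        rw [mul_comm, ← div_le_iff₀ hπ]
        exact h1
      simp only
      linarith
    · have h1 : (⌈(t0 - x)/π⌉ : ℝ) < (t0 - x)/π + 1 := Int.ceil_lt_add_one _
      have h2 : π * ⌈(t0 - x)/π⌉ < t0 - x + π := by
        have h3 : ((t0 - x)/π) * π = t0 - x := div_mul_cancel₀ _ (ne_of_gt hπ)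
        nlinarith
      simp only
      linarith
  have hg0 : 0 < gf n l a μ A β t0 := st.g_t0_pos
  set T : Finset ℝ := Fc.toFinset.image rep with hT
  have hTmem_z : ∀ z ∈ Fc.toFinset, (‖z‖ = 1 ∧ z ∈ R) := by
    intro z hz
    have h := Multiset.mem_toFinset.1 hz
    exact ⟨(Multiset.mem_filter.1 h).2, (Multiset.mem_filter.1 h).1⟩
  have hTiff : ∀ t : ℝ, t ∈ T ↔
      (t ∈ Set.Ioo t0 (t0+π) ∧ gf n l a μ A β t = 0) := by
    intro t
    constructor
    · intro ht
      obtain ⟨z, hzmem, rfl⟩ := Finset.mem_image.1 ht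
      obtain ⟨hz1, hzR⟩ := hTmem_z z hzmem
      have hroot := (Polynomial.mem_roots hPne).1 hzR
      have hgf : gf n l a μ A β (rep z) = 0 :=
        (st.root_iff hμ0 (rep z)).1 (by rw [hrep_exp z hz1]; exact hroot)
      have hmem := hrep_mem z
      refine ⟨⟨?_, hmem.2⟩, hgf⟩
      rcases lt_or_eq_of_le hmem.1 with h | h
      · exact h
      · exfalso
        rw [← h] at hgf
        linarith
    · rintro ⟨htIoo, hgf⟩
      set z := Complex.exp (((2*t:ℝ):ℂ) * Complex.I) with hzdef
      have hz1 : ‖z‖ = 1 := Complex.norm_exp_ofReal_mul_I _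
      have hroot : (Pp n a).IsRoot z := (st.root_iff hμ0 t).2 hgf
      have hzR : z ∈ R := (Polynomial.mem_roots hPne).2 hroot
      have hzFc : z ∈ Fc.toFinset :=
        Multiset.mem_toFinset.2 (Multiset.mem_filter.2 ⟨hzR, hz1⟩)
      have hrt : rep z = t := by
        have h1 := hrep_exp z hz1
        have h2 := hrep_mem z
        obtain ⟨m, hm⟩ := Complex.exp_eq_exp_iff_exists_int.1 (by rw [h1, hzdef] :
          Complex.exp (((2 * rep z:ℝ):ℂ) * Complex.I) = Complex.exp (((2*t:ℝ):ℂ) * Complex.I))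
        have hI : (Complex.I : ℂ) ≠ 0 := Complex.I_ne_zero
        have hm' : 2 * rep z = 2*t + (m:ℝ) * (2*π) := by
          have hmc : ((2 * rep z:ℝ):ℂ) = ((2*t:ℝ):ℂ) + (m:ℂ) * (2*(π:ℂ)) := by
            apply mul_right_cancel₀ hI
            rw [hm]; ring
          exact_mod_cast hmc
        have hb1 := htIoo.1
        have hb2 := htIoo.2
        have hc1' := h2.1
        have hc2' := h2.2
        have hπ := Real.pi_pos
        have hmm : (m:ℝ) * π = rep z - t := by linarith
        have hm0 : m = 0 := by
          by_contra hm0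
          have h1' : (1:ℝ) ≤ |(m:ℝ)| := by
            have := Int.one_le_abs (by exact_mod_cast hm0 : m ≠ 0)
            exact_mod_cast this
          have hlb : π ≤ |(m:ℝ)*π| := by
            rw [abs_mul, abs_of_pos hπ]
            nlinarith
          rw [hmm] at hlb
          have hub : |rep z - t| < π := abs_lt.2 ⟨by linarith, by linarith⟩
          linarith
        rw [hm0] at hmm
        push_cast at hmm
        linarith
      rw [hT, Finset.mem_image]
      exact ⟨z, hzFc, hrt⟩
  have hcardT : T.card = Fc.toFinset.card := by
    rw [hT]
    apply Finset.card_image_of_injOn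
    intro z1 h1 z2 h2 heq
    have e1 := hrep_exp z1 (hTmem_z z1 (by simpa using h1)).1
    have e2 := hrep_exp z2 (hTmem_z z2 (by simpa using h2)).1
    rw [← e1, ← e2, heq]
  have hTcount : T.card = n - 2*l :=
    le_antisymm (st.count_le T hTiff) (st.count_ge T hTiff)
  have hc2m : c2 = n - 2*l := by rw [hc2', ← hcardT, hTcount]
  constructor
  · show c1 = l
    omega
  · show c3 = l
    omega
end

section
/- Let p(z) = a_0 + a_1 z + ... + a_n z^n be a self-inversive polynomial of degree n and let l be a natural number with 2l < n satisfying |a_{n-l}| > (1/2)·(n/(n-2l))·Σ_{k=0, k∉{l, n-l}}^{n} |a_k|. Then the polynomial q(z) = Σ_{k=0}^{n-1} (n-k)·conj(a_{n-k})·z^k (that is, q(z) = z^{n-1}·conj(p')(1/z), where p' is the formal derivative of p) has exactly l roots, counted with multiplicity, in the open unit disk {z ∈ ℂ : |z| < 1}. -/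
open Polynomial Finset Complex Metric Real

lemma aux_cont (R : Multiset ℂ) (hR : ∀ r ∈ R, ‖r‖ ≠ 1) :
    ContinuousOn (fun z : ℂ => (R.map fun r => (z - r)⁻¹).sum) (Metric.sphere (0:ℂ) 1) := by
  induction R using Multiset.induction with
  | empty => simpa using continuousOn_const
  | cons r s ih =>
    simp only [Multiset.map_cons, Multiset.sum_cons]
    refine ContinuousOn.add ?_ (ih fun x hx => hR x (Multiset.mem_cons_of_mem hx))
    refine (continuousOn_id.sub continuousOn_const).inv₀ fun z hz => sub_ne_zero.2 ?_
    intro h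
    exact hR r (Multiset.mem_cons_self r s) (by rw [← show z = r from h, ← mem_sphere_zero_iff_norm]; exact hz)

lemma circleIntegral_add {f g : ℂ → ℂ} {c : ℂ} {R : ℝ} (hf : CircleIntegrable f c R)
    (hg : CircleIntegrable g c R) :
    (∮ z in C(c, R), (f z + g z)) = (∮ z in C(c, R), f z) + ∮ z in C(c, R), g z := by
  simp only [circleIntegral, smul_add]
  exact intervalIntegral.integral_add hf.out hg.out

lemma aux_integral (R : Multiset ℂ) (hR : ∀ r ∈ R, ‖r‖ ≠ 1) :
    (∮ z in C(0, 1), (R.map fun r => (z - r)⁻¹).sum) =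
      (2 * π * I) * (Multiset.card (R.filter fun z => ‖z‖ < 1)) := by
  induction R using Multiset.induction with
  | empty => simp [circleIntegral]
  | cons r s ih =>
    have hr := hR r (Multiset.mem_cons_self r s)
    have hs : ∀ x ∈ s, ‖x‖ ≠ 1 := fun x hx => hR x (Multiset.mem_cons_of_mem hx)
    have h1 : CircleIntegrable (fun z : ℂ => (z - r)⁻¹) 0 1 := by
      refine ContinuousOn.circleIntegrable zero_le_one ?_
      exact aux_cont {r} (by simpa using hr) |>.congr (fun z hz => by simp)
    have h2 : CircleIntegrable (fun z : ℂ => (s.map fun t => (z - t)⁻¹).sum) 0 1 :=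
      ContinuousOn.circleIntegrable zero_le_one (aux_cont s hs)
    simp only [Multiset.map_cons, Multiset.sum_cons]
    rw [circleIntegral_add h1 h2, ih hs, Multiset.filter_cons]
    by_cases hlt : ‖r‖ < 1
    · rw [circleIntegral.integral_sub_inv_of_mem_ball (by simpa using hlt)]
      simp [hlt]
      ring
    · have hgt : 1 < ‖r‖ := lt_of_le_of_ne (not_lt.1 hlt) (Ne.symm hr)
      have : (∮ z in C(0, 1), (z - r)⁻¹) = 0 := by
        refine circleIntegral_eq_zero_of_differentiable_on_off_countable zero_le_one
          (Set.countable_empty) ?_ ?_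
        · refine ContinuousOn.inv₀ (continuousOn_id.sub continuousOn_const) fun z hz => sub_ne_zero.2 ?_
          intro h
          rw [mem_closedBall_zero_iff, h] at hz
          exact absurd hz (not_le.2 hgt)
        · intro z hz
          refine DifferentiableAt.inv (differentiableAt_id.sub (differentiableAt_const _)) (sub_ne_zero.2 ?_)
          intro h
          have := hz.1
          rw [mem_ball_zero_iff, h] at this
          exact absurd this (not_lt.2 hgt.le)
      rw [this, zero_add]
      simp [hlt]

lemma aux_logderiv_prod (c : ℂ) (R : Multiset ℂ) {z : ℂ} (hz : ∀ r ∈ R, z ≠ r) :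
    Polynomial.eval z (Polynomial.derivative (Polynomial.C c * (R.map fun r => X - Polynomial.C r).prod)) =
      Polynomial.eval z (Polynomial.C c * (R.map fun r => X - Polynomial.C r).prod) *
        (R.map fun r => (z - r)⁻¹).sum := by
  induction R using Multiset.induction with
  | empty => simp
  | cons r s ih =>
    have hzr : z - r ≠ 0 := sub_ne_zero.2 (hz r (Multiset.mem_cons_self r s))
    have hs : ∀ t ∈ s, z ≠ t := fun t ht => hz t (Multiset.mem_cons_of_mem ht)
    simp only [Multiset.map_cons, Multiset.prod_cons, Multiset.sum_cons]
    rw [mul_comm (X - Polynomial.C r), ← mul_assoc, derivative_mul, derivative_sub,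
      derivative_X, derivative_C, sub_zero, mul_one]
    simp only [eval_add, eval_mul, eval_sub, eval_X, eval_C, ih hs]
    field_simp
    ring

lemma aux_logderiv (q : Polynomial ℂ) (hq : q ≠ 0) {z : ℂ} (hz : Polynomial.eval z q ≠ 0) :
    Polynomial.eval z (Polynomial.derivative q) =
      Polynomial.eval z q * (q.roots.map fun r => (z - r)⁻¹).sum := by
  have hsp : q = Polynomial.C q.leadingCoeff * (q.roots.map fun r => X - Polynomial.C r).prod :=
    (IsAlgClosed.splits q).eq_prod_roots
  have hzr : ∀ r ∈ q.roots, z ≠ r := by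
    intro r hr he
    exact hz (he ▸ (Polynomial.isRoot_of_mem_roots hr))
  conv_lhs => rw [hsp]
  rw [aux_logderiv_prod _ _ hzr, ← hsp]

set_option maxHeartbeats 1000000 in
lemma rouche_mono (q : Polynomial ℂ) (Cst : ℂ) (l : ℕ)
    (hq : ∀ z : ℂ, ‖z‖ = 1 →
      ‖Polynomial.eval z q - Cst * z ^ l‖ < ‖Cst‖) :
    Multiset.card (q.roots.filter fun z => ‖z‖ < 1) = l := by
  have hC : Cst ≠ 0 := by
    intro h
    have h2 := hq 1 (by simp)
    rw [h] at h2
    simp at h2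
    exact (norm_nonneg _).not_gt h2
  have hne : ∀ z : ℂ, ‖z‖ = 1 → Polynomial.eval z q ≠ 0 := by
    intro z hz h
    have := hq z hz
    rw [h, zero_sub, norm_neg, norm_mul, norm_pow, hz, one_pow, mul_one] at this
    exact lt_irrefl _ this
  have hq0 : q ≠ 0 := by
    intro h
    exact hne 1 (by simp) (by simp [h])
  have hroots : ∀ r ∈ q.roots, ‖r‖ ≠ 1 := by
    intro r hr h
    exact hne r h (Polynomial.isRoot_of_mem_roots hr)
  set c : ℝ → ℂ := circleMap 0 1 with hc
  have habs : ∀ θ, ‖c θ‖ = 1 := fun θ => by simp [hc]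
  have hc0 : ∀ θ, c θ ≠ 0 := fun θ => by
    intro h; have := habs θ; rw [h] at this; simp at this
  set S : ℂ → ℂ := fun z => (q.roots.map fun r => (z - r)⁻¹).sum with hS
  set φ : ℝ → ℂ := fun θ => Complex.log (Polynomial.eval (c θ) q / (Cst * (c θ) ^ l)) with hφ
  have key : ∀ θ : ℝ, HasDerivAt φ
      (deriv (circleMap 0 1) θ * (S (c θ) - l * (c θ)⁻¹)) θ := by
    intro θ
    have hden : Cst * (c θ) ^ l ≠ 0 := mul_ne_zero hC (pow_ne_zero _ (hc0 θ))
    have hnum : Polynomial.eval (c θ) q ≠ 0 := hne _ (habs θ)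
    have hc' : HasDerivAt c (c θ * I) θ := by
      simpa [hc] using hasDerivAt_circleMap 0 1 θ
    have hnumd : HasDerivAt (fun t => Polynomial.eval (c t) q)
        (Polynomial.eval (c θ) (Polynomial.derivative q) * (c θ * I)) θ :=
      (q.hasDerivAt (c θ)).comp θ hc'
    have hdend : HasDerivAt (fun t => Cst * (c t) ^ l)
        (Cst * ((l : ℂ) * (c θ) ^ (l - 1) * (c θ * I))) θ := ((hasDerivAt_pow l (c θ)).comp θ hc').const_mul Cst
    have hG := hnumd.div hdend hden
    have hslit : Polynomial.eval (c θ) q / (Cst * (c θ) ^ l) ∈ Complex.slitPlane := by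
      have h1 : ‖Polynomial.eval (c θ) q / (Cst * (c θ) ^ l) - 1‖ < 1 := by
        rw [div_sub_one hden, norm_div]
        rw [div_lt_one (norm_pos_iff.2 hden)]
        calc ‖Polynomial.eval (c θ) q - Cst * (c θ) ^ l‖ < ‖Cst‖ :=
              hq _ (habs θ)
          _ = ‖Cst * (c θ) ^ l‖ := by
              rw [norm_mul, norm_pow, habs θ, one_pow, mul_one]
      have := Complex.mem_slitPlane_of_norm_lt_one h1
      simpa using this
    have hφ' := hG.clog_real hslit
    convert hφ' using 1
    · rfl
    have hS' : S (c θ) = (q.roots.map fun r => (c θ - r)⁻¹).sum := rfl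
    have hpow2 : Cst * ((l : ℂ) * c θ ^ (l - 1) * (c θ * I)) = Cst * ((l : ℂ) * c θ ^ l * I) := by
      rcases Nat.eq_zero_or_pos l with h | h
      · simp [h]
      · rw [show (l : ℂ) * c θ ^ (l - 1) * (c θ * I) = (l : ℂ) * (c θ ^ (l - 1) * c θ) * I by
            ring, ← pow_succ, Nat.sub_add_cancel h]
    rw [aux_logderiv q hq0 hnum, deriv_circleMap, hpow2, ← hc, ← hS']
    have hzne := hc0 θ
    simp only [Pi.div_apply]
    field_simp
  have hScont : ContinuousOn S (Metric.sphere (0:ℂ) 1) := aux_cont _ hroots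
  have hcont : Continuous fun θ => deriv (circleMap 0 1) θ * (S (c θ) - l * (c θ)⁻¹) := by
    simp only [deriv_circleMap]
    apply Continuous.mul
    · exact (continuous_circleMap 0 1).mul continuous_const
    · apply Continuous.sub
      · exact hScont.comp_continuous (continuous_circleMap 0 1) fun θ =>
          circleMap_mem_sphere (0:ℂ) zero_le_one θ
      · exact continuous_const.mul ((continuous_circleMap 0 1).inv₀ hc0)
  have hper : φ (2 * π) = φ 0 := by
    have hcc : c (2 * π) = c 0 := by
      simpa using periodic_circleMap 0 1 0
    simp only [hφ, hcc]
  have hFTC : (∫ θ in (0:ℝ)..(2*π), deriv (circleMap 0 1) θ * (S (c θ) - l * (c θ)⁻¹)) = 0 := by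
    rw [intervalIntegral.integral_eq_sub_of_hasDerivAt (fun θ _ => key θ)
      (hcont.intervalIntegrable 0 (2*π)), hper, sub_self]
  have hzero : (∮ z in C(0, 1), (S z - (l:ℂ) * z⁻¹)) = 0 := by
    simp only [circleIntegral, smul_eq_mul, ← hc]
    exact hFTC
  have hi1 : CircleIntegrable S 0 1 := ContinuousOn.circleIntegrable zero_le_one hScont
  have hi2 : CircleIntegrable (fun z : ℂ => (l:ℂ) * z⁻¹) 0 1 := by
    refine ContinuousOn.circleIntegrable zero_le_one ?_
    refine continuousOn_const.mul (ContinuousOn.inv₀ continuousOn_id fun z hz => ?_)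
    intro h
    rw [mem_sphere_zero_iff_norm, h] at hz
    simp at hz
  have hsplit := circleIntegral.integral_sub hi1 hi2
  rw [hzero] at hsplit
  have h2 : (∮ z in C(0,1), (l:ℂ) * z⁻¹) = (2 * π * I) * (l:ℂ) := by
    rw [circleIntegral.integral_const_mul]
    have h3 : (∮ z in C(0,1), z⁻¹) = 2 * ↑π * I := by
      simpa using circleIntegral.integral_sub_center_inv (0:ℂ) (one_ne_zero)
    rw [h3]
    ring
  have h1 : (∮ z in C(0,1), S z) =
      (2 * ↑π * I) * (Multiset.card (q.roots.filter fun z => ‖z‖ < 1)) :=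
    aux_integral q.roots hroots
  rw [h1, h2] at hsplit
  have := mul_left_cancel₀ Complex.two_pi_I_ne_zero (sub_eq_zero.1 hsplit.symm)
  exact_mod_cast this

/-- If a self-inversive polynomial `p(z) = a₀ + a₁ z + ⋯ + aₙ zⁿ` of degree `n`
satisfies `|a_{n-l}| > (1/2)·(n/(n-2l))·∑_{k ≠ l, n-l} |a_k|` with `2l < n`, then the
polynomial `q(z) = ∑_{k=0}^{n-1} (n-k)·conj(a_{n-k})·z^k` (i.e. `z^{n-1}·conj(p')(1/z)`)
has exactly `l` roots, counted with multiplicity, in the open unit disk. -/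
theorem selfInversive_cohn_polynomial_roots_inside
    (n l : ℕ) (a : ℕ → ℂ) (ω : ℂ)
    (hω : ‖ω‖ = 1)
    (han : a n ≠ 0)
    (hsi : ∀ k ≤ n, a (n - k) = ω * (starRingEnd ℂ) (a k))
    (hl : 2 * l < n)
    (hineq : ‖a (n - l)‖ >
      (1 / 2) * ((n : ℝ) / ((n : ℝ) - 2 * l)) *
        ∑ k ∈ (Finset.range (n + 1)).filter (fun k => k ≠ l ∧ k ≠ n - l),
          ‖a k‖) :
    Multiset.card
      ((∑ k ∈ Finset.range n,
          Polynomial.C (((n - k : ℕ) : ℂ) * (starRingEnd ℂ) (a (n - k))) *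
            Polynomial.X ^ k).roots.filter
        (fun z => ‖z‖ < 1)) = l := by
  have hln : l < n := by omega
  have habs_eq : ∀ k, k ≤ n → ‖a (n - k)‖ = ‖a k‖ := by
    intro k hk
    rw [hsi k hk, norm_mul, hω, one_mul, Complex.norm_conj]
  set Ssum : ℝ := ∑ k ∈ (Finset.range (n + 1)).filter (fun k => k ≠ l ∧ k ≠ n - l),
      ‖a k‖ with hSsum
  set S := (Finset.range (n + 1)).filter (fun k => k ≠ l ∧ k ≠ n - l) with hSdef
  apply rouche_mono _ (((n - l : ℕ) : ℂ) * (starRingEnd ℂ) (a (n - l))) l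
  intro z hz
  have hCabs : ‖((n - l : ℕ) : ℂ) * (starRingEnd ℂ) (a (n - l))‖
      = ((n : ℝ) - l) * ‖a (n - l)‖ := by
    rw [norm_mul, Complex.norm_natCast, Complex.norm_conj, Nat.cast_sub hln.le]
  -- evaluate
  have heval : Polynomial.eval z (∑ k ∈ Finset.range n,
      Polynomial.C (((n - k : ℕ) : ℂ) * (starRingEnd ℂ) (a (n - k))) * Polynomial.X ^ k) =
      ∑ k ∈ Finset.range n, ((n - k : ℕ) : ℂ) * (starRingEnd ℂ) (a (n - k)) * z ^ k := by
    rw [Polynomial.eval_finset_sum]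
    simp
  have hsplit : ∑ k ∈ Finset.range n, ((n - k : ℕ) : ℂ) * (starRingEnd ℂ) (a (n - k)) * z ^ k
      = ((n - l : ℕ) : ℂ) * (starRingEnd ℂ) (a (n - l)) * z ^ l +
        ∑ k ∈ (Finset.range n).erase l, ((n - k : ℕ) : ℂ) * (starRingEnd ℂ) (a (n - k)) * z ^ k := by
    exact (Finset.add_sum_erase _
      (fun k => ((n - k : ℕ) : ℂ) * (starRingEnd ℂ) (a (n - k)) * z ^ k)
      (Finset.mem_range.2 hln)).symm
  rw [heval, hsplit, add_sub_cancel_left]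
  -- bound the remaining sum
  have hbound : ‖∑ k ∈ (Finset.range n).erase l,
      ((n - k : ℕ) : ℂ) * (starRingEnd ℂ) (a (n - k)) * z ^ k‖ ≤
      ∑ k ∈ (Finset.range n).erase l, ((n - k : ℕ) : ℝ) * ‖a (n - k)‖ := by
    refine (norm_sum_le _ _).trans (le_of_eq (Finset.sum_congr rfl fun k _ => ?_))
    rw [norm_mul, norm_mul, norm_pow, hz, one_pow, mul_one, Complex.norm_natCast, Complex.norm_conj]
  refine lt_of_le_of_lt hbound ?_
  -- reindex k ↦ n - k
  have hstep1 : ∑ k ∈ (Finset.range n).erase l, ((n - k : ℕ) : ℝ) * ‖a (n - k)‖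
      = ∑ j ∈ (Finset.range (n + 1)).filter (fun j => j ≠ n - l ∧ j ≠ 0),
          (j : ℝ) * ‖a j‖ := by
    refine Finset.sum_nbij' (fun k => n - k) (fun j => n - j) ?_ ?_ ?_ ?_ ?_
    · intro k hk
      simp only [Finset.mem_erase, Finset.mem_range] at hk
      simp only [Finset.mem_filter, Finset.mem_range]
      omega
    · intro j hj
      simp only [Finset.mem_filter, Finset.mem_range] at hj
      simp only [Finset.mem_erase, Finset.mem_range]
      omega
    · intro k hk
      simp only [Finset.mem_erase, Finset.mem_range] at hk
      show n - (n - k) = k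
      omega
    · intro j hj
      simp only [Finset.mem_filter, Finset.mem_range] at hj
      show n - (n - j) = j
      omega
    · intro k _
      rfl
  rw [hstep1]
  -- add in the j = 0 term (which vanishes)
  have hstep2 : ∑ j ∈ (Finset.range (n + 1)).filter (fun j => j ≠ n - l ∧ j ≠ 0),
      (j : ℝ) * ‖a j‖
      = ∑ j ∈ (Finset.range (n + 1)).filter (fun j => j ≠ n - l),
          (j : ℝ) * ‖a j‖ := by
    refine Finset.sum_subset ?_ ?_
    · intro j hj
      simp only [Finset.mem_filter, Finset.mem_range] at hj ⊢
      exact ⟨hj.1, hj.2.1⟩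
    · intro j hj hj2
      simp only [Finset.mem_filter, Finset.mem_range] at hj hj2
      have : j = 0 := by tauto
      simp [this]
  rw [hstep2]
  -- split off the j = l term
  have hmem_l : l ∈ (Finset.range (n + 1)).filter (fun j => j ≠ n - l) := by
    simp only [Finset.mem_filter, Finset.mem_range]
    omega
  have herase : ((Finset.range (n + 1)).filter (fun j => j ≠ n - l)).erase l = S := by
    ext j
    simp only [hSdef, Finset.mem_erase, Finset.mem_filter, Finset.mem_range]
    tauto
  rw [← Finset.add_sum_erase _ _ hmem_l, herase]
  -- symmetric sum identity
  have hsym : ∑ j ∈ S, (j : ℝ) * ‖a j‖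
      = ∑ j ∈ S, ((n - j : ℕ) : ℝ) * ‖a (n - j)‖ := by
    refine Finset.sum_nbij' (fun j => n - j) (fun j => n - j) ?_ ?_ ?_ ?_ ?_
    · intro j hj
      simp only [hSdef, Finset.mem_filter, Finset.mem_range] at hj ⊢
      omega
    · intro j hj
      simp only [hSdef, Finset.mem_filter, Finset.mem_range] at hj ⊢
      omega
    · intro j hj
      simp only [hSdef, Finset.mem_filter, Finset.mem_range] at hj
      show n - (n - j) = j
      omega
    · intro j hj
      simp only [hSdef, Finset.mem_filter, Finset.mem_range] at hj
      show n - (n - j) = j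
      omega
    · intro j hj
      simp only [hSdef, Finset.mem_filter, Finset.mem_range] at hj
      show (j : ℝ) * ‖a j‖ = ((n - (n - j) : ℕ) : ℝ) * ‖a (n - (n - j))‖
      rw [show n - (n - j) = j by omega]
  have hsym2 : ∑ j ∈ S, ((n - j : ℕ) : ℝ) * ‖a (n - j)‖
      = ∑ j ∈ S, ((n : ℝ) - (j : ℝ)) * ‖a j‖ := by
    refine Finset.sum_congr rfl fun j hj => ?_
    simp only [hSdef, Finset.mem_filter, Finset.mem_range] at hj
    have hjn : j ≤ n := by omega
    rw [Nat.cast_sub hjn, habs_eq j hjn]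
  have hhalf : ∑ j ∈ S, (j : ℝ) * ‖a j‖ = (n : ℝ) / 2 * Ssum := by
    have h2 : (∑ j ∈ S, (j : ℝ) * ‖a j‖) +
        (∑ j ∈ S, ((n : ℝ) - (j : ℝ)) * ‖a j‖) = (n : ℝ) * Ssum := by
      rw [hSsum, ← Finset.sum_add_distrib, Finset.mul_sum]
      refine Finset.sum_congr rfl fun j _ => ?_
      ring
    have h3 := hsym.trans hsym2
    linarith
  rw [hhalf]
  -- final arithmetic
  have hal : ‖a l‖ = ‖a (n - l)‖ := (habs_eq l hln.le).symm
  rw [hal, hCabs]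
  have hd : (0 : ℝ) < (n : ℝ) - 2 * l := by
    have : (2 * l : ℝ) < (n : ℝ) := by exact_mod_cast hl
    linarith
  have hSnn : 0 ≤ Ssum := Finset.sum_nonneg fun j _ => norm_nonneg _
  have hkey : (n : ℝ) / 2 * Ssum < ((n : ℝ) - 2 * l) * ‖a (n - l)‖ := by
    have h5 : (1 / 2) * ((n : ℝ) / ((n : ℝ) - 2 * l)) * Ssum * ((n : ℝ) - 2 * l)
        = (n : ℝ) / 2 * Ssum := by
      field_simp
    calc (n : ℝ) / 2 * Ssum
        = (1 / 2) * ((n : ℝ) / ((n : ℝ) - 2 * l)) * Ssum * ((n : ℝ) - 2 * l) := h5.symm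
      _ < ‖a (n - l)‖ * ((n : ℝ) - 2 * l) :=
          mul_lt_mul_of_pos_right hineq hd
      _ = ((n : ℝ) - 2 * l) * ‖a (n - l)‖ := mul_comm _ _
  linarith
end

section
/- Let p(z) = a_0 + a_1 z + ... + a_n z^n be a self-inversive polynomial of degree n and let l be a natural number with 2l < n satisfying |a_{n-l}| > (1/2)·(n/(n-2l))·Σ_{k=0, k∉{l, n-l}}^{n} |a_k|. Then the formal derivative p'(z) = a_1 + 2a_2 z + ... + n·a_n·z^{n-1} has no roots on the complex unit circle U; moreover, p' has exactly n-l-1 roots, counted with multiplicity, in the open unit disk {z ∈ ℂ : |z| < 1}. -/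
open Polynomial Complex intervalIntegral Finset
private lemma circle_ne (w : ℂ) (hw : ‖w‖ ≠ 1) (θ : ℝ) :
    circleMap 0 1 θ - w ≠ 0 := by
  intro h
  have : circleMap 0 1 θ = w := by linear_combination h
  rw [← this] at hw
  simp at hw

private lemma cont_integrand (w : ℂ) (hw : ‖w‖ ≠ 1) :
    Continuous (fun θ : ℝ => circleMap 0 1 θ * I / (circleMap 0 1 θ - w)) := by
  apply Continuous.div
  · exact (continuous_circleMap 0 1).mul continuous_const
  · exact (continuous_circleMap 0 1).sub continuous_const
  · exact fun θ => circle_ne w hw θ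

private lemma slit_of_lt (u : ℂ) (hu : ‖u‖ < 1) : 1 - u ∈ Complex.slitPlane := by
  rw [Complex.mem_slitPlane_iff]
  left
  have : |u.re| ≤ ‖u‖ := Complex.abs_re_le_norm u
  simp only [Complex.sub_re, Complex.one_re]
  have := abs_le.mp this
  linarith

private lemma hasDerivAt_negexp (θ : ℝ) :
    HasDerivAt (fun θ : ℝ => Complex.exp (-(θ:ℂ) * I)) (Complex.exp (-(θ:ℂ) * I) * (-I)) θ := by
  have h1 : HasDerivAt (fun θ : ℝ => -(θ:ℂ) * I) (-I) θ := by
    simpa [Pi.neg_def] using (Complex.ofRealCLM.hasDerivAt.mul_const I).neg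
  exact h1.cexp

private lemma hasDerivAt_posexp (θ : ℝ) :
    HasDerivAt (fun θ : ℝ => Complex.exp ((θ:ℂ) * I)) (Complex.exp ((θ:ℂ) * I) * I) θ := by
  have h1 : HasDerivAt (fun θ : ℝ => (θ:ℂ) * I) I θ := by
    simpa using (Complex.ofRealCLM.hasDerivAt.mul_const I)
  exact h1.cexp

private lemma integral_circle_inv (w : ℂ) (hw : ‖w‖ ≠ 1) :
    (∫ θ in (0:ℝ)..(2 * Real.pi), circleMap 0 1 θ * I / (circleMap 0 1 θ - w))
      = if ‖w‖ < 1 then 2 * Real.pi * I else 0 := by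
  have hint : IntervalIntegrable (fun θ : ℝ => circleMap 0 1 θ * I / (circleMap 0 1 θ - w))
      MeasureTheory.volume 0 (2 * Real.pi) := (cont_integrand w hw).intervalIntegrable _ _
  have hcm : ∀ θ : ℝ, circleMap 0 1 θ = Complex.exp ((θ:ℂ) * I) := by
    intro θ; simp [circleMap]
  have hc0 : ∀ θ : ℝ, circleMap 0 1 θ ≠ 0 := fun θ => circleMap_ne_center one_ne_zero
  rcases lt_or_gt_of_ne hw with h1 | h1
  · -- |w| < 1
    rw [if_pos h1]
    have key : ∀ θ ∈ Set.uIcc (0:ℝ) (2 * Real.pi),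
        HasDerivAt (fun θ : ℝ => (θ:ℂ) * I + Complex.log (1 - w * Complex.exp (-(θ:ℂ) * I)))
          (circleMap 0 1 θ * I / (circleMap 0 1 θ - w)) θ := by
      intro θ _
      have hf : HasDerivAt (fun θ : ℝ => 1 - w * Complex.exp (-(θ:ℂ) * I))
          (w * Complex.exp (-(θ:ℂ) * I) * I) θ := by
        have := (hasDerivAt_const θ (1:ℂ)).sub ((hasDerivAt_negexp θ).const_mul w)
        exact this.congr_deriv (by ring)
      have habs : ‖w * Complex.exp (-(θ:ℂ) * I)‖ < 1 := by
        have : ‖w * Complex.exp (-(θ:ℂ) * I)‖ = ‖w‖ := by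
          rw [norm_mul, Complex.norm_exp]
          simp
        rw [this]; exact h1
      have hslit := slit_of_lt _ habs
      have hne : (1:ℂ) - w * Complex.exp (-(θ:ℂ) * I) ≠ 0 := Complex.slitPlane_ne_zero hslit
      have hlog := hf.clog_real hslit
      have hid : HasDerivAt (fun θ : ℝ => (θ:ℂ) * I) I θ := by
        simpa using (Complex.ofRealCLM.hasDerivAt.mul_const I)
      have hsum := hid.add hlog
      convert hsum using 1
      · rfl
      · rfl
      rw [hcm θ]
      have hexpne : Complex.exp ((θ:ℂ) * I) ≠ 0 := Complex.exp_ne_zero _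
      have hneg : Complex.exp (-(θ:ℂ) * I) = (Complex.exp ((θ:ℂ) * I))⁻¹ := by
        rw [← Complex.exp_neg]; ring_nf
      rw [hneg] at hne ⊢
      have hden : Complex.exp ((θ:ℂ) * I) - w ≠ 0 := by
        rw [← hcm θ]; exact circle_ne w hw θ
      field_simp
      ring
    rw [integral_eq_sub_of_hasDerivAt key hint]
    have : Complex.exp (-(↑(2 * Real.pi):ℂ) * I) = Complex.exp (-(↑(0:ℝ):ℂ) * I) := by
      push_cast
      rw [show -(2 * (Real.pi:ℂ)) * I = (↑(-1:ℤ)) * (2 * Real.pi * I) by push_cast; ring,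
        Complex.exp_int_mul_two_pi_mul_I]
      norm_num
    rw [this]
    push_cast
    ring
  · -- |w| > 1
    rw [if_neg (not_lt.mpr h1.le)]
    have hw0 : w ≠ 0 := by
      intro h; rw [h] at h1; simp at h1; linarith
    have key : ∀ θ ∈ Set.uIcc (0:ℝ) (2 * Real.pi),
        HasDerivAt (fun θ : ℝ => Complex.log (1 - Complex.exp ((θ:ℂ) * I) * w⁻¹))
          (circleMap 0 1 θ * I / (circleMap 0 1 θ - w)) θ := by
      intro θ _
      have hf : HasDerivAt (fun θ : ℝ => 1 - Complex.exp ((θ:ℂ) * I) * w⁻¹)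
          (-(Complex.exp ((θ:ℂ) * I) * I * w⁻¹)) θ := by
        have := (hasDerivAt_const θ (1:ℂ)).sub ((hasDerivAt_posexp θ).mul_const w⁻¹)
        exact this.congr_deriv (by ring)
      have habs : ‖Complex.exp ((θ:ℂ) * I) * w⁻¹‖ < 1 := by
        rw [norm_mul, Complex.norm_exp, norm_inv]
        simp only [Complex.mul_re, Complex.I_re, Complex.I_im, Complex.ofReal_re, Complex.ofReal_im]
        norm_num
        rw [inv_lt_one_iff₀]
        right; exact h1
      have hslit := slit_of_lt _ habs
      have hne : (1:ℂ) - Complex.exp ((θ:ℂ) * I) * w⁻¹ ≠ 0 := Complex.slitPlane_ne_zero hslit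
      have hlog := hf.clog_real hslit
      convert hlog using 1
      rw [hcm θ]
      have hden : Complex.exp ((θ:ℂ) * I) - w ≠ 0 := by
        rw [← hcm θ]; exact circle_ne w hw θ
      rw [div_eq_div_iff hden hne]
      field_simp
      ring
    rw [integral_eq_sub_of_hasDerivAt key hint]
    have : Complex.exp ((↑(2 * Real.pi):ℂ) * I) = Complex.exp ((↑(0:ℝ):ℂ) * I) := by
      push_cast
      rw [show 2 * (Real.pi:ℂ) * I = (↑(1:ℤ)) * (2 * Real.pi * I) by push_cast; ring,
        Complex.exp_int_mul_two_pi_mul_I]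
      norm_num
    rw [this]
    ring
private lemma logderiv_prod (S : Multiset ℂ) (z : ℂ) (hz : ∀ w ∈ S, z - w ≠ 0) :
    eval z (derivative (S.map (fun w => X - C w)).prod)
      = eval z (S.map (fun w => X - C w)).prod * (S.map (fun w => (z - w)⁻¹)).sum := by
  induction S using Multiset.induction_on with
  | empty => simp
  | cons a T ih =>
    have ha : z - a ≠ 0 := hz a (Multiset.mem_cons_self a T)
    have hT : ∀ w ∈ T, z - w ≠ 0 := fun w hw => hz w (Multiset.mem_cons_of_mem hw)
    simp only [Multiset.map_cons, Multiset.prod_cons, Multiset.sum_cons, derivative_mul,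
      eval_mul, eval_add, eval_sub, eval_X, eval_C, derivative_sub, derivative_X, derivative_C,
      sub_zero, eval_one, ih hT]
    field_simp

private lemma intervalIntegrable_multiset_sum (S : Multiset ℂ) (F : ℂ → ℝ → ℂ)
    (hF : ∀ w ∈ S, IntervalIntegrable (F w) MeasureTheory.volume 0 (2 * Real.pi)) :
    IntervalIntegrable (fun θ => (S.map (fun w => F w θ)).sum)
      MeasureTheory.volume 0 (2 * Real.pi) := by
  induction S using Multiset.induction_on with
  | empty => simp
  | cons a T ih =>
    have := (hF a (Multiset.mem_cons_self a T)).add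
      (ih (fun w hw => hF w (Multiset.mem_cons_of_mem hw)))
    simpa using this

private lemma integral_multiset_sum (S : Multiset ℂ) (F : ℂ → ℝ → ℂ)
    (hF : ∀ w ∈ S, IntervalIntegrable (F w) MeasureTheory.volume 0 (2 * Real.pi)) :
    (∫ θ in (0:ℝ)..(2 * Real.pi), (S.map (fun w => F w θ)).sum)
      = (S.map (fun w => ∫ θ in (0:ℝ)..(2 * Real.pi), F w θ)).sum := by
  induction S using Multiset.induction_on with
  | empty => simp
  | cons a T ih =>
    have ha := hF a (Multiset.mem_cons_self a T)
    have hT : ∀ w ∈ T, IntervalIntegrable (F w) MeasureTheory.volume 0 (2 * Real.pi) :=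
      fun w hw => hF w (Multiset.mem_cons_of_mem hw)
    have hTsum : IntervalIntegrable (fun θ => (T.map (fun w => F w θ)).sum)
        MeasureTheory.volume 0 (2 * Real.pi) := intervalIntegrable_multiset_sum T F hT
    simp only [Multiset.map_cons, Multiset.sum_cons]
    rw [integral_add ha hTsum, ih hT]

private lemma multiset_sum_ite (S : Multiset ℂ) (P : ℂ → Prop) [DecidablePred P] (c : ℂ) :
    (S.map (fun w => if P w then c else 0)).sum = (Multiset.card (S.filter P)) * c := by
  induction S using Multiset.induction_on with
  | empty => simp
  | cons a T ih =>
    by_cases h : P a <;>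
      simp [Multiset.filter_cons, h, ih, add_mul] <;> ring

private lemma dominant_count (m j : ℕ) (c : ℕ → ℂ) (hjm : j ≤ m) (hcm : c m ≠ 0)
    (hdom : ∑ k ∈ (Finset.range (m+1)).erase j, ‖c k‖ < ‖c j‖) :
    (∀ z : ℂ, ‖z‖ = 1 →
        (∑ k ∈ Finset.range (m+1), C (c k) * X ^ k).eval z ≠ 0) ∧
    Multiset.card
      ((∑ k ∈ Finset.range (m+1), C (c k) * X ^ k).roots.filter
        (fun z => ‖z‖ < 1)) = j := by
  classical
  set q : ℂ[X] := ∑ k ∈ Finset.range (m+1), C (c k) * X ^ k with hq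
  have hcj : c j ≠ 0 := by
    intro h
    rw [h] at hdom
    simp only [norm_zero] at hdom
    exact absurd hdom (not_lt.mpr (Finset.sum_nonneg fun k _ => norm_nonneg _))
  have hjmem : j ∈ Finset.range (m+1) := Finset.mem_range.mpr (Nat.lt_succ_of_le hjm)
  have heval : ∀ z : ℂ, q.eval z = ∑ k ∈ Finset.range (m+1), c k * z ^ k := by
    intro z
    simp [hq, eval_finset_sum]
  -- key bound on circle
  have hkey : ∀ z : ℂ, ‖z‖ = 1 →
      ‖q.eval z - c j * z ^ j‖ < ‖c j‖ := by
    intro z hz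
    have : q.eval z - c j * z ^ j = ∑ k ∈ (Finset.range (m+1)).erase j, c k * z ^ k := by
      rw [heval z, ← Finset.add_sum_erase _ _ hjmem]
      ring
    rw [this]
    calc ‖∑ k ∈ (Finset.range (m+1)).erase j, c k * z ^ k‖
        ≤ ∑ k ∈ (Finset.range (m+1)).erase j, ‖c k * z ^ k‖ := by
          exact norm_sum_le _ _
      _ = ∑ k ∈ (Finset.range (m+1)).erase j, ‖c k‖ := by
          apply Finset.sum_congr rfl
          intro k _
          rw [norm_mul, norm_pow, hz, one_pow, mul_one]
      _ < ‖c j‖ := hdom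
  have hnv : ∀ z : ℂ, ‖z‖ = 1 → q.eval z ≠ 0 := by
    intro z hz h0
    have := hkey z hz
    rw [h0, zero_sub, norm_neg, norm_mul, norm_pow, hz, one_pow, mul_one] at this
    exact lt_irrefl _ this
  refine ⟨hnv, ?_⟩
  -- setup
  have hq0 : q ≠ 0 := by
    intro h
    have : q.coeff m = c m := by
      simp [hq, Polynomial.finset_sum_coeff, Polynomial.coeff_C_mul, Polynomial.coeff_X_pow,
        Finset.sum_ite_eq' (Finset.range (m+1)), Finset.mem_range.mpr (Nat.lt_succ_of_le le_rfl)]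
    rw [h] at this
    simp at this
    exact hcm this.symm
  have hfac := (IsAlgClosed.splits q).eq_prod_roots
  set lc := q.leadingCoeff with hlc
  have hlc0 : lc ≠ 0 := leadingCoeff_ne_zero.mpr hq0
  have hroots_ne : ∀ w ∈ q.roots, ‖w‖ ≠ 1 := by
    intro w hw h1
    exact hnv w h1 ((Polynomial.mem_roots hq0).mp hw)
  -- the sum-over-roots identity
  have hsum_eq : ∀ z : ℂ, ‖z‖ = 1 →
      (q.roots.map (fun w => z * I / (z - w))).sum
        = z * I * (eval z (derivative q)) / q.eval z := by
    intro z hz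
    have hzw : ∀ w ∈ q.roots, z - w ≠ 0 := by
      intro w hw h
      have : z = w := by linear_combination h
      exact hroots_ne w hw (this ▸ hz)
    have hP := logderiv_prod q.roots z hzw
    have hq' : derivative q = C lc * derivative ((q.roots.map (fun w => X - C w)).prod) := by
      conv_lhs => rw [hfac]
      rw [derivative_C_mul]
    have hqe : q.eval z = lc * eval z ((q.roots.map (fun w => X - C w)).prod) := by
      conv_lhs => rw [hfac]
      rw [eval_mul, eval_C]
    have hPz : eval z ((q.roots.map (fun w => X - C w)).prod) ≠ 0 := by
      intro h
      exact hnv z hz (by rw [hqe, h, mul_zero])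
    have h1 : (q.roots.map (fun w => z * I / (z - w))).sum
        = z * I * (q.roots.map (fun w => (z - w)⁻¹)).sum := by
      rw [← Multiset.sum_map_mul_left]
      congr 1
    rw [h1, hq', hqe, eval_mul, eval_C, hP]
    field_simp
  -- integral evaluation (a): via per-root integrals
  have hintg : ∀ w ∈ q.roots, IntervalIntegrable
      (fun θ : ℝ => circleMap 0 1 θ * I / (circleMap 0 1 θ - w)) MeasureTheory.volume 0 (2*Real.pi) :=
    fun w hw => (cont_integrand w (hroots_ne w hw)).intervalIntegrable _ _
  have hJa : (∫ θ in (0:ℝ)..(2*Real.pi),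
        (q.roots.map (fun w => circleMap 0 1 θ * I / (circleMap 0 1 θ - w))).sum)
      = (Multiset.card (q.roots.filter (fun z => ‖z‖ < 1))) * (2 * Real.pi * I) := by
    rw [integral_multiset_sum q.roots _ hintg]
    rw [Multiset.map_congr rfl (fun w hw => integral_circle_inv w (hroots_ne w hw))]
    exact multiset_sum_ite _ _ _
  -- integral evaluation (b): via antiderivative
  have habs_circle : ∀ θ : ℝ, ‖circleMap 0 1 θ‖ = 1 := by
    intro θ; rw [norm_circleMap_zero]; norm_num
  have hJb : (∫ θ in (0:ℝ)..(2*Real.pi),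
        (q.roots.map (fun w => circleMap 0 1 θ * I / (circleMap 0 1 θ - w))).sum)
      = (j : ℂ) * (2 * Real.pi * I) := by
    have hcmz : ∀ θ : ℝ, circleMap 0 1 θ ≠ 0 := fun θ => circleMap_ne_center one_ne_zero
    set ψ : ℝ → ℂ := fun θ => (c j)⁻¹ * (Complex.exp (-(j:ℂ) * θ * I) * q.eval (circleMap 0 1 θ))
      with hψ
    have hψ1 : ∀ θ : ℝ, ‖ψ θ - 1‖ < 1 := by
      intro θ
      have hz := habs_circle θ
      have hpow : (circleMap 0 1 θ) ^ j = Complex.exp ((j:ℂ) * θ * I) := by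
        have : circleMap 0 1 θ = Complex.exp ((θ:ℂ) * I) := by simp [circleMap]
        rw [this, ← Complex.exp_nat_mul]
        ring_nf
      have : ψ θ - 1 = (c j)⁻¹ * Complex.exp (-(j:ℂ) * θ * I) *
          (q.eval (circleMap 0 1 θ) - c j * (circleMap 0 1 θ) ^ j) := by
        rw [hψ, hpow]
        have hee : Complex.exp (-((j:ℂ) * θ * I)) * Complex.exp ((j:ℂ) * θ * I) = 1 := by
          rw [← Complex.exp_add]; ring_nf; exact Complex.exp_zero
        field_simp
        linear_combination (c j) * hee
      rw [this, norm_mul, norm_mul, norm_inv, Complex.norm_exp]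
      have hre : (-(j:ℂ) * θ * I).re = 0 := by simp
      rw [hre, Real.exp_zero]
      have := hkey (circleMap 0 1 θ) hz
      rw [mul_one, ← div_eq_inv_mul, div_lt_one (norm_pos_iff.mpr hcj)]
      exact this
    have hψne : ∀ θ : ℝ, ψ θ ∈ Complex.slitPlane := by
      intro θ
      rw [Complex.mem_slitPlane_iff]
      left
      have h := hψ1 θ
      have : |(ψ θ - 1).re| ≤ ‖ψ θ - 1‖ := Complex.abs_re_le_norm _
      have h2 := abs_le.mp this
      simp only [Complex.sub_re, Complex.one_re] at h2
      linarith [h2.1]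
    have key : ∀ θ ∈ Set.uIcc (0:ℝ) (2*Real.pi),
        HasDerivAt (fun θ : ℝ => (j:ℂ) * θ * I + Complex.log (ψ θ))
          ((q.roots.map (fun w => circleMap 0 1 θ * I / (circleMap 0 1 θ - w))).sum) θ := by
      intro θ _
      have hz := habs_circle θ
      have hφ : HasDerivAt (fun θ : ℝ => q.eval (circleMap 0 1 θ))
          (eval (circleMap 0 1 θ) (derivative q) * (circleMap 0 1 θ * I)) θ :=
        (q.hasDerivAt (circleMap 0 1 θ)).comp θ (hasDerivAt_circleMap 0 1 θ)
      have hexp : HasDerivAt (fun θ : ℝ => Complex.exp (-(j:ℂ) * θ * I))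
          (Complex.exp (-(j:ℂ) * θ * I) * (-(j:ℂ) * I)) θ := by
        have h1 : HasDerivAt (fun θ : ℝ => -(j:ℂ) * θ * I) (-(j:ℂ) * I) θ := by
          have := (Complex.ofRealCLM.hasDerivAt (x := θ)).const_mul (-(j:ℂ))
          simpa using this.mul_const I
        exact h1.cexp
      have hψd : HasDerivAt ψ ((c j)⁻¹ * (Complex.exp (-(j:ℂ) * θ * I) * (-(j:ℂ) * I) *
            q.eval (circleMap 0 1 θ) + Complex.exp (-(j:ℂ) * θ * I) *
            (eval (circleMap 0 1 θ) (derivative q) * (circleMap 0 1 θ * I)))) θ :=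
        (hexp.mul hφ).const_mul _
      have hlog := hψd.clog_real (hψne θ)
      have hlin : HasDerivAt (fun θ : ℝ => (j:ℂ) * θ * I) ((j:ℂ) * I) θ := by
        have := (Complex.ofRealCLM.hasDerivAt (x := θ)).const_mul ((j:ℂ))
        simpa using this.mul_const I
      have hsum := hlin.add hlog
      convert hsum using 1
      · rfl
      · rfl
      rw [hsum_eq (circleMap 0 1 θ) hz]
      have hφ0 : q.eval (circleMap 0 1 θ) ≠ 0 := hnv _ hz
      have hψ0 : ψ θ ≠ 0 := Complex.slitPlane_ne_zero (hψne θ)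
      rw [hψ]
      have he0 : Complex.exp (-(j:ℂ) * θ * I) ≠ 0 := Complex.exp_ne_zero _
      field_simp
      ring
    have hTsum := intervalIntegrable_multiset_sum q.roots
      (fun w θ => circleMap 0 1 θ * I / (circleMap 0 1 θ - w)) hintg
    rw [integral_eq_sub_of_hasDerivAt key hTsum]
    have hψper : ψ (2*Real.pi) = ψ 0 := by
      simp only [hψ]
      have h1 : circleMap 0 1 (2*Real.pi) = circleMap 0 1 0 := by
        simpa using (periodic_circleMap 0 1 0)
      have h2 : Complex.exp (-(j:ℂ) * ((2*Real.pi:ℝ):ℂ) * I)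
          = Complex.exp (-(j:ℂ) * ((0:ℝ):ℂ) * I) := by
        push_cast
        rw [show -(j:ℂ) * (2*Real.pi) * I = (↑(-(j:ℤ))) * (2 * Real.pi * I) by push_cast; ring,
          Complex.exp_int_mul_two_pi_mul_I]
        norm_num
      rw [h1, h2]
    rw [hψper]
    push_cast
    ring
  have := hJa.symm.trans hJb
  have h2πI : (2 * Real.pi * I : ℂ) ≠ 0 := by
    simp [Real.pi_ne_zero, Complex.I_ne_zero]
  have hcard : ((Multiset.card (q.roots.filter (fun z => ‖z‖ < 1)) : ℂ)) = (j:ℂ) :=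
    mul_right_cancel₀ h2πI this
  exact_mod_cast hcard

/-- If a self-inversive polynomial `p(z) = a₀ + a₁ z + ⋯ + aₙ zⁿ` of degree `n`
satisfies `|a_{n-l}| > (1/2)·(n/(n-2l))·∑_{k ≠ l, n-l} |a_k|` with `2l < n`, then its
formal derivative `p'` has no roots on the complex unit circle and has exactly
`n - l - 1` roots, counted with multiplicity, in the open unit disk. -/
theorem selfInversive_derivative_roots
    (n l : ℕ) (a : ℕ → ℂ) (ω : ℂ)
    (hω : ‖ω‖ = 1)
    (han : a n ≠ 0)
    (hsi : ∀ k ≤ n, a (n - k) = ω * (starRingEnd ℂ) (a k))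
    (hl : 2 * l < n)
    (hineq : ‖a (n - l)‖ >
      (1 / 2) * ((n : ℝ) / ((n : ℝ) - 2 * l)) *
        ∑ k ∈ (Finset.range (n + 1)).filter (fun k => k ≠ l ∧ k ≠ n - l),
          ‖a k‖) :
    (∀ z : ℂ, ‖z‖ = 1 →
        (Polynomial.derivative
          (∑ k ∈ Finset.range (n + 1), Polynomial.C (a k) * Polynomial.X ^ k)).eval z ≠ 0)
      ∧
    Multiset.card
      ((Polynomial.derivative
          (∑ k ∈ Finset.range (n + 1), Polynomial.C (a k) * Polynomial.X ^ k)).roots.filter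
        (fun z => ‖z‖ < 1)) = n - l - 1 := by
  classical
  have hn0 : 0 < n := by omega
  set c : ℕ → ℂ := fun k => a (k+1) * ((k+1 : ℕ) : ℂ) with hc
  have hder : Polynomial.derivative (∑ k ∈ Finset.range (n + 1), C (a k) * X ^ k)
      = ∑ k ∈ Finset.range ((n-1)+1), C (c k) * X ^ k := by
    have hnn : (n-1)+1 = n := by omega
    rw [hnn, derivative_sum,
      Finset.sum_range_succ' (fun k => Polynomial.derivative (C (a k) * X ^ k)) n]
    simp only [derivative_C_mul_X_pow, hc]
    simp only [Nat.cast_zero, mul_zero, map_mul, map_natCast, Nat.add_sub_cancel,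
      Nat.cast_ofNat, CharP.cast_eq_zero, map_zero, zero_mul, add_zero, Nat.cast_add,
      Nat.cast_one, map_add, map_one]
  -- symmetry of absolute values
  have hAbs : ∀ k ≤ n, ‖a (n - k)‖ = ‖a k‖ := by
    intro k hk
    rw [hsi k hk, norm_mul, hω, one_mul, Complex.norm_conj]
  -- the dominance inequality
  set T := (Finset.range (n + 1)).filter (fun k => k ≠ l ∧ k ≠ n - l) with hT
  have hTsym : ∑ k ∈ T, (k : ℝ) * ‖a k‖
      = ∑ k ∈ T, ((n - k : ℕ) : ℝ) * ‖a k‖ := by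
    apply Finset.sum_nbij' (i := fun k => n - k) (j := fun k => n - k)
    · intro k hk
      simp only [hT, Finset.mem_filter, Finset.mem_range] at hk ⊢
      omega
    · intro k hk
      simp only [hT, Finset.mem_filter, Finset.mem_range] at hk ⊢
      omega
    · intro k hk
      simp only [hT, Finset.mem_filter, Finset.mem_range] at hk
      omega
    · intro k hk
      simp only [hT, Finset.mem_filter, Finset.mem_range] at hk
      omega
    · intro k hk
      simp only [hT, Finset.mem_filter, Finset.mem_range] at hk
      have hkn : k ≤ n := by omega
      rw [hAbs k hkn]
      have : n - (n - k) = k := by omega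
      rw [this]
  have hThalf : 2 * (∑ k ∈ T, (k : ℝ) * ‖a k‖)
      = (n : ℝ) * ∑ k ∈ T, ‖a k‖ := by
    rw [two_mul]
    nth_rewrite 2 [hTsym]
    rw [← Finset.sum_add_distrib, Finset.mul_sum]
    apply Finset.sum_congr rfl
    intro k hk
    simp only [hT, Finset.mem_filter, Finset.mem_range] at hk
    have hkn : k ≤ n := by omega
    have : ((n - k : ℕ) : ℝ) = (n : ℝ) - k := by
      rw [Nat.cast_sub hkn]
    rw [this]
    ring
  have hd : (0:ℝ) < (n : ℝ) - 2 * l := by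
    have : (2*l : ℕ) < n := hl
    push_cast
    have := Nat.cast_lt (α := ℝ) |>.mpr hl
    push_cast at this
    linarith
  have hST : (0:ℝ) ≤ ∑ k ∈ T, ‖a k‖ :=
    Finset.sum_nonneg fun k _ => norm_nonneg _
  have hkey2 : ((n:ℝ)/2) * ∑ k ∈ T, ‖a k‖
      < ((n:ℝ) - 2*l) * ‖a (n - l)‖ := by
    have h' := hineq
    have hd' : ((n:ℝ) - 2*l) ≠ 0 := ne_of_gt hd
    have hexp : ((n:ℝ) - 2*l) * ((1 / 2) * ((n : ℝ) / ((n : ℝ) - 2 * l)) *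
        ∑ k ∈ T, ‖a k‖) = ((n:ℝ)/2) * ∑ k ∈ T, ‖a k‖ := by
      field_simp
    calc ((n:ℝ)/2) * ∑ k ∈ T, ‖a k‖
        = ((n:ℝ) - 2*l) * ((1 / 2) * ((n : ℝ) / ((n : ℝ) - 2 * l)) *
            ∑ k ∈ T, ‖a k‖) := hexp.symm
      _ < ((n:ℝ) - 2*l) * ‖a (n - l)‖ := by
          apply mul_lt_mul_of_pos_left _ hd
          exact h'
  -- now the coefficient dominance for dominant_count
  have hjm : n - l - 1 ≤ n - 1 := by omega
  have hcm : c (n-1) ≠ 0 := by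
    have : (n-1)+1 = n := by omega
    simp only [hc, this]
    exact mul_ne_zero han (by exact_mod_cast Nat.cast_ne_zero.mpr (by omega))
  have hjl : (n - l - 1) + 1 = n - l := by omega
  have hcnl : ‖c (n - l - 1)‖ = ((n - l : ℕ) : ℝ) * ‖a (n - l)‖ := by
    simp only [hc, hjl, norm_mul, Complex.norm_natCast]
    ring
  have hdom : ∑ k ∈ (Finset.range ((n-1)+1)).erase (n - l - 1), ‖c k‖
      < ‖c (n - l - 1)‖ := by
    have hnn : (n-1)+1 = n := by omega
    rw [hnn, hcnl]
    have hstep1 : ∑ k ∈ (Finset.range n).erase (n - l - 1), ‖c k‖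
        = ∑ k ∈ ((Finset.range (n+1)).erase (n - l)).erase 0,
            (k : ℝ) * ‖a k‖ := by
      apply Finset.sum_nbij' (i := fun k => k + 1) (j := fun k => k - 1)
      · intro k hk
        simp only [Finset.mem_erase, Finset.mem_range] at hk ⊢
        omega
      · intro k hk
        simp only [Finset.mem_erase, Finset.mem_range] at hk ⊢
        omega
      · intro k hk; omega
      · intro k hk
        simp only [Finset.mem_erase, Finset.mem_range] at hk
        omega
      · intro k _
        simp only [hc, norm_mul, Complex.norm_natCast]
        push_cast
        ring
    have hstep2 : ∑ k ∈ ((Finset.range (n+1)).erase (n - l)).erase 0,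
          (k : ℝ) * ‖a k‖
        = ∑ k ∈ (Finset.range (n+1)).erase (n - l), (k : ℝ) * ‖a k‖ := by
      apply Finset.sum_erase
      simp
    have hsetT : (Finset.range (n+1)).erase (n - l) = insert l T := by
      ext k
      simp only [Finset.mem_erase, Finset.mem_range, Finset.mem_insert, hT, Finset.mem_filter]
      omega
    have hlT : l ∉ T := by
      simp only [hT, Finset.mem_filter]
      tauto
    have hstep3 : ∑ k ∈ (Finset.range (n+1)).erase (n - l), (k : ℝ) * ‖a k‖
        = (l : ℝ) * ‖a l‖ + ∑ k ∈ T, (k : ℝ) * ‖a k‖ := by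
      rw [hsetT, Finset.sum_insert hlT]
    have hal : ‖a l‖ = ‖a (n - l)‖ := (hAbs l (by omega)).symm
    rw [hstep1, hstep2, hstep3, hal]
    have hcast : ((n - l : ℕ) : ℝ) = (n : ℝ) - l := by
      rw [Nat.cast_sub (by omega : l ≤ n)]
    rw [hcast]
    have hsum : ∑ k ∈ T, (k : ℝ) * ‖a k‖
        = ((n:ℝ)/2) * ∑ k ∈ T, ‖a k‖ := by
      linarith [hThalf]
    rw [hsum]
    have hlcast : (0:ℝ) ≤ (l:ℝ) := Nat.cast_nonneg l
    have h2l : ((2*l : ℕ) : ℝ) = 2 * (l:ℝ) := by push_cast; ring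
    nlinarith [hkey2, norm_nonneg (a (n-l))]
  have hmain := dominant_count (n-1) (n - l - 1) c hjm hcm hdom
  rw [hder]
  exact ⟨hmain.1, hmain.2⟩
end

section
/- Let p(z) = a_0 + a_1 z + ... + a_n z^n be a self-inversive polynomial of degree n and let l be a natural number with 2l < n. If |a_{n-l}| > (1/2)·Σ_{k=0, k∉{l, n-l}}^{n} |a_k|, then p has at least n-2l distinct roots on the complex unit circle U. -/
open Polynomial Finset Real

noncomputable def SIex (u : ℝ) : ℂ := Complex.exp (u * Complex.I)

lemma SIex_add (u v : ℝ) : SIex (u + v) = SIex u * SIex v := by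
  rw [SIex, SIex, SIex, ← Complex.exp_add]
  push_cast
  ring_nf

lemma SIex_ne_zero (u : ℝ) : SIex u ≠ 0 := Complex.exp_ne_zero _

lemma SIabs_ex (u : ℝ) : ‖SIex u‖ = 1 := Complex.norm_exp_ofReal_mul_I u

lemma SIconj_ex (u : ℝ) : (starRingEnd ℂ) (SIex u) = SIex (-u) := by
  rw [SIex, SIex, ← Complex.exp_conj]
  congr 1
  simp [Complex.ext_iff]

lemma SIex_re (u : ℝ) : (SIex u).re = Real.cos u := Complex.exp_ofReal_mul_I_re u

lemma SIex_pow (u : ℝ) (k : ℕ) : SIex u ^ k = SIex (k * u) := by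
  rw [SIex, SIex, ← Complex.exp_nat_mul]
  push_cast
  ring_nf

lemma SIcontinuous_ex : Continuous SIex := by
  unfold SIex; fun_prop

lemma SIex_inj {u v : ℝ} (h : SIex u = SIex v) : ∃ k : ℤ, u = v + k * (2 * π) := by
  rw [SIex, SIex, Complex.exp_eq_exp_iff_exists_int] at h
  obtain ⟨k, hk⟩ := h
  refine ⟨k, ?_⟩
  have := congrArg Complex.im hk
  simpa using this

/-- If a self-inversive polynomial `p(z) = a₀ + a₁ z + ⋯ + aₙ zⁿ` of degree `n`
satisfies the weaker condition `|a_{n-l}| > (1/2)·∑_{k ≠ l, n-l} |a_k|` with `2l < n`,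
then `p` has at least `n - 2l` distinct roots on the complex unit circle. -/
theorem selfInversive_at_least_roots_on_unit_circle
    (n l : ℕ) (a : ℕ → ℂ) (ω : ℂ)
    (hω : ‖ω‖ = 1)
    (han : a n ≠ 0)
    (hsi : ∀ k ≤ n, a (n - k) = ω * (starRingEnd ℂ) (a k))
    (hl : 2 * l < n)
    (hineq : ‖a (n - l)‖ >
      (1 / 2) *
        ∑ k ∈ (Finset.range (n + 1)).filter (fun k => k ≠ l ∧ k ≠ n - l),
          ‖a k‖) :
    n - 2 * l ≤
      {z : ℂ | (∑ k ∈ Finset.range (n + 1), Polynomial.C (a k) * Polynomial.X ^ k).eval z = 0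
          ∧ ‖z‖ = 1}.ncard := by
  classical
  have hln : l ≤ n := by omega
  have hωne : ω ≠ 0 := by
    intro h; rw [h] at hω; simp at hω
  set m : ℕ := n - 2 * l with hm
  have hm1 : 1 ≤ m := by omega
  set R : ℝ := ‖a (n - l)‖ with hRdef
  set S : ℝ := ∑ k ∈ (Finset.range (n + 1)).filter (fun k => k ≠ l ∧ k ≠ n - l),
          ‖a k‖ with hSdef
  have hS0 : 0 ≤ S := Finset.sum_nonneg fun k _ => norm_nonneg _
  have hSR : S < 2 * R := by linarith
  have hR0 : 0 < R := by linarith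
  -- square root of ω⁻¹
  obtain ⟨ψ, hψ⟩ := (Complex.norm_eq_one_iff ω).1 hω
  set c : ℂ := SIex (-(ψ / 2)) with hcdef
  have hc1 : ‖c‖ = 1 := SIabs_ex _
  have hcne : c ≠ 0 := SIex_ne_zero _
  have hexψ : SIex ψ = ω := hψ
  have hc2 : c * c * ω = 1 := by
    rw [hcdef, ← SIex_add, ← hexψ, ← SIex_add,
      show -(ψ / 2) + -(ψ / 2) + ψ = 0 by ring]
    simp [SIex]
  have hconjc : (starRingEnd ℂ) c = c * ω := by
    rw [hcdef, SIconj_ex, ← hexψ, ← SIex_add]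
    congr 1
    ring
  have hconj_a : ∀ k ≤ n, (starRingEnd ℂ) (a k) = ω⁻¹ * a (n - k) := by
    intro k hk
    rw [hsi k hk]
    field_simp
  set ν : ℝ := (n : ℝ) / 2 with hνdef
  set term : ℕ → ℝ → ℂ := fun k θ => c * a k * SIex (((k : ℝ) - ν) * θ) with htermdef
  set G : ℝ → ℂ := fun θ => ∑ k ∈ Finset.range (n + 1), term k θ with hGdef
  set F : ℝ → ℝ := fun θ => (G θ).re with hFdef
  have hGP : ∀ θ : ℝ, G θ = c * SIex (-(ν * θ)) *
      (∑ k ∈ Finset.range (n + 1), Polynomial.C (a k) * Polynomial.X ^ k).eval (SIex θ) := by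
    intro θ
    rw [eval_finset_sum]
    simp only [eval_mul, eval_C, eval_pow, eval_X]
    rw [Finset.mul_sum, hGdef]
    refine Finset.sum_congr rfl fun k _ => ?_
    have h1 : ((k : ℝ) - ν) * θ = -(ν * θ) + (k : ℝ) * θ := by ring
    rw [htermdef]
    simp only
    rw [h1, SIex_add, SIex_pow]
    ring
  have hGconj : ∀ θ : ℝ, (starRingEnd ℂ) (G θ) = G θ := by
    intro θ
    rw [hGdef]
    simp only
    rw [map_sum]
    have hstep : ∀ k ∈ Finset.range (n + 1),
        (starRingEnd ℂ) (term k θ) = term (n - k) θ := by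
      intro k hk
      have hk' : k ≤ n := by simpa [Nat.lt_succ_iff] using hk
      rw [htermdef]
      simp only
      rw [map_mul, map_mul, hconjc, hconj_a k hk', SIconj_ex]
      have h1 : -(((k : ℝ) - ν) * θ) = ((↑(n - k) : ℝ) - ν) * θ := by
        rw [Nat.cast_sub hk', hνdef]
        ring
      rw [h1]
      have h2 : c * ω * (ω⁻¹ * a (n - k)) = c * a (n - k) := by
        field_simp
      rw [show c * ω * (ω⁻¹ * a (n - k)) * SIex ((↑(n - k) - ν) * θ)
            = (c * ω * (ω⁻¹ * a (n - k))) * SIex ((↑(n - k) - ν) * θ) from rfl, h2]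
    rw [Finset.sum_congr rfl hstep]
    have := Finset.sum_range_reflect (fun k => term k θ) (n + 1)
    simp only [Nat.add_sub_cancel] at this
    convert this using 2 with k hk
  have hGreal : ∀ θ : ℝ, G θ = ((F θ : ℝ) : ℂ) := by
    intro θ
    exact (Complex.conj_eq_iff_re.1 (hGconj θ)).symm
  have hFcont : Continuous F := by
    rw [hFdef]
    apply Complex.continuous_re.comp
    rw [hGdef]
    apply continuous_finset_sum
    intro k _
    rw [htermdef]
    exact continuous_const.mul (SIcontinuous_ex.comp (continuous_const.mul continuous_id))
  -- the dominant pair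
  set μ : ℝ := (m : ℝ) / 2 with hμdef
  have hμ0 : 0 < μ := by
    rw [hμdef]
    have : (0:ℝ) < (m:ℝ) := by exact_mod_cast hm1
    linarith
  set A : ℂ := c * a (n - l) with hAdef
  have hAabs : ‖A‖ = R := by
    rw [hAdef, norm_mul, hc1, one_mul]
  have hAne : A ≠ 0 := by
    intro h; rw [h] at hAabs; simp at hAabs; linarith
  set φ : ℝ := Complex.arg A with hφdef
  have hA : (R : ℂ) * SIex φ = A := by
    rw [← hAabs, hφdef, SIex]
    exact Complex.norm_mul_exp_arg_mul_I A
  have hlne : l ≠ n - l := by omega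
  have hnl_cast : ((n - l : ℕ) : ℝ) - ν = μ := by
    rw [Nat.cast_sub hln, hνdef, hμdef, hm, Nat.cast_sub (by omega : 2 * l ≤ n)]
    push_cast
    ring
  have hl_cast : ((l : ℕ) : ℝ) - ν = -μ := by
    rw [hνdef, hμdef, hm, Nat.cast_sub (by omega : 2 * l ≤ n)]
    push_cast
    ring
  have hpairconj : c * a l = (starRingEnd ℂ) (c * a (n - l)) := by
    rw [map_mul, hconjc, hconj_a (n - l) (by omega)]
    rw [show n - (n - l) = l by omega]
    field_simp
  have hFsplit : ∀ θ : ℝ, F θ = 2 * R * Real.cos (φ + μ * θ) +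
      ∑ k ∈ (Finset.range (n + 1)).filter (fun k => k ≠ l ∧ k ≠ n - l),
        (term k θ).re := by
    intro θ
    have hre : F θ = ∑ k ∈ Finset.range (n + 1), (term k θ).re := by
      rw [hFdef, hGdef]
      simp [Complex.re_sum]
    rw [hre, ← Finset.sum_filter_add_sum_filter_not (Finset.range (n + 1))
      (fun k => k ≠ l ∧ k ≠ n - l) (fun k => (term k θ).re), add_comm]
    congr 1
    have hset : (Finset.range (n + 1)).filter (fun k => ¬(k ≠ l ∧ k ≠ n - l)) = {l, n - l} := by
      ext k
      simp only [Finset.mem_filter, Finset.mem_range, Nat.lt_succ_iff, not_and_or, not_not,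
        Finset.mem_insert, Finset.mem_singleton]
      omega
    rw [hset, Finset.sum_pair hlne]
    have hterm_nl : term (n - l) θ = A * SIex (μ * θ) := by
      rw [htermdef]
      simp only
      rw [hnl_cast, hAdef]
    have hterm_l : term l θ = (starRingEnd ℂ) (A * SIex (μ * θ)) := by
      rw [htermdef]
      simp only
      rw [map_mul, SIconj_ex, hAdef, ← hpairconj, hl_cast,
        show -μ * θ = -(μ * θ) from by ring]
    rw [hterm_l, hterm_nl, Complex.conj_re]
    have : A * SIex (μ * θ) = (R : ℂ) * SIex (φ + μ * θ) := by
      rw [SIex_add, ← hA]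
      ring
    rw [this]
    have : ((R : ℂ) * SIex (φ + μ * θ)).re = R * Real.cos (φ + μ * θ) := by
      rw [← SIex_re]
      simp [Complex.re_ofReal_mul]
    rw [this]
    ring
  have hrem : ∀ θ : ℝ,
      |∑ k ∈ (Finset.range (n + 1)).filter (fun k => k ≠ l ∧ k ≠ n - l),
        (term k θ).re| ≤ S := by
    intro θ
    calc |∑ k ∈ (Finset.range (n + 1)).filter (fun k => k ≠ l ∧ k ≠ n - l), (term k θ).re|
        ≤ ∑ k ∈ (Finset.range (n + 1)).filter (fun k => k ≠ l ∧ k ≠ n - l), |(term k θ).re| :=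
          Finset.abs_sum_le_sum_abs _ _
      _ ≤ ∑ k ∈ (Finset.range (n + 1)).filter (fun k => k ≠ l ∧ k ≠ n - l),
            ‖a k‖ := by
          refine Finset.sum_le_sum fun k _ => ?_
          calc |(term k θ).re| ≤ ‖term k θ‖ := Complex.abs_re_le_norm _
            _ = ‖a k‖ := by
                rw [htermdef]
                simp only
                rw [norm_mul, norm_mul, hc1, SIabs_ex, one_mul, mul_one]
      _ = S := rfl
  -- the sampling points
  set θp : ℕ → ℝ := fun j => ((j : ℝ) * π - φ) / μ with hθdef
  have hθcos : ∀ j : ℕ, Real.cos (φ + μ * θp j) = (-1 : ℝ) ^ j := by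
    intro j
    have harg : φ + μ * θp j = (j : ℝ) * π := by
      rw [hθdef]
      field_simp
      ring
    rw [harg]
    simpa using Real.cos_nat_mul_pi_sub 0 j
  have hsign : ∀ j : ℕ, 2 * R - S ≤ (-1 : ℝ) ^ j * F (θp j) := by
    intro j
    have h1 := hFsplit (θp j)
    have h2 := hrem (θp j)
    rw [hθcos j] at h1
    have habs := abs_le.1 h2
    rcases Nat.even_or_odd j with he | ho
    · rw [he.neg_one_pow] at h1 ⊢
      linarith
    · rw [ho.neg_one_pow] at h1 ⊢
      linarith
  have hθmono : StrictMono θp := by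
    apply strictMono_nat_of_lt_succ
    intro j
    rw [hθdef]
    have hπ := Real.pi_pos
    apply div_lt_div_of_pos_right ?_ hμ0
    push_cast
    nlinarith
  have hroot : ∀ j : ℕ, ∃ x, x ∈ Set.Ioo (θp j) (θp (j + 1)) ∧ F x = 0 := by
    intro j
    have h1 : 0 < (-1 : ℝ) ^ j * F (θp j) := lt_of_lt_of_le (by linarith) (hsign j)
    have h2 : (-1 : ℝ) ^ j * F (θp (j + 1)) < 0 := by
      have h3 := hsign (j + 1)
      have hpow : ((-1 : ℝ)) ^ (j + 1) = -(-1 : ℝ) ^ j := by ring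
      rw [hpow] at h3
      linarith
    have hcont : ContinuousOn (fun θ => (-1 : ℝ) ^ j * F θ)
        (Set.Icc (θp j) (θp (j + 1))) := (continuous_const.mul hFcont).continuousOn
    have hIVT := intermediate_value_Ioo' (le_of_lt (hθmono (Nat.lt_succ_self j))) hcont
    have h0 : (0 : ℝ) ∈ Set.Ioo ((-1 : ℝ) ^ j * F (θp (j + 1))) ((-1 : ℝ) ^ j * F (θp j)) :=
      ⟨h2, h1⟩
    obtain ⟨x, hx, hfx⟩ := hIVT h0
    refine ⟨x, hx, ?_⟩
    have hne : ((-1 : ℝ)) ^ j ≠ 0 := pow_ne_zero _ (by norm_num)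
    field_simp at hfx
    exact (mul_eq_zero.1 hfx).resolve_left hne
  choose x hxmem hxF using hroot
  -- roots of the polynomial
  have hevalzero : ∀ j : ℕ,
      (∑ k ∈ Finset.range (n + 1), Polynomial.C (a k) * Polynomial.X ^ k).eval (SIex (x j))
        = 0 := by
    intro j
    have hG0 : G (x j) = 0 := by
      rw [hGreal (x j), hxF j]
      simp
    rw [hGP (x j)] at hG0
    rcases mul_eq_zero.1 hG0 with h | h
    · rcases mul_eq_zero.1 h with h' | h'
      · exact absurd h' hcne
      · exact absurd h' (SIex_ne_zero _)
    · exact h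
  have hmR : (0 : ℝ) < (m : ℝ) := by exact_mod_cast hm1
  have hgap : θp m - θp 0 = 2 * π := by
    rw [hθdef]
    simp only
    rw [hμdef]
    field_simp
    ring
  have hxlt : ∀ i j : ℕ, i < j → x i < x j := by
    intro i j hij
    have h1 : x i < θp (i + 1) := (hxmem i).2
    have h2 : θp (i + 1) ≤ θp j := hθmono.monotone (by omega)
    have h3 : θp j < x j := (hxmem j).1
    linarith
  have hkey : ∀ i j : ℕ, i < j → j < m → SIex (x i) ≠ SIex (x j) := by
    intro i j hij hjm h
    obtain ⟨k, hk⟩ := SIex_inj h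
    have hlt : x i < x j := hxlt i j hij
    have hlow : θp 0 ≤ x i :=
      le_of_lt (lt_of_le_of_lt (hθmono.monotone (Nat.zero_le i)) (hxmem i).1)
    have hhigh : x j < θp m :=
      lt_of_lt_of_le (hxmem j).2 (hθmono.monotone (by omega : j + 1 ≤ m))
    have hub : x j - x i < 2 * π := by linarith
    have hπ := Real.pi_pos
    have hk1 : (k : ℝ) * (2 * π) = x i - x j := by linarith
    have h2π : (0 : ℝ) < 2 * π := by linarith
    have hkneg : (k : ℝ) < 0 := by
      have hh : (k : ℝ) * (2 * π) < 0 * (2 * π) := by rw [zero_mul]; linarith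
      exact lt_of_mul_lt_mul_right hh (le_of_lt h2π)
    have hkgt : (-1 : ℝ) < (k : ℝ) := by
      have hh : (-1 : ℝ) * (2 * π) < (k : ℝ) * (2 * π) := by linarith
      exact lt_of_mul_lt_mul_right hh (le_of_lt h2π)
    have hk0 : (0 : ℤ) ≤ k ∨ k ≤ -1 := by omega
    rcases hk0 with h' | h'
    · have : (0 : ℝ) ≤ (k : ℝ) := by exact_mod_cast h'
      linarith
    · have : (k : ℝ) ≤ -1 := by exact_mod_cast h'
      linarith
  have hwinj : Function.Injective (fun j : Fin m => SIex (x j)) := by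
    intro i j h
    by_contra hne
    have h' : (i : ℕ) ≠ (j : ℕ) := fun hh => hne (Fin.ext hh)
    rcases h'.lt_or_gt with hij | hij
    · exact hkey i j hij j.isLt h
    · exact hkey j i hij i.isLt h.symm
  have hP0 : (∑ k ∈ Finset.range (n + 1), Polynomial.C (a k) * Polynomial.X ^ k) ≠ 0 := by
    intro h
    have hcoeff : (∑ k ∈ Finset.range (n + 1), Polynomial.C (a k) * Polynomial.X ^ k).coeff n
        = a n := by
      rw [Polynomial.finset_sum_coeff]
      simp only [Polynomial.coeff_C_mul, Polynomial.coeff_X_pow]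
      rw [Finset.sum_eq_single n]
      · simp
      · intro b _ hb
        simp [Ne.symm hb]
      · intro hb
        exact absurd (Finset.self_mem_range_succ n) hb
    rw [h] at hcoeff
    simp at hcoeff
    exact han hcoeff.symm
  have hTfin : {z : ℂ |
      (∑ k ∈ Finset.range (n + 1), Polynomial.C (a k) * Polynomial.X ^ k).eval z = 0
        ∧ ‖z‖ = 1}.Finite :=
    (Polynomial.finite_setOf_isRoot hP0).subset (fun z hz => hz.1)
  have hsub : Set.range (fun j : Fin m => SIex (x j)) ⊆ {z : ℂ |
      (∑ k ∈ Finset.range (n + 1), Polynomial.C (a k) * Polynomial.X ^ k).eval z = 0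
        ∧ ‖z‖ = 1} := by
    rintro z ⟨j, rfl⟩
    exact ⟨hevalzero j, SIabs_ex _⟩
  have hcard : (Set.range (fun j : Fin m => SIex (x j))).ncard = m := by
    rw [← Set.image_univ, Set.ncard_image_of_injective _ hwinj, Set.ncard_univ]
    simp
  calc n - 2 * l = m := rfl
    _ = (Set.range (fun j : Fin m => SIex (x j))).ncard := hcard.symm
    _ ≤ _ := Set.ncard_le_ncard hsub hTfin
end

section
/- (Lakatos–Losonczi) Let p(z) = a_0 + a_1 z + ... + a_n z^n be a self-inversive polynomial of degree n ≥ 1. If |a_n| > (1/2)·Σ_{k=1}^{n-1} |a_k|, then all n roots of p lie on the complex unit circle U and all of them are simple. -/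
open Polynomial Finset

/-- (Lakatos–Losonczi) If a self-inversive polynomial `p(z) = a₀ + a₁ z + ⋯ + aₙ zⁿ`
of degree `n ≥ 1` satisfies `|aₙ| > (1/2)·∑_{k=1}^{n-1} |a_k|`, then all roots of `p`
lie on the complex unit circle and all are simple. -/
theorem lakatos_losonczi
    (n : ℕ) (hn : 1 ≤ n) (a : ℕ → ℂ) (ω : ℂ)
    (hω : ‖ω‖ = 1)
    (han : a n ≠ 0)
    (hsi : ∀ k ≤ n, a (n - k) = ω * (starRingEnd ℂ) (a k))
    (hineq : ‖a n‖ >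
      (1 / 2) * ∑ k ∈ Finset.Icc 1 (n - 1), ‖a k‖) :
    ∀ z : ℂ,
      (∑ k ∈ Finset.range (n + 1), Polynomial.C (a k) * Polynomial.X ^ k).eval z = 0 →
      ‖z‖ = 1 ∧
        Polynomial.rootMultiplicity z
          (∑ k ∈ Finset.range (n + 1), Polynomial.C (a k) * Polynomial.X ^ k) = 1 := by
  classical
  have hπ : 0 < Real.pi := Real.pi_pos
  set p : ℂ[X] := ∑ k ∈ Finset.range (n + 1), Polynomial.C (a k) * Polynomial.X ^ k with hpdef
  -- basic facts about p
  have hcoeffn : p.coeff n = a n := by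
    rw [hpdef, Polynomial.finset_sum_coeff]
    simp only [Polynomial.coeff_C_mul, Polynomial.coeff_X_pow, mul_ite, mul_one, mul_zero]
    rw [Finset.sum_ite_eq]
    simp
  have hdegle : p.natDegree ≤ n := by
    rw [hpdef]
    apply Polynomial.natDegree_sum_le_of_forall_le
    intro k hk
    exact le_trans (Polynomial.natDegree_C_mul_X_pow_le (a k) k)
      (Nat.lt_succ_iff.1 (Finset.mem_range.1 hk))
  have hdeg : p.natDegree = n := Polynomial.natDegree_eq_of_le_of_coeff_ne_zero hdegle (hcoeffn ▸ han)
  have hpne : p ≠ 0 := fun h => han (by rw [← hcoeffn, h, Polynomial.coeff_zero])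
  -- an opaque circle exponential
  obtain ⟨E, hEadd, hEconj, hEpow, hEne, hEabs, hEcont, hEre, hEarg, hEinj⟩ :
      ∃ E : ℝ → ℂ,
        (∀ x y : ℝ, E (x + y) = E x * E y) ∧
        (∀ x : ℝ, (starRingEnd ℂ) (E x) = E (-x)) ∧
        (∀ (x : ℝ) (k : ℕ), E x ^ k = E (k * x)) ∧
        (∀ x : ℝ, E x ≠ 0) ∧
        (∀ x : ℝ, ‖E x‖ = 1) ∧
        Continuous E ∧
        (∀ x : ℝ, (E x).re = Real.cos x) ∧
        (∀ z : ℂ, ((‖z‖ : ℝ) : ℂ) * E z.arg = z) ∧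
        (∀ x y : ℝ, E x = E y → ∃ m : ℤ, x = y + m * (2 * Real.pi)) := by
    refine ⟨fun x => Complex.exp (x * Complex.I), ?_, ?_, ?_, ?_, ?_, ?_, ?_, ?_, ?_⟩
    · intro x y; rw [← Complex.exp_add]; push_cast; ring_nf
    · intro x; rw [← Complex.exp_conj]; push_cast; simp
    · intro x k; rw [← Complex.exp_nat_mul]; push_cast; ring_nf
    · intro x; exact Complex.exp_ne_zero _
    · intro x; exact Complex.norm_exp_ofReal_mul_I x
    · fun_prop
    · intro x; exact Complex.exp_ofReal_mul_I_re x
    · intro z; exact Complex.norm_mul_exp_arg_mul_I z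
    · intro x y h
      rcases Complex.exp_eq_exp_iff_exists_int.1 h with ⟨m, hm⟩
      refine ⟨m, ?_⟩
      have him := congrArg Complex.im hm
      simpa using him
  -- an opaque square root of ω
  obtain ⟨σ, hσ2, hσabs⟩ : ∃ σ : ℂ, σ * σ = ω ∧ ‖σ‖ = 1 := by
    refine ⟨E (ω.arg / 2), ?_, hEabs _⟩
    rw [← hEadd]
    have h2 : ω.arg / 2 + ω.arg / 2 = ω.arg := by ring
    rw [h2]
    have := hEarg ω
    rw [hω] at this
    simpa using this
  have hσconj : (starRingEnd ℂ) σ * σ = 1 := by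
    have h := Complex.normSq_eq_norm_sq σ
    rw [hσabs] at h
    rw [mul_comm, Complex.mul_conj, h]; norm_num
  have hσω : (starRingEnd ℂ) σ * ω = σ := by
    rw [← hσ2, ← mul_assoc, hσconj, one_mul]
  have hσne : σ ≠ 0 := by
    intro h; rw [h] at hσabs; simp at hσabs
  -- conjugates of coefficients
  have hconj : ∀ k ≤ n, (starRingEnd ℂ) (a k) = (starRingEnd ℂ) ω * a (n - k) := by
    intro k hk
    rw [hsi k hk, ← mul_assoc, ← Complex.normSq_eq_conj_mul_self,
        Complex.normSq_eq_norm_sq, hω]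
    norm_num
  -- the function Q
  set Q : ℝ → ℂ := fun θ =>
      (starRingEnd ℂ) σ * E (-(n * θ / 2)) * ∑ k ∈ Finset.range (n + 1), a k * E (k * θ)
    with hQdef
  have hQeval : ∀ θ : ℝ, Q θ = (starRingEnd ℂ) σ * E (-(n * θ / 2)) * p.eval (E θ) := by
    intro θ
    rw [hQdef, hpdef]
    simp only [Polynomial.eval_finset_sum, Polynomial.eval_mul, Polynomial.eval_pow,
      Polynomial.eval_C, Polynomial.eval_X]
    congr 1
    exact Finset.sum_congr rfl fun k _ => by rw [hEpow]
  -- Q is real-valued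
  have hQreal : ∀ θ : ℝ, (starRingEnd ℂ) (Q θ) = Q θ := by
    intro θ
    have hsum : (starRingEnd ℂ) (∑ k ∈ Finset.range (n + 1), a k * E (k * θ))
        = (starRingEnd ℂ) ω * (E (-(n * θ)) * ∑ k ∈ Finset.range (n + 1), a k * E (k * θ)) := by
      rw [map_sum]
      have h1 : ∀ k ∈ Finset.range (n + 1), (starRingEnd ℂ) (a k * E (k * θ))
          = (starRingEnd ℂ) ω * (a (n - k) * E (-(k * θ))) := by
        intro k hk
        rw [map_mul, hEconj, hconj k (Nat.lt_succ_iff.1 (Finset.mem_range.1 hk))]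
        ring
      rw [Finset.sum_congr rfl h1, ← Finset.mul_sum]
      congr 1
      rw [Finset.mul_sum]
      rw [← Finset.sum_range_reflect (fun j => E (-(n * θ)) * (a j * E (j * θ))) (n + 1)]
      apply Finset.sum_congr rfl
      intro k hk
      have hk' : k ≤ n := Nat.lt_succ_iff.1 (Finset.mem_range.1 hk)
      have h2 : n + 1 - 1 - k = n - k := by omega
      simp only [h2]
      have h4 : E (-(k * θ)) = E (-(n * θ)) * E ((n - k : ℕ) * θ) := by
        rw [← hEadd]
        congr 1
        rw [Nat.cast_sub hk']
        ring
      rw [h4]; ring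
    rw [hQdef]
    simp only
    rw [map_mul, map_mul, hsum, hEconj, Complex.conj_conj, neg_neg]
    have hσω' : σ * (starRingEnd ℂ) ω = (starRingEnd ℂ) σ := by
      have h := congrArg (starRingEnd ℂ) hσω
      rw [map_mul, Complex.conj_conj] at h
      exact h
    have hE3 : E (n * θ / 2) * E (-(n * θ)) = E (-(n * θ / 2)) := by
      rw [← hEadd]; congr 1; ring
    linear_combination (E (n * θ / 2) * E (-(n * θ)) *
        (∑ k ∈ Finset.range (n + 1), a k * E (k * θ))) * hσω'
      + ((starRingEnd ℂ) σ * (∑ k ∈ Finset.range (n + 1), a k * E (k * θ))) * hE3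
  -- decomposition
  set A : ℝ := ‖a n‖ with hAdef
  have hA : 0 < A := by rw [hAdef]; exact norm_pos_iff.2 han
  set S : ℝ := ∑ k ∈ Finset.Icc 1 (n - 1), ‖a k‖ with hSdef
  have hSA : S < 2 * A := by rw [hSdef, hAdef]; linarith [hineq]
  set c : ℂ := (starRingEnd ℂ) σ * a n with hcdef
  have hcabs : ‖c‖ = A := by
    rw [hcdef, hAdef, norm_mul, Complex.norm_conj, hσabs, one_mul]
  obtain ⟨ψ, hc⟩ : ∃ ψ : ℝ, c = (A : ℂ) * E ψ := by
    refine ⟨c.arg, ?_⟩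
    rw [← hcabs]
    exact (hEarg c).symm
  set M : ℝ → ℂ := fun θ =>
      (starRingEnd ℂ) σ * E (-(n * θ / 2)) * ∑ k ∈ Finset.Icc 1 (n - 1), a k * E (k * θ)
    with hMdef
  have hMabs : ∀ θ : ℝ, ‖M θ‖ ≤ S := by
    intro θ
    rw [hMdef]
    simp only
    rw [norm_mul, norm_mul, Complex.norm_conj, hσabs, hEabs, one_mul, one_mul]
    calc ‖∑ k ∈ Finset.Icc 1 (n - 1), a k * E (k * θ)‖
        ≤ ∑ k ∈ Finset.Icc 1 (n - 1), ‖a k * E (k * θ)‖ :=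
          norm_sum_le _ _
      _ = S := by
          rw [hSdef]
          apply Finset.sum_congr rfl
          intro k _
          rw [norm_mul, hEabs, mul_one]
  have hsetsplit : Finset.range (n + 1) = insert 0 (insert n (Finset.Icc 1 (n - 1))) := by
    ext k
    simp only [Finset.mem_range, Finset.mem_insert, Finset.mem_Icc]
    omega
  have h0ni : (0 : ℕ) ∉ insert n (Finset.Icc 1 (n - 1)) := by
    simp only [Finset.mem_insert, Finset.mem_Icc]
    omega
  have hnni : n ∉ Finset.Icc 1 (n - 1) := by
    simp only [Finset.mem_Icc]
    omega
  have ha0 : a 0 = ω * (starRingEnd ℂ) (a n) := by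
    have h := hsi n le_rfl
    simpa using h
  have hsplit : ∀ θ : ℝ, Q θ = c * E (n * θ / 2) + (starRingEnd ℂ) (c * E (n * θ / 2)) + M θ := by
    intro θ
    have hconjcE : (starRingEnd ℂ) (c * E (n * θ / 2))
        = σ * (starRingEnd ℂ) (a n) * E (-(n * θ / 2)) := by
      rw [map_mul, hEconj, hcdef, map_mul, Complex.conj_conj]
    rw [hQdef, hMdef]
    simp only
    rw [hsetsplit, Finset.sum_insert h0ni, Finset.sum_insert hnni, hconjcE, hcdef, ha0]
    have h00 : E (((0 : ℕ) : ℝ) * θ) * E (((0 : ℕ) : ℝ) * θ) = E (((0 : ℕ) : ℝ) * θ) := by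
      rw [← hEadd]
      congr 1
      push_cast
      ring
    have hE0 : E (((0 : ℕ) : ℝ) * θ) = 1 :=
      mul_left_cancel₀ (hEne _) (h00.trans (mul_one _).symm)
    rw [hE0]
    have hXZ : E (-(n * θ / 2)) * E ((n : ℝ) * θ) = E (n * θ / 2) := by
      rw [← hEadd]; congr 1; ring
    linear_combination ((starRingEnd ℂ) (a n) * E (-(n * θ / 2))) * hσω
      + ((starRingEnd ℂ) σ * a n) * hXZ
  -- the real function g
  set g : ℝ → ℝ := fun θ => (Q θ).re with hgdef
  have hgre : ∀ θ : ℝ, g θ = 2 * (A * Real.cos (ψ + n * θ / 2)) + (M θ).re := by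
    intro θ
    rw [hgdef]
    simp only
    rw [hsplit θ, Complex.add_re, Complex.add_re, Complex.conj_re]
    have h1 : (c * E (n * θ / 2)).re = A * Real.cos (ψ + n * θ / 2) := by
      rw [hc, mul_assoc, ← hEadd, Complex.re_ofReal_mul, hEre]
    rw [h1]; ring
  have hgcont : Continuous g := by
    apply Complex.continuous_re.comp
    rw [hQdef]
    fun_prop
  -- the test points
  set th : ℕ → ℝ := fun j => (2 * Real.pi * j - 2 * ψ) / n with hthdef
  have hnR : (0 : ℝ) < n := by exact_mod_cast hn
  have hth : ∀ j : ℕ, ψ + n * th j / 2 = j * Real.pi := by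
    intro j; rw [hthdef]; field_simp; ring
  have hthmono : StrictMono th := by
    intro i j hij
    simp only [hthdef]
    have hij' : (i : ℝ) < j := by exact_mod_cast hij
    exact div_lt_div_of_pos_right (by nlinarith) hnR
  have hgval : ∀ j : ℕ, g (th j) = 2 * A * (-1 : ℝ) ^ j + (M (th j)).re := by
    intro j
    rw [hgre, hth]
    have hcos : Real.cos (j * Real.pi) = (-1 : ℝ) ^ j := by
      simpa using Real.cos_add_nat_mul_pi 0 j
    rw [hcos]; ring
  have hMre : ∀ θ : ℝ, |(M θ).re| ≤ S := fun θ =>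
    le_trans (Complex.abs_re_le_norm _) (hMabs θ)
  have hgpos : ∀ j : ℕ, Even j → 0 < g (th j) := by
    intro j hj
    rw [hgval, hj.neg_one_pow]
    have h := abs_le.1 (hMre (th j))
    linarith [h.1]
  have hgneg : ∀ j : ℕ, Odd j → g (th j) < 0 := by
    intro j hj
    rw [hgval, hj.neg_one_pow]
    have h := abs_le.1 (hMre (th j))
    linarith [h.2]
  -- roots via IVT
  have hex : ∀ j : ℕ, ∃ x ∈ Set.Ioo (th j) (th (j + 1)), g x = 0 := by
    intro j
    have hlt : th j < th (j + 1) := hthmono (Nat.lt_succ_self j)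
    rcases Nat.even_or_odd j with hj | hj
    · have h1 : 0 < g (th j) := hgpos j hj
      have h2 : g (th (j + 1)) < 0 := hgneg (j + 1) (Even.add_one hj)
      rcases intermediate_value_Ioo' hlt.le hgcont.continuousOn
        (Set.mem_Ioo.2 ⟨h2, h1⟩) with ⟨x, hx, hgx⟩
      exact ⟨x, hx, hgx⟩
    · have h1 : g (th j) < 0 := hgneg j hj
      have h2 : 0 < g (th (j + 1)) := hgpos (j + 1) (Odd.add_one hj)
      rcases intermediate_value_Ioo hlt.le hgcont.continuousOn
        (Set.mem_Ioo.2 ⟨h1, h2⟩) with ⟨x, hx, hgx⟩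
      exact ⟨x, hx, hgx⟩
  choose r hr hgr using hex
  -- each E (r j) is a root of p
  have hroot : ∀ j : ℕ, p.eval (E (r j)) = 0 := by
    intro j
    have hq0 : Q (r j) = 0 := by
      have him : (Q (r j)).im = 0 := Complex.conj_eq_iff_im.1 (hQreal (r j))
      have hre : (Q (r j)).re = 0 := hgr j
      exact Complex.ext hre him
    rw [hQeval] at hq0
    rcases mul_eq_zero.1 hq0 with h | h
    · rcases mul_eq_zero.1 h with h | h
      · exact absurd h (by simpa using hσne)
      · exact absurd h (hEne _)
    · exact h
  -- distinctness
  have hperiod : th n = th 0 + 2 * Real.pi := by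
    simp only [hthdef]
    push_cast
    field_simp
    ring
  have hinj : ∀ i j : ℕ, j < n → i < j → E (r i) ≠ E (r j) := by
    intro i j hjn hij hEeq
    have hri := hr i
    have hrj := hr j
    have h1 : r i < r j :=
      lt_of_lt_of_le hri.2 (le_trans (hthmono.monotone (by omega : i + 1 ≤ j)) hrj.1.le)
    have h2 : r j - r i < 2 * Real.pi := by
      have ha : r j < th (j + 1) := hrj.2
      have hb : th (j + 1) ≤ th n := hthmono.monotone (by omega)
      have hc' : th 0 ≤ th i := hthmono.monotone (Nat.zero_le i)
      have hd : th i < r i := hri.1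
      linarith [hperiod]
    rcases hEinj _ _ hEeq with ⟨m, hmval⟩
    have hm1 : (m : ℝ) < 0 := by nlinarith
    have hm2 : (-1 : ℝ) < m := by nlinarith
    have hm1' : m < 0 := by exact_mod_cast hm1
    have hm2' : (-1 : ℤ) < m := by exact_mod_cast hm2
    omega
  -- the finset of roots
  set zs : Finset ℂ := (Finset.range n).image (fun j => E (r j)) with hzsdef
  have hzscard : zs.card = n := by
    rw [hzsdef, Finset.card_image_of_injOn, Finset.card_range]
    intro i hi j hj hij
    by_contra h
    rcases Nat.lt_or_ge i j with hlt | hge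
    · exact hinj i j (by simpa using hj) hlt hij
    · have hji : j < i := lt_of_le_of_ne hge (Ne.symm h)
      exact hinj j i (by simpa using hi) hji hij.symm
  have hzsroots : zs.val ≤ p.roots := by
    rw [Multiset.le_iff_count]
    intro z
    by_cases hz : z ∈ zs
    · have h1 : zs.val.count z = 1 := Multiset.count_eq_one_of_mem zs.nodup hz
      rw [h1, Polynomial.count_roots]
      have hzr : p.IsRoot z := by
        rcases Finset.mem_image.1 hz with ⟨j, _, rfl⟩
        exact hroot j
      exact Nat.one_le_iff_ne_zero.2 ((Polynomial.rootMultiplicity_pos hpne).2 hzr).ne'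
    · rw [Multiset.count_eq_zero_of_notMem (by simpa using hz)]
      exact Nat.zero_le _
  have hcardroots : Multiset.card p.roots = n := by
    rw [← hdeg]
    exact Polynomial.splits_iff_card_roots.1 (IsAlgClosed.splits p)
  have hzseq : zs.val = p.roots := by
    apply Multiset.eq_of_le_of_card_le hzsroots
    rw [hcardroots]
    have hcv : Multiset.card zs.val = n := hzscard
    rw [hcv]
  -- conclusion
  intro z hz
  have hzroot : z ∈ p.roots := (Polynomial.mem_roots hpne).2 hz
  rw [← hzseq] at hzroot
  constructor
  · rcases Finset.mem_image.1 (Finset.mem_def.2 hzroot) with ⟨j, _, rfl⟩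
    exact hEabs _
  · rw [← Polynomial.count_roots, ← hzseq]
    exact Multiset.count_eq_one_of_mem zs.nodup hzroot
end

section
/- The polynomial h(z) = (1+i)z^4 − 2i·z^3 − 2z + (1+i) is a self-inversive polynomial of degree 4 (with ω = i), its coefficient a_3 = −2i satisfies the inequality |a_3| > (1/2)·(|a_0| + |a_2| + |a_4|), and nevertheless all four roots of h lie on the complex unit circle U (i.e., every root z of h satisfies |z| = 1). -/
open Polynomial Complex

/-- The polynomial `h(z) = (1+i)z⁴ − 2i z³ − 2z + (1+i)` is self-inversive of degree 4
with `ω = i`, its coefficient `a₃ = −2i` satisfies `|a₃| > (1/2)(|a₀| + |a₂| + |a₄|)`,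
and yet all four roots of `h` lie on the complex unit circle. -/
theorem example_weak_condition_all_roots_on_circle :
    letI h : Polynomial ℂ :=
      Polynomial.C (1 + Complex.I) * Polynomial.X ^ 4
        - Polynomial.C (2 * Complex.I) * Polynomial.X ^ 3
        - Polynomial.C 2 * Polynomial.X
        + Polynomial.C (1 + Complex.I)
    h.natDegree = 4
      ∧ ‖Complex.I‖ = 1
      ∧ (∀ k ≤ 4, h.coeff (4 - k) = Complex.I * (starRingEnd ℂ) (h.coeff k))
      ∧ h.coeff 3 = -(2 * Complex.I)
      ∧ ‖h.coeff 3‖ >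
          (1 / 2) * (‖h.coeff 0‖ + ‖h.coeff 2‖
            + ‖h.coeff 4‖)
      ∧ (∀ z : ℂ, h.eval z = 0 → ‖z‖ = 1) := by
  set h : Polynomial ℂ :=
      Polynomial.C (1 + Complex.I) * Polynomial.X ^ 4
        - Polynomial.C (2 * Complex.I) * Polynomial.X ^ 3
        - Polynomial.C 2 * Polynomial.X
        + Polynomial.C (1 + Complex.I) with hhdef
  have hI : Complex.I ≠ 0 := Complex.I_ne_zero
  have h1I : (1 : ℂ) + Complex.I ≠ 0 := by
    intro hc
    have := congrArg Complex.im hc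
    simp at this
  have hdeg : h.natDegree = 4 := by
    rw [hhdef]
    compute_degree!
  have habsI : ‖Complex.I‖ = 1 := Complex.norm_I
  have hco : ∀ k, h.coeff k =
      (Polynomial.C (1 + Complex.I) * Polynomial.X ^ 4).coeff k
        - (Polynomial.C (2 * Complex.I) * Polynomial.X ^ 3).coeff k
        - (Polynomial.C (2:ℂ) * Polynomial.X).coeff k
        + (Polynomial.C (1 + Complex.I)).coeff k := by
    intro k; rw [hhdef]; simp [coeff_sub, coeff_add]
  have hc0 : h.coeff 0 = 1 + Complex.I := by
    rw [hco]; simp only [coeff_C_mul, coeff_X_pow, coeff_X, coeff_C]; norm_num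
  have hc1 : h.coeff 1 = -2 := by
    rw [hco]; simp only [coeff_C_mul, coeff_X_pow, coeff_X, coeff_C]; norm_num
  have hc2 : h.coeff 2 = 0 := by
    rw [hco]; simp only [coeff_C_mul, coeff_X_pow, coeff_X, coeff_C]; norm_num
  have hc3 : h.coeff 3 = -(2 * Complex.I) := by
    rw [hco]; simp only [coeff_C_mul, coeff_X_pow, coeff_X, coeff_C]; norm_num
  have hc4 : h.coeff 4 = 1 + Complex.I := by
    rw [hco]; simp only [coeff_C_mul, coeff_X_pow, coeff_X, coeff_C]; norm_num
  have habs1I : ‖1 + Complex.I‖ = Real.sqrt 2 := by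
    rw [Complex.norm_def]
    congr 1
    simp [Complex.normSq_apply]
    norm_num
  refine ⟨hdeg, habsI, ?_, hc3, ?_, ?_⟩
  · intro k hk
    interval_cases k <;>
      simp only [hc0, hc1, hc2, hc3, hc4] <;>
      simp [Complex.ext_iff] <;> norm_num
  · rw [hc0, hc2, hc3, hc4, habs1I]
    have habs3 : ‖-(2 * Complex.I)‖ = 2 := by simp
    rw [habs3]; simp only [norm_zero]
    have hs := Real.sq_sqrt (show (0:ℝ) ≤ 2 by norm_num)
    nlinarith [Real.sqrt_nonneg 2]
  · intro z hz
    have heval : h.eval z = (1 + Complex.I) * z ^ 4 - (2 * Complex.I) * z ^ 3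
        - 2 * z + (1 + Complex.I) := by
      rw [hhdef]; simp
    have hE : (1 + Complex.I) * z ^ 4 - (2 * Complex.I) * z ^ 3 - 2 * z
        + (1 + Complex.I) = 0 := by
      rw [← heval]; exact hz
    have hfac : (1 + Complex.I) * (z ^ 2 - Complex.I) * (z - 1) * (z - Complex.I) = 0 := by
      linear_combination hE + (-(z ^ 3) + (Complex.I + 2) * z - (1 + Complex.I)) * Complex.I_sq
    rcases mul_eq_zero.1 hfac with hfac | hzi
    · rcases mul_eq_zero.1 hfac with hfac | hz1
      · rcases mul_eq_zero.1 hfac with hc | hsq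
        · exact absurd hc h1I
        · have hsq' : z ^ 2 = Complex.I := by linear_combination hsq
          have habs2 : ‖z‖ ^ 2 = 1 := by
            rw [← norm_pow, hsq', habsI]
          nlinarith [norm_nonneg z]
      · have : z = 1 := by linear_combination hz1
        simp [this]
    · have : z = Complex.I := by linear_combination hzi
      simp [this, habsI]
end

section
/- Let n ≥ 1, let a be an integer with 1 ≤ a ≤ n, let ω_a = e^{2πia/n} with ω_a ≠ −1, and let Δ be a real number. Define P_a(z) = (ω_a+1)z^n − 2ω_aΔ·z^{n−1} − 2Δ·z + (ω_a+1). If |Δ| < |ω_a + 1|/2, then all n roots of P_a lie on the complex unit circle U and all of them are simple. -/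
open Polynomial Complex

noncomputable def FB (n : ℕ) (φ Δ θ : ℝ) : ℝ :=
  Real.cos (φ/2) * Real.cos (n*θ/2) - Δ * Real.cos ((φ + ((n:ℝ)-2)*θ)/2)

lemma cosC (x : ℝ) : 2 * Complex.exp (↑x*I) * ((Real.cos x : ℝ) : ℂ)
    = Complex.exp (↑x*I)^2 + 1 := by
  rw [Complex.ofReal_cos]
  calc 2 * Complex.exp (↑x*I) * Complex.cos ↑x
      = (2 * Complex.cos ↑x) * Complex.exp (↑x*I) := by ring
    _ = (Complex.exp (↑x*I) + Complex.exp (-↑x*I)) * Complex.exp (↑x*I) := by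
        rw [Complex.two_cos]
    _ = Complex.exp (↑x*I)^2 + Complex.exp (-↑x*I + ↑x*I) := by
        rw [Complex.exp_add]; ring
    _ = Complex.exp (↑x*I)^2 + 1 := by
        rw [show -(x:ℂ)*I + ↑x*I = 0 by ring, Complex.exp_zero]

lemma eval_key (n : ℕ) (hn : 1 ≤ n) (φ Δ θ : ℝ) :
    (Complex.exp (↑φ*I) + 1) * (Complex.exp (↑θ*I)^n + 1)
      - 2*Complex.exp (↑φ*I)*(Δ:ℂ) * Complex.exp (↑θ*I)^(n-1)
      - 2*(Δ:ℂ)*Complex.exp (↑θ*I)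
    = 4 * Complex.exp (↑((φ + n*θ)/2) * I) * ((FB n φ Δ θ : ℝ) : ℂ) := by
  set A := Complex.exp (↑(φ/2)*I) with hA
  set B := Complex.exp (↑(θ/2)*I) with hB
  set N := B^n with hN
  set E1 := Complex.exp (↑θ*I)^(n-1) with hE1
  set c1 := ((Real.cos (φ/2) : ℝ) : ℂ) with hcc1
  set c2 := ((Real.cos ((n:ℝ)*θ/2) : ℝ) : ℂ) with hcc2
  set c3 := ((Real.cos ((φ + ((n:ℝ)-2)*θ)/2) : ℝ) : ℂ) with hcc3
  have hB0 : B ≠ 0 := Complex.exp_ne_zero _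
  have h1 : Complex.exp (↑φ*I) = A^2 := by
    rw [hA, sq, ← Complex.exp_add]; congr 1; push_cast; ring
  have h2 : Complex.exp (↑θ*I) = B^2 := by
    rw [hB, sq, ← Complex.exp_add]; congr 1; push_cast; ring
  have h3 : Complex.exp (↑θ*I)^n = N^2 := by
    rw [h2, hN, ← pow_mul, ← pow_mul, mul_comm]
  have h4 : E1 * B^2 = N^2 := by
    rw [hE1, ← h2, ← h3, ← pow_succ]; congr 1; omega
  have h6 : Complex.exp (↑((n:ℝ)*θ/2)*I) = N := by
    rw [hN, hB, ← Complex.exp_nat_mul]; congr 1; push_cast; ring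
  have h7 : Complex.exp (↑((φ + n*θ)/2)*I) = A * N := by
    rw [← h6, hA, ← Complex.exp_add]; congr 1; push_cast; ring
  have h8 : Complex.exp (↑((φ + ((n:ℝ)-2)*θ)/2)*I) * B^2 = A * N := by
    rw [← h2, hA, ← h6, ← Complex.exp_add, ← Complex.exp_add]
    congr 1; push_cast; ring
  have hc1 : 2 * A * c1 = A^2 + 1 := by rw [hcc1, hA]; exact cosC (φ/2)
  have hc2 : 2 * N * c2 = N^2 + 1 := by rw [hcc2, ← h6]; exact cosC _
  have hc3 : 2*A*N*B^2 * c3 = A^2*N^2 + B^4 := by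
    set E3 := Complex.exp (↑((φ + ((n:ℝ)-2)*θ)/2)*I) with hE3
    have h := cosC ((φ + ((n:ℝ)-2)*θ)/2)
    rw [← hE3, ← hcc3] at h
    calc 2*A*N*B^2*c3 = B^2 * (2 * E3 * c3) * B^2 := by
          linear_combination (-2*B^2*c3)*h8
      _ = B^2*(E3^2+1)*B^2 := by rw [h]
      _ = (E3*B^2)^2 + B^4 := by ring
      _ = A^2*N^2 + B^4 := by rw [h8]; ring
  have hsplit : ((FB n φ Δ θ : ℝ) : ℂ) = c1 * c2 - (Δ:ℂ) * c3 := by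
    rw [FB, hcc1, hcc2, hcc3]; push_cast; ring
  rw [hsplit, h1, h3, h7, h2]
  clear_value A B N E1 c1 c2 c3
  apply mul_left_cancel₀ (pow_ne_zero 2 hB0)
  linear_combination (-(B^2)*(2*N*c2))*hc1 - B^2*(A^2+1)*hc2
    + 2*(Δ:ℂ)*hc3 - 2*A^2*(Δ:ℂ)*h4


open Polynomial Complex

lemma ivt_zero {f : ℝ → ℝ} (hf : Continuous f) {a b : ℝ} (hab : a < b)
    (h : f a * f b < 0) : ∃ x ∈ Set.Ioo a b, f x = 0 := by
  rcases mul_neg_iff.1 h with ⟨h1, h2⟩ | ⟨h1, h2⟩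
  · obtain ⟨x, hx, hfx⟩ := intermediate_value_Ioo' hab.le hf.continuousOn
      (Set.mem_Ioo.2 ⟨h2, h1⟩)
    exact ⟨x, hx, hfx⟩
  · obtain ⟨x, hx, hfx⟩ := intermediate_value_Ioo hab.le hf.continuousOn
      (Set.mem_Ioo.2 ⟨h1, h2⟩)
    exact ⟨x, hx, hfx⟩

lemma sign_aux {t x : ℝ} (h : |x - t| < |t|) : 0 < x * t := by
  have h2 := (abs_lt.1 h).1
  have h3 := (abs_lt.1 h).2
  rcases abs_cases t with ⟨he, _⟩ | ⟨he, _⟩ <;> nlinarith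

lemma exp_I_inj {u v : ℝ} (h : |u - v| < 2 * Real.pi)
    (he : Complex.exp (↑u*I) = Complex.exp (↑v*I)) : u = v := by
  have h1 : Complex.exp (↑(u - v)*I) = 1 := by
    rw [show ((u - v : ℝ) : ℂ) * I = ↑u*I - ↑v*I by push_cast; ring,
      Complex.exp_sub, he, div_self (Complex.exp_ne_zero _)]
  obtain ⟨m, hm⟩ := Complex.exp_eq_one_iff.1 h1
  have h2 : ((u - v : ℝ) : ℂ) * I = (((m : ℝ) * (2 * Real.pi) : ℝ) : ℂ) * I := by
    rw [hm]; push_cast; ring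
  have h3 : u - v = (m : ℝ) * (2 * Real.pi) := by
    exact_mod_cast mul_right_cancel₀ Complex.I_ne_zero h2
  have hπ := Real.pi_pos
  rcases eq_or_ne m 0 with hm0 | hm0
  · rw [hm0] at h3; push_cast at h3; linarith
  · exfalso
    have h5 : (1 : ℝ) ≤ |(m : ℝ)| := by exact_mod_cast Int.one_le_abs hm0
    rw [h3, abs_mul, abs_of_pos (by linarith : (0:ℝ) < 2*Real.pi)] at h
    nlinarith

lemma cosC' (x : ℝ) : 2 * Complex.exp (↑x*I) * ((Real.cos x : ℝ) : ℂ)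
    = Complex.exp (↑x*I)^2 + 1 := by
  rw [Complex.ofReal_cos]
  calc 2 * Complex.exp (↑x*I) * Complex.cos ↑x
      = (2 * Complex.cos ↑x) * Complex.exp (↑x*I) := by ring
    _ = (Complex.exp (↑x*I) + Complex.exp (-↑x*I)) * Complex.exp (↑x*I) := by
        rw [Complex.two_cos]
    _ = Complex.exp (↑x*I)^2 + Complex.exp (-↑x*I + ↑x*I) := by
        rw [Complex.exp_add]; ring
    _ = Complex.exp (↑x*I)^2 + 1 := by
        rw [show -(x:ℂ)*I + ↑x*I = 0 by ring, Complex.exp_zero]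

lemma abs_exp_add_one (φ : ℝ) :
    ‖Complex.exp (↑φ*I) + 1‖ = 2 * |Real.cos (φ/2)| := by
  have h1 : Complex.exp (↑φ*I) = Complex.exp (↑(φ/2)*I)^2 := by
    rw [sq, ← Complex.exp_add]; congr 1; push_cast; ring
  have h2 : Complex.exp (↑φ*I) + 1
      = 2 * Complex.exp (↑(φ/2)*I) * ((Real.cos (φ/2) : ℝ) : ℂ) := by
    rw [h1, cosC']
  rw [h2, norm_mul, norm_mul, Complex.norm_two, Complex.norm_exp_ofReal_mul_I,
    Complex.norm_real, Real.norm_eq_abs, mul_one]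
theorem bethe_main (n : ℕ) (hn : 1 ≤ n) (φ Δ : ℝ)
    (hΔ : |Δ| < ‖Complex.exp ((φ:ℂ)*I) + 1‖ / 2) :
    ∀ z : ℂ,
      (C (Complex.exp ((φ:ℂ)*I) + 1) * X ^ n
        - C (2 * Complex.exp ((φ:ℂ)*I) * (Δ : ℂ)) * X ^ (n - 1)
        - C (2 * (Δ : ℂ)) * X
        + C (Complex.exp ((φ:ℂ)*I) + 1)).eval z = 0 →
      ‖z‖ = 1 ∧
        Polynomial.rootMultiplicity z
          (C (Complex.exp ((φ:ℂ)*I) + 1) * X ^ n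
            - C (2 * Complex.exp ((φ:ℂ)*I) * (Δ : ℂ)) * X ^ (n - 1)
            - C (2 * (Δ : ℂ)) * X
            + C (Complex.exp ((φ:ℂ)*I) + 1)) = 1 := by
  classical
  have hπ := Real.pi_pos
  have hn0 : (0:ℝ) < n := by exact_mod_cast hn
  set ω : ℂ := Complex.exp ((φ:ℂ)*I) with hω
  set P : ℂ[X] := C (ω + 1) * X ^ n - C (2 * ω * (Δ : ℂ)) * X ^ (n - 1)
      - C (2 * (Δ : ℂ)) * X + C (ω + 1) with hP
  -- basic bounds
  have hc0 : |Δ| < |Real.cos (φ/2)| := by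
    rw [abs_exp_add_one] at hΔ; linarith
  have hc0pos : 0 < |Real.cos (φ/2)| := lt_of_le_of_lt (abs_nonneg Δ) hc0
  -- the real function
  set F : ℝ → ℝ := FB n φ Δ with hF
  have hFcont : Continuous F := by
    rw [hF]; unfold FB; fun_prop
  -- sign at gridpoints
  have hsign : ∀ k : ℕ, 0 < F (2*Real.pi*k/n) * ((-1)^k * Real.cos (φ/2)) := by
    intro k
    have hcos : Real.cos ((n:ℝ)*(2*Real.pi*k/n)/2) = (-1)^k := by
      rw [show (n:ℝ)*(2*Real.pi*k/n)/2 = (k:ℝ)*Real.pi - 0 by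
        field_simp; ring]
      rw [Real.cos_nat_mul_pi_sub]
      simp
    apply sign_aux
    have hFk : F (2*Real.pi*k/n) = (-1)^k * Real.cos (φ/2)
        - Δ * Real.cos ((φ + ((n:ℝ)-2)*(2*Real.pi*k/n))/2) := by
      rw [hF]; unfold FB; rw [hcos]; ring
    rw [hFk]
    have h1 : |(-1:ℝ)^k * Real.cos (φ/2)| = |Real.cos (φ/2)| := by
      rw [abs_mul, _root_.abs_pow, abs_neg, abs_one, one_pow, one_mul]
    rw [h1, sub_sub_cancel_left, abs_neg, abs_mul]
    calc |Δ| * |Real.cos ((φ + ((n:ℝ)-2)*(2*Real.pi*k/n))/2)|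
        ≤ |Δ| * 1 := by
          exact mul_le_mul_of_nonneg_left (Real.abs_cos_le_one _) (abs_nonneg _)
      _ < |Real.cos (φ/2)| := by rw [mul_one]; exact hc0
  -- roots of F in each interval
  have hroots : ∀ k : ℕ, ∃ x, F x = 0 ∧ 2*Real.pi*k/n < x ∧ x < 2*Real.pi*(k+1:ℕ)/n := by
    intro k
    have hlt : 2*Real.pi*k/n < 2*Real.pi*(k+1:ℕ)/n := by
      rw [div_lt_div_iff₀ hn0 hn0]
      have h2 : (k:ℝ) < ((k+1:ℕ):ℝ) := by push_cast; linarith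
      have h3 := mul_lt_mul_of_pos_left h2 (by positivity : (0:ℝ) < 2*Real.pi)
      have h4 := mul_lt_mul_of_pos_right h3 hn0
      linarith [h4]
    have hprod : F (2*Real.pi*k/n) * F (2*Real.pi*(k+1:ℕ)/n) < 0 := by
      have s1 := hsign k
      have s2 := hsign (k+1)
      rcases Nat.even_or_odd k with hk | hk
      · rw [hk.neg_one_pow] at s1
        rw [(Even.add_one hk).neg_one_pow] at s2
        nlinarith [mul_pos s1 s2, sq_nonneg (Real.cos (φ/2))]
      · rw [hk.neg_one_pow] at s1
        rw [(Odd.add_one hk).neg_one_pow] at s2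
        nlinarith [mul_pos s1 s2, sq_nonneg (Real.cos (φ/2))]
    obtain ⟨x, hx, hfx⟩ := ivt_zero hFcont hlt hprod
    exact ⟨x, hfx, hx.1, hx.2⟩
  choose x hx1 hx2 hx3 using hroots
  -- location facts
  have hxpos : ∀ k : ℕ, 0 < x k := fun k =>
    lt_of_le_of_lt (by positivity) (hx2 k)
  have hxlt : ∀ k : ℕ, k < n → x k < 2*Real.pi := by
    intro k hk
    refine lt_of_lt_of_le (hx3 k) ?_
    rw [div_le_iff₀ hn0]
    have h2 : ((k+1:ℕ):ℝ) ≤ (n:ℝ) := by exact_mod_cast hk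
    have h3 := mul_le_mul_of_nonneg_left h2 (by positivity : (0:ℝ) ≤ 2*Real.pi)
    linarith [h3]
  have hxmono : ∀ j k : ℕ, j < k → x j < x k := by
    intro j k hjk
    refine lt_trans (hx3 j) (lt_of_le_of_lt ?_ (hx2 k))
    rw [div_le_div_iff₀ hn0 hn0]
    have h2 : ((j+1:ℕ):ℝ) ≤ (k:ℝ) := by exact_mod_cast hjk
    have h3 := mul_le_mul_of_nonneg_left h2 (by positivity : (0:ℝ) ≤ 2*Real.pi)
    have h4 := mul_le_mul_of_nonneg_right h3 hn0.le
    linarith [h4]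
  -- P evaluated at exp(I x k) is zero
  have hev : ∀ k : ℕ, P.eval (Complex.exp (↑(x k)*I)) = 0 := by
    intro k
    have h := eval_key n hn φ Δ (x k)
    have h0 : ((FB n φ Δ (x k) : ℝ) : ℂ) = 0 := by
      rw [show FB n φ Δ (x k) = F (x k) from rfl, hx1 k, Complex.ofReal_zero]
    rw [h0, mul_zero] at h
    rw [hP]
    simp only [eval_add, eval_sub, eval_mul, eval_C, eval_pow, eval_X]
    rw [hω]
    linear_combination h
  -- degree and coefficient facts
  have habs1 : ‖2*(Δ:ℂ)‖ = 2*|Δ| := by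
    rw [norm_mul, Complex.norm_two, Complex.norm_real, Real.norm_eq_abs]
  have hlead : ‖2*(Δ:ℂ)‖ < ‖ω+1‖ := by
    rw [habs1]; rw [hω]; linarith
  have hcoeffP : ∀ m : ℕ, P.coeff m
      = (ω+1) * (if m = n then 1 else 0) - 2*ω*(Δ:ℂ) * (if m = n-1 then 1 else 0)
        - 2*(Δ:ℂ) * (if 1 = m then 1 else 0) + (if m = 0 then (ω+1) else 0) := by
    intro m
    rw [hP]
    simp only [coeff_add, coeff_sub, coeff_C_mul, coeff_X_pow, coeff_C, coeff_X]
  have hcoeff : P.coeff n ≠ 0 := by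
    rw [hcoeffP n]
    have hne : ¬ (n = n - 1) := by omega
    have hn0' : ¬ (n = 0) := by omega
    rcases eq_or_ne n 1 with h1 | h1
    · rw [if_pos rfl, if_neg hne, if_pos (by omega), if_neg hn0']
      intro hzero
      have hz2 : ω + 1 = 2*(Δ:ℂ) := by linear_combination hzero
      rw [hz2] at hlead
      exact lt_irrefl _ hlead
    · rw [if_pos rfl, if_neg hne, if_neg (by omega), if_neg hn0']
      intro hzero
      have hz2 : ω + 1 = 0 := by linear_combination hzero
      rw [hz2] at hlead
      simp only [norm_zero] at hlead
      have : (0:ℝ) ≤ ‖2*(Δ:ℂ)‖ := norm_nonneg _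
      linarith
  have hdegle : P.natDegree ≤ n := by
    rw [hP]
    refine le_trans (natDegree_add_le _ _) (max_le (le_trans (natDegree_sub_le _ _)
      (max_le (le_trans (natDegree_sub_le _ _) (max_le ?_ ?_)) ?_)) ?_)
    · exact le_trans (natDegree_C_mul_le _ _) (by simp)
    · exact le_trans (natDegree_C_mul_le _ _) (by simp only [natDegree_X_pow]; omega)
    · exact le_trans (natDegree_C_mul_le _ _) (by simp only [natDegree_X]; omega)
    · simp
  have hdeg : P.natDegree = n := le_antisymm hdegle (le_natDegree_of_ne_zero hcoeff)
  have hP0 : P ≠ 0 := fun h => hcoeff (by rw [h]; simp)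
  -- the multiset of constructed roots
  set M : Multiset ℂ := (Multiset.range n).map (fun k => Complex.exp (↑(x k)*I)) with hM
  have hMnodup : M.Nodup := by
    rw [hM]
    refine Multiset.Nodup.map_on ?_ (Multiset.nodup_range n)
    intro j hj k hk he
    rw [Multiset.mem_range] at hj hk
    by_contra hne
    have hxx : x j ≠ x k := by
      rcases lt_or_gt_of_ne hne with h | h
      · exact (hxmono j k h).ne
      · exact (hxmono k j h).ne'
    apply hxx
    apply exp_I_inj ?_ he
    rw [abs_sub_lt_iff]
    constructor
    · linarith [hxpos k, hxlt j hj]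
    · linarith [hxpos j, hxlt k hk]
  have hMcard : Multiset.card M = n := by rw [hM]; simp
  have hMsub : M ≤ P.roots := by
    rw [Multiset.le_iff_count]
    intro z
    by_cases hz : z ∈ M
    · rw [Multiset.count_eq_one_of_mem hMnodup hz]
      obtain ⟨k, hk, rfl⟩ := Multiset.mem_map.1 hz
      refine Multiset.one_le_count_iff_mem.2 ?_
      rw [mem_roots hP0]
      exact hev k
    · rw [Multiset.count_eq_zero_of_notMem hz]
      exact Nat.zero_le _
  have hMeq : M = P.roots :=
    Multiset.eq_of_le_of_card_le hMsub (by rw [hMcard, ← hdeg]; exact P.card_roots')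
  -- conclusion
  intro z hz
  have hzr : z ∈ P.roots := by rw [mem_roots hP0]; exact hz
  have hzM : z ∈ M := by rw [hMeq]; exact hzr
  constructor
  · obtain ⟨k, hk, rfl⟩ := Multiset.mem_map.1 hzM
    exact Complex.norm_exp_ofReal_mul_I _
  · rw [← P.count_roots, ← hMeq, Multiset.count_eq_one_of_mem hMnodup hzM]

/-- For `ωₐ = e^{2πia/n}` with `ωₐ ≠ −1` and `Δ` real, if `|Δ| < |ωₐ + 1|/2` then all
`n` roots of `Pₐ(z) = (ωₐ+1)zⁿ − 2ωₐΔ z^{n−1} − 2Δ z + (ωₐ+1)` lie on the complex unit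
circle and all of them are simple. -/
theorem bethe_polynomial_all_roots_on_circle
    (n : ℕ) (hn : 1 ≤ n) (a : ℕ) (ha : 1 ≤ a) (han : a ≤ n)
    (Δ : ℝ)
    (hωa : Complex.exp (2 * Real.pi * Complex.I * a / n) ≠ -1)
    (hΔ : |Δ| < ‖Complex.exp (2 * Real.pi * Complex.I * a / n) + 1‖ / 2) :
    ∀ z : ℂ,
      (Polynomial.C (Complex.exp (2 * Real.pi * Complex.I * a / n) + 1) * Polynomial.X ^ n
        - Polynomial.C (2 * Complex.exp (2 * Real.pi * Complex.I * a / n) * (Δ : ℂ)) *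
            Polynomial.X ^ (n - 1)
        - Polynomial.C (2 * (Δ : ℂ)) * Polynomial.X
        + Polynomial.C (Complex.exp (2 * Real.pi * Complex.I * a / n) + 1)).eval z = 0 →
      ‖z‖ = 1 ∧
        Polynomial.rootMultiplicity z
          (Polynomial.C (Complex.exp (2 * Real.pi * Complex.I * a / n) + 1) * Polynomial.X ^ n
            - Polynomial.C (2 * Complex.exp (2 * Real.pi * Complex.I * a / n) * (Δ : ℂ)) *
                Polynomial.X ^ (n - 1)
            - Polynomial.C (2 * (Δ : ℂ)) * Polynomial.X
            + Polynomial.C (Complex.exp (2 * Real.pi * Complex.I * a / n) + 1)) = 1 := by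
  intro z hz
  have hexp : Complex.exp (2 * Real.pi * Complex.I * a / n)
      = Complex.exp (((2 * Real.pi * a / n : ℝ) : ℂ) * I) := by
    congr 1; push_cast; ring
  rw [hexp] at hz ⊢
  exact bethe_main n hn (2 * Real.pi * a / n) Δ (by rwa [hexp] at hΔ) z hz
end
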